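/- arXiv:1011.0355 — 7 statements merged into one kernel-verified Lean document; each statement's English description precedes it below -/
import Mathlib

section
/- For the homogeneous Firework Process, let a_n = ∏_{i=0}^{n} P(R < i+1) for n ∈ ℕ. Then ∑_{n=1}^{∞} a_n = ∞ if and only if P(V) = 0. -/
open MeasureTheory ProbabilityTheory Filter Set
open scoped ENNReal

section FireworkAux

variable {Ω : Type*} [MeasurableSpace Ω]

/-- extinction-at-`n` event -/
def fwB (R : ℕ → Ω → ℝ) (n : ℕ) : Set Ω :=
  ⋂ i ∈ Finset.range n, {ω | R i ω < ((n - i : ℕ) : ℝ)}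

/-- shift map into sequence space -/
def fwT (R : ℕ → Ω → ℝ) (m : ℕ) (ω : Ω) : ℕ → ℝ := fun i => R (m + i) ω

/-- survival set in sequence space -/
def fwS : Set (ℕ → ℝ) :=
  ⋂ (n : ℕ) (_ : 1 ≤ n), ⋃ i ∈ Finset.range n, {x | ((n - i : ℕ) : ℝ) ≤ x i}

lemma fwB_measurable {R : ℕ → Ω → ℝ} (hmeas : ∀ i, Measurable (R i)) (n : ℕ) :
    MeasurableSet (fwB R n) :=
  MeasurableSet.biInter (Set.to_countable _)
    (fun i _ => (hmeas i) measurableSet_Iio)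

lemma fwS_measurable : MeasurableSet fwS := by
  refine MeasurableSet.iInter fun n => MeasurableSet.iInter fun _ => ?_
  exact MeasurableSet.biUnion (Set.to_countable _)
    (fun i _ => (measurable_pi_apply i) measurableSet_Ici)

lemma fwT_measurable {R : ℕ → Ω → ℝ} (hmeas : ∀ i, Measurable (R i)) (m : ℕ) :
    Measurable (fwT R m) :=
  measurable_pi_lambda _ fun i => hmeas (m + i)

omit [MeasurableSpace Ω] in
lemma fwB_zero (R : ℕ → Ω → ℝ) : fwB R 0 = univ := by
  simp [fwB]

omit [MeasurableSpace Ω] in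
lemma mem_fwB_iff {R : ℕ → Ω → ℝ} {ω : Ω} {n : ℕ} :
    ω ∈ fwB R n ↔ ∀ i < n, R i ω < ((n - i : ℕ) : ℝ) := by
  simp [fwB]

lemma mem_fwS_iff {x : ℕ → ℝ} :
    x ∈ fwS ↔ ∀ k, 1 ≤ k → ∃ i < k, ((k - i : ℕ) : ℝ) ≤ x i := by
  simp [fwS]

omit [MeasurableSpace Ω] in
/-- core step: if extinction at `m` and the shifted sequence fails at level `k`,
then extinction at `m+k`. -/
lemma fwB_step {R : ℕ → Ω → ℝ} {ω : Ω} {m k : ℕ}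
    (h1 : ω ∈ fwB R m) (h2 : ∀ i < k, R (m + i) ω < ((k - i : ℕ) : ℝ)) :
    ω ∈ fwB R (m + k) := by
  rw [mem_fwB_iff] at h1 ⊢
  intro j hj
  by_cases hjm : j < m
  · refine lt_of_lt_of_le (h1 j hjm) (Nat.cast_le.mpr (by omega))
  · have hi : j - m < k := by omega
    have := h2 (j - m) hi
    have heq : m + (j - m) = j := by omega
    rw [heq] at this
    have hkk : k - (j - m) = m + k - j := by omega
    rwa [hkk] at this

variable {P : Measure Ω} [IsProbabilityMeasure P] {R : ℕ → Ω → ℝ} {R₀ : Ω → ℝ}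

/-- product formula on boxes of shifted variables -/
lemma fw_box (hindep : iIndepFun R P)
    (hid : ∀ i, IdentDistrib (R i) R₀ P P)
    (m n : ℕ) (t : ℕ → Set ℝ) (ht : ∀ i, MeasurableSet (t i)) :
    P (⋂ i ∈ Finset.range n, (R (m + i)) ⁻¹' (t i))
      = ∏ i ∈ Finset.range n, P (R₀ ⁻¹' (t i)) := by
  classical
  set e : ℕ ↪ ℕ := ⟨fun i => m + i, fun a b h => by simpa using h⟩ with he
  have key := hindep.meas_biInter (S := (Finset.range n).map e)
    (s := fun j => (R j) ⁻¹' (t (j - m)))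
    (fun i _ => ⟨t (i - m), ht _, rfl⟩)
  have hset : (⋂ j ∈ (Finset.range n).map e, (R j) ⁻¹' (t (j - m)))
      = ⋂ i ∈ Finset.range n, (R (m + i)) ⁻¹' (t i) := by
    ext ω
    simp only [Set.mem_iInter, Finset.mem_map, Finset.mem_range, he,
      Function.Embedding.coeFn_mk]
    constructor
    · intro h i hi
      have := h (m + i) ⟨i, hi, rfl⟩
      simpa using this
    · rintro h j ⟨i, hi, rfl⟩
      show R (m + i) ω ∈ t (m + i - m)
      simpa using h i hi
  rw [hset, Finset.prod_map] at key
  rw [key]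
  refine Finset.prod_congr rfl fun i _ => ?_
  show P (R (m + i) ⁻¹' t (m + i - m)) = P (R₀ ⁻¹' (t i))
  have h' : m + i - m = i := by omega
  rw [h']
  exact (hid (m + i)).measure_mem_eq (ht i)

/-- generation of the product σ-algebra on `ℕ → ℝ` by full boxes -/
lemma pi_nat_generateFrom :
    (inferInstance : MeasurableSpace (ℕ → ℝ)) = MeasurableSpace.generateFrom
      (Set.pi univ '' Set.pi univ fun _ : ℕ => {s : Set ℝ | MeasurableSet s}) := by
  apply le_antisymm
  · show MeasurableSpace.pi ≤ _
    refine iSup_le fun i => ?_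
    rw [MeasurableSpace.le_def]
    rintro S ⟨s, hs, rfl⟩
    apply MeasurableSpace.measurableSet_generateFrom
    refine ⟨Function.update (fun _ => (univ : Set ℝ)) i s, ?_, ?_⟩
    · intro j _
      by_cases h : j = i
      · subst h; simp [hs]
      · simp [Function.update_of_ne h]
    · exact (Set.eval_preimage (i := i)).symm
  · refine MeasurableSpace.generateFrom_le ?_
    rintro _ ⟨t, ht, rfl⟩
    exact MeasurableSet.univ_pi fun i => ht i (Set.mem_univ i)

/-- the law of the shifted sequence does not depend on the shift -/
lemma fw_law_eq (hmeas : ∀ i, Measurable (R i))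
    (hindep : iIndepFun R P)
    (hid : ∀ i, IdentDistrib (R i) R₀ P P) (m : ℕ) :
    P.map (fwT R m) = P.map (fwT R 0) := by
  haveI h1 : IsProbabilityMeasure (P.map (fwT R m)) :=
    Measure.isProbabilityMeasure_map (fwT_measurable hmeas m).aemeasurable
  haveI h2 : IsProbabilityMeasure (P.map (fwT R 0)) :=
    Measure.isProbabilityMeasure_map (fwT_measurable hmeas 0).aemeasurable
  refine ext_of_generate_finite _ pi_nat_generateFrom isPiSystem_pi ?_ (by simp)
  rintro _ ⟨t, ht, rfl⟩
  have ht' : ∀ i, MeasurableSet (t i) := fun i => ht i (Set.mem_univ i)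
  have hbox : ∀ k, (fwT R k) ⁻¹' (Set.pi univ t) = ⋂ i, (R (k + i)) ⁻¹' (t i) := by
    intro k; ext ω; simp [fwT, Set.mem_pi]
  have hlim : ∀ k, Tendsto (fun n => ∏ i ∈ Finset.range n, P (R₀ ⁻¹' (t i))) atTop
      (nhds ((P.map (fwT R k)) (Set.pi univ t))) := by
    intro k
    rw [Measure.map_apply (fwT_measurable hmeas k)
      (MeasurableSet.univ_pi fun i => ht' i), hbox k]
    have h3 : (⋂ i, (R (k + i)) ⁻¹' (t i))
        = ⋂ n, ⋂ i ∈ Finset.range n, (R (k + i)) ⁻¹' (t i) := by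
      ext ω
      simp only [Set.mem_iInter, Finset.mem_range]
      exact ⟨fun h n i _ => h i, fun h i => h (i + 1) i (Nat.lt_succ_self i)⟩
    rw [h3]
    have := tendsto_measure_iInter_atTop (μ := P)
      (s := fun n => ⋂ i ∈ Finset.range n, (R (k + i)) ⁻¹' (t i))
      (fun n => (MeasurableSet.biInter (Set.to_countable _)
        fun i _ => (hmeas (k + i)) (ht' i)).nullMeasurableSet)
      (fun a b hab => Set.biInter_subset_biInter_left
        (fun x hx => Finset.mem_range.mpr (lt_of_lt_of_le (Finset.mem_range.mp hx) hab)))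
      ⟨0, by simp [measure_ne_top]⟩
    have heq : ∀ n, P (⋂ i ∈ Finset.range n, (R (k + i)) ⁻¹' (t i))
        = ∏ i ∈ Finset.range n, P (R₀ ⁻¹' (t i)) :=
      fun n => fw_box hindep hid k n t ht'
    exact Tendsto.congr (fun n => heq n) this
  exact tendsto_nhds_unique (hlim m) (hlim 0)

/-- probability of the extinction-at-`m` event -/
lemma fwB_prob (hindep : iIndepFun R P)
    (hid : ∀ i, IdentDistrib (R i) R₀ P P) (m : ℕ) :
    P (fwB R m) = ∏ j ∈ Finset.range m, P {ω | R₀ ω < (j : ℝ) + 1} := by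
  have key := hindep.meas_biInter (S := Finset.range m)
    (s := fun i => {ω | R i ω < ((m - i : ℕ) : ℝ)})
    (fun i _ => ⟨Iio ((m - i : ℕ) : ℝ), measurableSet_Iio, rfl⟩)
  rw [show fwB R m = ⋂ i ∈ Finset.range m, {ω | R i ω < ((m - i : ℕ) : ℝ)} from rfl, key]
  have hident : ∀ i, P {ω | R i ω < ((m - i : ℕ) : ℝ)}
      = P {ω | R₀ ω < ((m - i : ℕ) : ℝ)} := fun i =>
    (hid i).measure_mem_eq (measurableSet_Iio (a := ((m - i : ℕ) : ℝ)))
  calc ∏ i ∈ Finset.range m, P {ω | R i ω < ((m - i : ℕ) : ℝ)}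
      = ∏ i ∈ Finset.range m, P {ω | R₀ ω < ((m - i : ℕ) : ℝ)} :=
        Finset.prod_congr rfl fun i _ => hident i
    _ = ∏ j ∈ Finset.range m, P {ω | R₀ ω < ((m - (m - 1 - j) : ℕ) : ℝ)} :=
        (Finset.prod_range_reflect (fun i => P {ω | R₀ ω < ((m - i : ℕ) : ℝ)}) m).symm
    _ = ∏ j ∈ Finset.range m, P {ω | R₀ ω < (j : ℝ) + 1} := by
        refine Finset.prod_congr rfl fun j hj => ?_
        have hj' := Finset.mem_range.mp hj
        have h1 : m - (m - 1 - j) = j + 1 := by omega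
        rw [h1]
        norm_num

/-- independence of the extinction event and the shifted survival event -/
lemma fw_indep (hmeas : ∀ i, Measurable (R i))
    (hindep : iIndepFun R P) (m : ℕ) :
    P (fwB R m ∩ (fwT R m) ⁻¹' fwS) = P (fwB R m) * P ((fwT R m) ⁻¹' fwS) := by
  have h_le : ∀ i, MeasurableSpace.comap (R i) inferInstance ≤ ‹MeasurableSpace Ω› :=
    fun i => (hmeas i).comap_le
  have hInd := indep_biSup_compl h_le hindep.iIndep {i | i < m}
  refine (Indep_iff _ _ _).1 hInd _ _ ?_ ?_
  · refine MeasurableSet.biInter (Set.to_countable _) fun i hi => ?_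
    have hmem : MeasurableSet[MeasurableSpace.comap (R i) inferInstance]
        {ω | R i ω < ((m - i : ℕ) : ℝ)} := ⟨Iio _, measurableSet_Iio, rfl⟩
    have hle : MeasurableSpace.comap (R i) inferInstance
        ≤ ⨆ n ∈ {i | i < m}, MeasurableSpace.comap (R n) inferInstance :=
      le_iSup₂ (f := fun n (_ : n ∈ {i | i < m}) =>
        MeasurableSpace.comap (R n) inferInstance) i (Finset.mem_range.mp hi)
    exact hle _ hmem
  · have hle : MeasurableSpace.comap (fwT R m) inferInstance
        ≤ ⨆ n ∈ {i | i < m}ᶜ, MeasurableSpace.comap (R n) inferInstance := by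
      rw [show (inferInstance : MeasurableSpace (ℕ → ℝ)) = MeasurableSpace.pi from rfl,
        MeasurableSpace.pi, MeasurableSpace.comap_iSup]
      refine iSup_le fun i => ?_
      rw [MeasurableSpace.comap_comp]
      have : (fun x : ℕ → ℝ => x i) ∘ fwT R m = R (m + i) := rfl
      rw [this]
      exact le_iSup₂ (f := fun n (_ : n ∈ {i | i < m}ᶜ) =>
        MeasurableSpace.comap (R n) inferInstance) (m + i) (by simp)
    exact hle _ ⟨fwS, fwS_measurable, rfl⟩

end FireworkAux

/-- **Homogeneous Firework Process.** With `a n = ∏_{i=0}^{n} P(R < i+1)`,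
the sum `∑_{n=1}^∞ a n` diverges if and only if the survival probability is zero. -/
theorem firework_homogeneous_criterion
    {Ω : Type*} [MeasurableSpace Ω] (P : Measure Ω) [IsProbabilityMeasure P]
    (R : ℕ → Ω → ℝ) (R₀ : Ω → ℝ)
    (hmeas : ∀ i, Measurable (R i)) (hmeas₀ : Measurable R₀)
    (hnonneg : ∀ i ω, 0 ≤ R i ω)
    (hindep : iIndepFun R P)
    (hid : ∀ i, IdentDistrib (R i) R₀ P P)
    (h0 : 0 < P {ω | R₀ ω < 1}) (h1 : P {ω | R₀ ω < 1} < 1)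
    (V : Set Ω)
    (hV : V = ⋂ (n : ℕ) (_ : 1 ≤ n), ⋃ i ∈ Finset.range n,
      {ω | ((n - i : ℕ) : ℝ) ≤ R i ω})
    (a : ℕ → ℝ≥0∞)
    (ha : ∀ n, a n = ∏ i ∈ Finset.range (n + 1), P {ω | R₀ ω < ((i : ℝ) + 1)}) :
    (∑' n : ℕ, a (n + 1)) = ⊤ ↔ P V = 0 := by
  classical
  have hBmeas : ∀ n, MeasurableSet (fwB R n) := fwB_measurable hmeas
  have hTmeas : ∀ m, Measurable (fwT R m) := fwT_measurable hmeas
  set G : ℕ → Set Ω := fun m => fwB R m ∩ (fwT R m) ⁻¹' fwS with hG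
  have hGmeas : ∀ m, MeasurableSet (G m) :=
    fun m => (hBmeas m).inter ((hTmeas m) fwS_measurable)
  have hVT : V = (fwT R 0) ⁻¹' fwS := by
    rw [hV]; ext ω; simp [fwS, fwT]
  have hshift : ∀ m, P ((fwT R m) ⁻¹' fwS) = P V := by
    intro m
    rw [← Measure.map_apply (hTmeas m) fwS_measurable,
      fw_law_eq hmeas hindep hid m,
      Measure.map_apply (hTmeas 0) fwS_measurable, ← hVT]
  have hGprob : ∀ m, P (G m) = P (fwB R m) * P V := by
    intro m
    rw [hG]
    exact (fw_indep hmeas hindep m).trans (by rw [hshift m])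
  have haB : ∀ n, P (fwB R (n + 1)) = a n := by
    intro n
    rw [ha n, fwB_prob hindep hid (n + 1)]
  -- pairwise disjointness of the G m
  have hdisj : Pairwise (Function.onFun Disjoint G) := by
    have key : ∀ m n, m < n → ∀ ω, ω ∈ G m → ω ∈ G n → False := by
      intro m n hmn ω hm hn
      have hS := hm.2
      rw [Set.mem_preimage, mem_fwS_iff] at hS
      obtain ⟨i, hik, hle⟩ := hS (n - m) (by omega)
      have hBn := hn.1
      rw [mem_fwB_iff] at hBn
      have h2 := hBn (m + i) (by omega)
      have hnm : n - m - i = n - (m + i) := by omega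
      rw [show fwT R m ω i = R (m + i) ω from rfl, hnm] at hle
      exact absurd (lt_of_le_of_lt hle h2) (lt_irrefl _)
    intro m n hmn
    rcases lt_or_gt_of_ne hmn with h' | h'
    · exact Set.disjoint_left.mpr fun ω hm hn => key m n h' ω hm hn
    · exact Set.disjoint_left.mpr fun ω hm hn => key n m h' ω hn hm
  have hGsum : ∑' m, P (G m) ≤ 1 := by
    rw [← measure_iUnion hdisj hGmeas]
    exact prob_le_one
  constructor
  · -- divergence → extinction
    intro hsum
    by_contra hPV
    have h1 : (⊤ : ℝ≥0∞) ≤ ∑' m, P (G m) := by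
      calc (⊤ : ℝ≥0∞) = (∑' n, a (n + 1)) * P V := by
            rw [hsum, ENNReal.top_mul hPV]
        _ = ∑' n, a (n + 1) * P V := ENNReal.tsum_mul_right.symm
        _ = ∑' n, P (G (n + 2)) := by
            refine tsum_congr fun n => ?_
            rw [hGprob (n + 2), haB (n + 1)]
        _ ≤ ∑' m, P (G m) :=
            ENNReal.tsum_comp_le_tsum_of_injective
              (f := fun n : ℕ => n + 2) (fun x y h => by simpa using h) (fun m => P (G m))
    exact absurd (le_trans h1 hGsum) (by simp)
  · -- extinction → divergence
    intro hPV
    by_contra hsum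
    -- coverage
    have hcover : ∀ ω, ω ∉ (⋃ m, G m) → ω ∈ limsup (fwB R) atTop := by
      intro ω hω
      rw [mem_limsup_iff_frequently_mem, frequently_atTop]
      have step : ∀ n, ω ∈ fwB R n → ∃ n' > n, ω ∈ fwB R n' := by
        intro n hn
        have hnG : ω ∉ G n := fun h => hω (Set.mem_iUnion.mpr ⟨n, h⟩)
        have hnS : ω ∉ (fwT R n) ⁻¹' fwS := fun h => hnG ⟨hn, h⟩
        rw [Set.mem_preimage, mem_fwS_iff] at hnS
        push_neg at hnS
        obtain ⟨k, hk1, hk⟩ := hnS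
        exact ⟨n + k, by omega, fwB_step hn fun i hik => hk i hik⟩
      have haux : ∀ N, ∃ n ≥ N, ω ∈ fwB R n := by
        intro N
        induction N with
        | zero => exact ⟨0, le_rfl, by rw [fwB_zero]; trivial⟩
        | succ N ih =>
          obtain ⟨n, hn, hB⟩ := ih
          obtain ⟨n', hn', hB'⟩ := step n hB
          exact ⟨n', by omega, hB'⟩
      exact haux
    have hBC : P (limsup (fwB R) atTop) = 0 := by
      apply measure_limsup_atTop_eq_zero
      have hsplit : ∑' n, P (fwB R n) = P (fwB R 0) + ∑' n, P (fwB R (n + 1)) :=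
        tsum_eq_zero_add' ENNReal.summable
      have hsplit2 : ∑' n, P (fwB R (n + 1)) = P (fwB R 1) + ∑' n, P (fwB R (n + 2)) :=
        tsum_eq_zero_add' ENNReal.summable
      have h2 : ∑' n, P (fwB R (n + 2)) = ∑' n, a (n + 1) :=
        tsum_congr fun n => haB (n + 1)
      rw [hsplit, hsplit2, h2]
      exact ENNReal.add_ne_top.mpr ⟨measure_ne_top _ _,
        ENNReal.add_ne_top.mpr ⟨measure_ne_top _ _, hsum⟩⟩
    have hGzero : P (⋃ m, G m) = 0 := by
      refine le_antisymm ?_ zero_le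
      calc P (⋃ m, G m) ≤ ∑' m, P (G m) := measure_iUnion_le G
        _ = ∑' m, P (fwB R m) * P V := tsum_congr fun m => hGprob m
        _ = 0 := by simp [hPV]
    have huniv : (univ : Set Ω) ⊆ (⋃ m, G m) ∪ limsup (fwB R) atTop := by
      intro ω _
      by_cases h : ω ∈ ⋃ m, G m
      · exact Or.inl h
      · exact Or.inr (hcover ω h)
    have : (1 : ℝ≥0∞) ≤ 0 := by
      calc (1 : ℝ≥0∞) = P univ := measure_univ.symm
        _ ≤ P ((⋃ m, G m) ∪ limsup (fwB R) atTop) := measure_mono huniv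
        _ ≤ P (⋃ m, G m) + P (limsup (fwB R) atTop) := measure_union_le _ _
        _ = 0 := by rw [hGzero, hBC, add_zero]
    simp at this
end

section
/- For the homogeneous Firework Process, P(V) ≥ ∏_{j=0}^{∞} [ 1 − ∏_{i=0}^{j} P(R < i+1) ]. -/
open MeasureTheory ProbabilityTheory Filter
open scoped ENNReal

namespace FireworkAux

lemma tprod_le_prod_range {x : ℕ → ℝ≥0∞} (hx : ∀ i, x i ≤ 1) (N : ℕ) :
    ∏' i, x i ≤ ∏ i ∈ Finset.range N, x i := by
  have hanti : Antitone (fun s : Finset ℕ => ∏ i ∈ s, x i) := by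
    intro s t hst
    calc ∏ i ∈ t, x i = (∏ i ∈ t \ s, x i) * ∏ i ∈ s, x i := (Finset.prod_sdiff hst).symm
    _ ≤ 1 * ∏ i ∈ s, x i := by
        gcongr
        exact Finset.prod_le_one (fun i _ => zero_le) (fun i _ => hx i)
    _ = ∏ i ∈ s, x i := one_mul _
  have hp : HasProd x (⨅ s : Finset ℕ, ∏ i ∈ s, x i) := tendsto_atTop_iInf hanti
  rw [hp.tprod_eq]
  exact iInf_le _ _

lemma arith {a b c h h' r : ℝ≥0∞} (hb : b ≤ 1) (hh : h ≤ 1) (hr : r ≤ 1)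
    (f1 : a + c = b) (f2 : h + h' = 1) (f5 : b * h ≤ a) :
    b * (h + h' * r) ≤ a + c * r := by
  have hbh : b * h ≠ ∞ := by
    have : b * h ≤ 1 := le_trans (mul_le_of_le_one_right' hh) hb
    exact ne_top_of_le_ne_top ENNReal.one_ne_top this
  set δ := a - b * h with hδ
  have ha : b * h + δ = a := add_tsub_cancel_of_le f5
  have hkey : b * h' = δ + c := by
    have h1 : b * h + b * h' = b := by rw [← mul_add, f2, mul_one]
    have h2 : b * h + (δ + c) = b := by rw [← add_assoc, ha, f1]
    exact (ENNReal.add_right_inj hbh).mp (h1.trans h2.symm)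
  calc b * (h + h' * r) = b * h + b * h' * r := by ring
  _ = b * h + (δ + c) * r := by rw [hkey]
  _ = b * h + δ * r + c * r := by ring
  _ ≤ b * h + δ + c * r := by gcongr; exact mul_le_of_le_one_right' hr
  _ = a + c * r := by rw [ha]

variable {Ω : Type*} [MeasurableSpace Ω] {P : Measure Ω} [IsProbabilityMeasure P]
  {R : ℕ → Ω → ℝ}

/-- The event `max_{i<N} (i + R i) ≥ t`. -/
def E (R : ℕ → Ω → ℝ) (N : ℕ) (t : ℝ) : Set Ω :=
  ⋃ i ∈ Finset.range N, {ω | t - (i : ℝ) ≤ R i ω}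

/-- Survival up to level `N`. -/
def G (R : ℕ → Ω → ℝ) : ℕ → Set Ω
  | 0 => Set.univ
  | N + 1 => G R N ∩ E R (N + 1) ((N : ℝ) + 1)

/-- The σ-algebra generated by `R i` for `i < N`. -/
def mB (R : ℕ → Ω → ℝ) (N : ℕ) : MeasurableSpace Ω :=
  ⨆ i ∈ Set.Iio N, MeasurableSpace.comap (R i) inferInstance

lemma mB_le (hmeas : ∀ i, Measurable (R i)) (N : ℕ) : mB R N ≤ ‹MeasurableSpace Ω› :=
  iSup₂_le fun i _ => (hmeas i).comap_le

lemma mB_mono {N M : ℕ} (h : N ≤ M) : mB R N ≤ mB R M :=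
  iSup₂_le fun i hi =>
    le_iSup₂ (f := fun i (_ : i ∈ Set.Iio M) => MeasurableSpace.comap (R i) inferInstance)
      i (lt_of_lt_of_le hi h)

lemma threshold_mem {i N : ℕ} (hi : i < N) (c : ℝ) :
    MeasurableSet[mB R N] {ω | c ≤ R i ω} := by
  have h1 : MeasurableSet[MeasurableSpace.comap (R i) inferInstance] {ω | c ≤ R i ω} :=
    ⟨Set.Ici c, measurableSet_Ici, rfl⟩
  exact le_iSup₂ (f := fun i (_ : i ∈ Set.Iio N) => MeasurableSpace.comap (R i) inferInstance)
    i hi _ h1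

lemma E_mem (N : ℕ) (t : ℝ) : MeasurableSet[mB R N] (E R N t) := by
  apply MeasurableSet.biUnion (Finset.range N).countable_toSet
  intro i hi
  exact threshold_mem (Finset.mem_range.mp hi) _

lemma G_mem : ∀ N, MeasurableSet[mB R N] (G R N)
  | 0 => MeasurableSet.univ
  | N + 1 => ((mB_mono (Nat.le_succ N)) _ (G_mem N)).inter (E_mem (N + 1) _)

lemma E_antitone {N : ℕ} {t t' : ℝ} (h : t' ≤ t) : E R N t ⊆ E R N t' := by
  refine Set.iUnion₂_mono fun i hi => fun ω hω => ?_
  simp only [Set.mem_setOf_eq] at hω ⊢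
  linarith

lemma E_succ (N : ℕ) (t : ℝ) :
    E R (N + 1) t = E R N t ∪ {ω | t - (N : ℝ) ≤ R N ω} := by
  rw [E, Finset.range_add_one, Finset.set_biUnion_insert, Set.union_comm]
  rfl

lemma E_compl (N : ℕ) (t : ℝ) :
    (E R N t)ᶜ = ⋂ i ∈ Finset.range N, {ω | R i ω < t - (i : ℝ)} := by
  rw [E, Set.compl_iUnion₂]
  refine Set.iInter₂_congr fun i hi => ?_
  ext ω
  simp only [Set.mem_compl_iff, Set.mem_setOf_eq, not_le]

lemma indep_step (hmeas : ∀ i, Measurable (R i))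
    (hindep : iIndepFun R P) (N : ℕ) {X : Set Ω}
    (hX : MeasurableSet[mB R N] X) (c : ℝ) :
    P (X ∩ {ω | c ≤ R N ω}) = P X * P {ω | c ≤ R N ω} := by
  have hii : iIndep (fun i => MeasurableSpace.comap (R i) inferInstance) P :=
    (iIndepFun_iff_iIndep _ _ _).mp hindep
  have hdisj : Disjoint (Set.Iio N) ({N} : Set ℕ) := by
    simp [Set.disjoint_singleton_right]
  have hind := indep_iSup_of_disjoint (fun i => (hmeas i).comap_le) hii hdisj
  have hB : MeasurableSet[⨆ i ∈ ({N} : Set ℕ), MeasurableSpace.comap (R i) inferInstance]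
      {ω | c ≤ R N ω} := by
    refine le_iSup₂ (f := fun i (_ : i ∈ ({N} : Set ℕ)) =>
      MeasurableSpace.comap (R i) inferInstance) N rfl _ ?_
    exact ⟨Set.Ici c, measurableSet_Ici, rfl⟩
  exact (Indep_iff _ _ _).mp hind X {ω | c ≤ R N ω} hX hB

lemma measure_E_compl (hindep : iIndepFun R P) (N : ℕ) (t : ℝ) :
    P ((E R N t)ᶜ) = ∏ i ∈ Finset.range N, P {ω | R i ω < t - (i : ℝ)} := by
  rw [E_compl]
  exact hindep.meas_biInter fun i hi => ⟨Set.Iio (t - (i : ℝ)), measurableSet_Iio, rfl⟩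

lemma step_lemma (hmeas : ∀ i, Measurable (R i))
    (hindep : iIndepFun R P) (N : ℕ)
    (ih : ∀ t : ℝ, (N : ℝ) ≤ t → P (G R N) * P (E R N t) ≤ P (G R N ∩ E R N t)) :
    ∀ t : ℝ, (N : ℝ) + 1 ≤ t →
      P (G R N) * P (E R (N + 1) t) ≤ P (G R N ∩ E R (N + 1) t) := by
  intro t ht
  have htN : (N : ℝ) ≤ t := by linarith
  set B := {ω | t - (N : ℝ) ≤ R N ω} with hB
  have hGm : MeasurableSet (G R N) := mB_le hmeas N _ (G_mem N)
  have hEm : MeasurableSet (E R N t) := mB_le hmeas N _ (E_mem N t)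
  have hBm : MeasurableSet B := measurableSet_le measurable_const (hmeas N)
  have hGE : G R N ∩ E R (N + 1) t =
      (G R N ∩ E R N t) ∪ ((G R N ∩ (E R N t)ᶜ) ∩ B) := by
    rw [E_succ]
    ext ω
    by_cases hω : ω ∈ E R N t <;> simp [hω, hB, sub_le_iff_le_add]
  have hdisj : Disjoint (G R N ∩ E R N t) ((G R N ∩ (E R N t)ᶜ) ∩ B) :=
    Set.disjoint_left.mpr fun ω h1 h2 => h2.1.2 h1.2
  have hPGE : P (G R N ∩ E R (N + 1) t) =
      P (G R N ∩ E R N t) + P (G R N ∩ (E R N t)ᶜ) * P B := by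
    rw [hGE, measure_union hdisj ((hGm.inter hEm.compl).inter hBm),
      indep_step hmeas hindep N ((G_mem N).inter (E_mem N t).compl) (t - (N : ℝ))]
  have hPE : P (E R (N + 1) t) = P (E R N t) + P ((E R N t)ᶜ) * P B := by
    have hsplit : E R (N + 1) t = E R N t ∪ ((E R N t)ᶜ ∩ B) := by
      rw [E_succ]
      ext ω
      by_cases hω : ω ∈ E R N t <;> simp [hω, hB, sub_le_iff_le_add]
    have hd : Disjoint (E R N t) ((E R N t)ᶜ ∩ B) :=
      Set.disjoint_left.mpr fun ω h1 h2 => h2.1 h1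
    rw [hsplit, measure_union hd (hEm.compl.inter hBm),
      indep_step hmeas hindep N (E_mem N t).compl (t - (N : ℝ))]
  rw [hPGE, hPE]
  have f1 : P (G R N ∩ E R N t) + P (G R N ∩ (E R N t)ᶜ) = P (G R N) := by
    have h := measure_inter_add_diff (μ := P) (G R N) hEm
    rwa [Set.diff_eq] at h
  have f2 : P (E R N t) + P ((E R N t)ᶜ) = 1 := by
    rw [measure_add_measure_compl hEm, measure_univ]
  exact arith prob_le_one prob_le_one prob_le_one f1 f2 (ih t htN)

lemma invariant (hmeas : ∀ i, Measurable (R i))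
    (hindep : iIndepFun R P) :
    ∀ N : ℕ, ∀ t : ℝ, (N : ℝ) ≤ t → P (G R N) * P (E R N t) ≤ P (G R N ∩ E R N t) := by
  intro N
  induction N with
  | zero =>
    intro t _
    simp [G, E]
  | succ N ih =>
    intro t ht
    have ht' : (N : ℝ) + 1 ≤ t := by push_cast at ht; linarith
    have hsub : E R (N + 1) t ⊆ E R (N + 1) ((N : ℝ) + 1) := E_antitone ht'
    have hGsub : G R (N + 1) ∩ E R (N + 1) t = G R N ∩ E R (N + 1) t := by
      show (G R N ∩ E R (N + 1) ((N : ℝ) + 1)) ∩ E R (N + 1) t = _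
      rw [Set.inter_assoc, Set.inter_eq_right.mpr hsub]
    calc P (G R (N + 1)) * P (E R (N + 1) t)
        ≤ P (G R N) * P (E R (N + 1) t) :=
          mul_le_mul_left (measure_mono Set.inter_subset_left) _
    _ ≤ P (G R N ∩ E R (N + 1) t) := step_lemma hmeas hindep N ih t ht'
    _ = P (G R (N + 1) ∩ E R (N + 1) t) := by rw [hGsub]

lemma G_succ_lower (hmeas : ∀ i, Measurable (R i))
    (hindep : iIndepFun R P) (N : ℕ) :
    P (G R N) * P (E R (N + 1) ((N : ℝ) + 1)) ≤ P (G R (N + 1)) :=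
  step_lemma hmeas hindep N (invariant hmeas hindep N) ((N : ℝ) + 1) le_rfl

lemma measure_E_diag {R₀ : Ω → ℝ} (hmeas : ∀ i, Measurable (R i))
    (hindep : iIndepFun R P)
    (hid : ∀ i, IdentDistrib (R i) R₀ P P) (N : ℕ) :
    P (E R (N + 1) ((N : ℝ) + 1)) =
      1 - ∏ i ∈ Finset.range (N + 1), P {ω | R₀ ω < ((i : ℝ) + 1)} := by
  have hEm : MeasurableSet (E R (N + 1) ((N : ℝ) + 1)) :=
    mB_le hmeas (N + 1) _ (E_mem (N + 1) _)
  have h1 : P ((E R (N + 1) ((N : ℝ) + 1))ᶜ) =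
      ∏ i ∈ Finset.range (N + 1), P {ω | R i ω < ((N : ℝ) + 1) - (i : ℝ)} :=
    measure_E_compl hindep (N + 1) ((N : ℝ) + 1)
  have h2 : ∀ i : ℕ, P {ω | R i ω < ((N : ℝ) + 1) - (i : ℝ)} =
      P {ω | R₀ ω < ((N : ℝ) + 1) - (i : ℝ)} := fun i =>
    (hid i).measure_mem_eq (measurableSet_Iio (a := ((N : ℝ) + 1) - (i : ℝ)))
  have h3 : ∏ i ∈ Finset.range (N + 1), P {ω | R₀ ω < ((N : ℝ) + 1) - (i : ℝ)} =
      ∏ i ∈ Finset.range (N + 1), P {ω | R₀ ω < ((i : ℝ) + 1)} := by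
    rw [← Finset.prod_range_reflect (fun j => P {ω | R₀ ω < ((j : ℝ) + 1)}) (N + 1)]
    refine Finset.prod_congr rfl fun j hj => ?_
    have hjN : j ≤ N := Nat.lt_succ_iff.mp (Finset.mem_range.mp hj)
    congr 1
    have : ((N + 1 - 1 - j : ℕ) : ℝ) + 1 = ((N : ℝ) + 1) - (j : ℝ) := by
      have : N + 1 - 1 - j = N - j := rfl
      rw [this, Nat.cast_sub hjN]
      ring
    rw [this]
  have hadd : P (E R (N + 1) ((N : ℝ) + 1)) + P ((E R (N + 1) ((N : ℝ) + 1))ᶜ) = 1 := by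
    rw [measure_add_measure_compl hEm, measure_univ]
  have hfin : P ((E R (N + 1) ((N : ℝ) + 1))ᶜ) ≠ ∞ := measure_ne_top _ _
  have := ENNReal.eq_sub_of_add_eq hfin hadd
  rw [this, h1]
  congr 1
  rw [Finset.prod_congr rfl fun i _ => h2 i, h3]

lemma G_eq_biInter : ∀ N : ℕ, G R N = ⋂ m ∈ Finset.range N, E R (m + 1) ((m : ℝ) + 1)
  | 0 => by simp [G]
  | N + 1 => by
    rw [show G R (N + 1) = G R N ∩ E R (N + 1) ((N : ℝ) + 1) from rfl,
      G_eq_biInter N, Finset.range_add_one, Finset.set_biInter_insert, Set.inter_comm]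

lemma G_lower_bound {R₀ : Ω → ℝ} (hmeas : ∀ i, Measurable (R i))
    (hindep : iIndepFun R P)
    (hid : ∀ i, IdentDistrib (R i) R₀ P P) :
    ∀ N : ℕ, ∏ j ∈ Finset.range N,
        (1 - ∏ i ∈ Finset.range (j + 1), P {ω | R₀ ω < ((i : ℝ) + 1)}) ≤ P (G R N)
  | 0 => by simp [G]
  | N + 1 => by
    rw [Finset.prod_range_succ]
    calc (∏ j ∈ Finset.range N,
          (1 - ∏ i ∈ Finset.range (j + 1), P {ω | R₀ ω < ((i : ℝ) + 1)})) *
          (1 - ∏ i ∈ Finset.range (N + 1), P {ω | R₀ ω < ((i : ℝ) + 1)})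
        ≤ P (G R N) * P (E R (N + 1) ((N : ℝ) + 1)) := by
          rw [measure_E_diag hmeas hindep hid N]
          gcongr
          exact G_lower_bound hmeas hindep hid N
    _ ≤ P (G R (N + 1)) := G_succ_lower hmeas hindep N

end FireworkAux

/-- **Homogeneous Firework Process.**
`P(V) ≥ ∏_{j=0}^∞ [1 − ∏_{i=0}^{j} P(R < i+1)]`. -/
theorem firework_homogeneous_lower_bound
    {Ω : Type*} [MeasurableSpace Ω] (P : Measure Ω) [IsProbabilityMeasure P]
    (R : ℕ → Ω → ℝ) (R₀ : Ω → ℝ)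
    (hmeas : ∀ i, Measurable (R i)) (hmeas₀ : Measurable R₀)
    (hnonneg : ∀ i ω, 0 ≤ R i ω)
    (hindep : iIndepFun R P)
    (hid : ∀ i, IdentDistrib (R i) R₀ P P)
    (h0 : 0 < P {ω | R₀ ω < 1}) (h1 : P {ω | R₀ ω < 1} < 1)
    (V : Set Ω)
    (hV : V = ⋂ (n : ℕ) (_ : 1 ≤ n), ⋃ i ∈ Finset.range n,
      {ω | ((n - i : ℕ) : ℝ) ≤ R i ω}) :
    P V ≥ ∏' j : ℕ, (1 - ∏ i ∈ Finset.range (j + 1), P {ω | R₀ ω < ((i : ℝ) + 1)}) := by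
  classical
  have hVG : V = ⋂ N, FireworkAux.G R N := by
    rw [hV]
    ext ω
    constructor
    · intro hω
      refine Set.mem_iInter.mpr fun N => ?_
      rw [FireworkAux.G_eq_biInter]
      refine Set.mem_iInter₂.mpr fun m hm => ?_
      have h1 : ω ∈ ⋃ i ∈ Finset.range (m + 1),
          {ω | (((m + 1 : ℕ) - i : ℕ) : ℝ) ≤ R i ω} := by
        have h0 := Set.mem_iInter.mp hω (m + 1)
        exact Set.mem_iInter.mp h0 (Nat.succ_le_succ (Nat.zero_le m))
      obtain ⟨i, hi, hRi⟩ := Set.mem_iUnion₂.mp h1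
      refine Set.mem_iUnion₂.mpr ⟨i, hi, ?_⟩
      have hile : i < m + 1 := Finset.mem_range.mp hi
      simp only [Set.mem_setOf_eq] at hRi ⊢
      have hcast : (((m + 1) - i : ℕ) : ℝ) = ((m : ℝ) + 1) - (i : ℝ) := by
        rw [Nat.cast_sub (by omega)]
        push_cast
        ring
      rw [hcast] at hRi
      exact hRi
    · intro hω
      refine Set.mem_iInter.mpr fun n => Set.mem_iInter.mpr fun hn => ?_
      obtain ⟨m, rfl⟩ : ∃ m, n = m + 1 := ⟨n - 1, by omega⟩
      have h1 := Set.mem_iInter.mp hω (m + 1)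
      rw [FireworkAux.G_eq_biInter] at h1
      have h2 := Set.mem_iInter₂.mp h1 m (Finset.self_mem_range_succ m)
      obtain ⟨i, hi, hRi⟩ := Set.mem_iUnion₂.mp h2
      refine Set.mem_iUnion₂.mpr ⟨i, hi, ?_⟩
      have hile : i < m + 1 := Finset.mem_range.mp hi
      simp only [Set.mem_setOf_eq] at hRi ⊢
      have hcast : (((m + 1) - i : ℕ) : ℝ) = ((m : ℝ) + 1) - (i : ℝ) := by
        rw [Nat.cast_sub (by omega)]
        push_cast
        ring
      rw [hcast]
      exact hRi
  have hx1 : ∀ j : ℕ,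
      (1 - ∏ i ∈ Finset.range (j + 1), P {ω | R₀ ω < ((i : ℝ) + 1)}) ≤ 1 :=
    fun j => tsub_le_self
  have hmono : Antitone (FireworkAux.G R) :=
    antitone_nat_of_succ_le fun n => Set.inter_subset_left
  have hGmeasA : ∀ N, MeasurableSet (FireworkAux.G R N) :=
    fun N => FireworkAux.mB_le hmeas N _ (FireworkAux.G_mem N)
  have hPV : P V = ⨅ N, P (FireworkAux.G R N) := by
    rw [hVG]
    exact hmono.measure_iInter (fun N => (hGmeasA N).nullMeasurableSet)
      ⟨0, measure_ne_top _ _⟩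
  rw [ge_iff_le, hPV]
  refine le_iInf fun N => ?_
  exact (FireworkAux.tprod_le_prod_range hx1 N).trans
    (FireworkAux.G_lower_bound hmeas hindep hid N)
end

section
/- For the homogeneous Firework Process, suppose the sequence n·P(R ≥ n) converges to a limit L as n → ∞. If L > 1, then P(V) > 0. -/
open MeasureTheory ProbabilityTheory Filter Set
open scoped ENNReal

lemma fw_two_point {a b c d : ℝ≥0∞} (hac : a ≤ c) (hbd : b ≤ d) :
    a * d + c * b ≤ a * b + c * d := by
  have h1 : a * d ≤ a * b + a * (d - b) := by
    rw [← mul_add]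
    exact mul_le_mul_right (le_tsub_add.trans_eq (add_comm _ _)) a
  have h2 : a * (d - b) ≤ c * (d - b) := mul_le_mul_left hac _
  have h3 : c * (d - b) + c * b = c * d := by
    rw [← mul_add, tsub_add_cancel_of_le hbd]
  calc a * d + c * b ≤ (a * b + a * (d - b)) + c * b := add_le_add_left h1 _
    _ ≤ (a * b + c * (d - b)) + c * b := by gcongr
    _ = a * b + (c * (d - b) + c * b) := by ring
    _ = a * b + c * d := by rw [h3]

lemma fw_chebyshev {μ : Measure ℝ} [IsProbabilityMeasure μ]
    {f g : ℝ → ℝ≥0∞} (hf : Measurable f) (hg : Measurable g)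
    (hfm : Monotone f) (hgm : Monotone g) :
    (∫⁻ x, f x ∂μ) * (∫⁻ x, g x ∂μ) ≤ ∫⁻ x, f x * g x ∂μ := by
  have key : ∀ x y : ℝ, f x * g y + f y * g x ≤ f x * g x + f y * g y := by
    intro x y
    rcases le_total x y with h | h
    · exact fw_two_point (hfm h) (hgm h)
    · have := fw_two_point (hfm h) (hgm h)
      calc f x * g y + f y * g x = f y * g x + f x * g y := add_comm _ _
        _ ≤ f y * g y + f x * g x := this
        _ = f x * g x + f y * g y := add_comm _ _
  have hmain : ∫⁻ x, ∫⁻ y, (f x * g y + f y * g x) ∂μ ∂μ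
      ≤ ∫⁻ x, ∫⁻ y, (f x * g x + f y * g y) ∂μ ∂μ := by
    refine lintegral_mono fun x => lintegral_mono fun y => key x y
  have hL : ∫⁻ x, ∫⁻ y, (f x * g y + f y * g x) ∂μ ∂μ
      = 2 * ((∫⁻ x, f x ∂μ) * (∫⁻ x, g x ∂μ)) := by
    have : ∀ x, ∫⁻ y, (f x * g y + f y * g x) ∂μ
        = f x * (∫⁻ y, g y ∂μ) + (∫⁻ y, f y ∂μ) * g x := by
      intro x
      rw [lintegral_add_left (hg.const_mul _), lintegral_const_mul _ hg,
        lintegral_mul_const _ hf]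
    simp_rw [this]
    rw [lintegral_add_left (hf.mul_const _), lintegral_mul_const _ hf,
      lintegral_const_mul _ hg]
    ring
  have hR : ∫⁻ x, ∫⁻ y, (f x * g x + f y * g y) ∂μ ∂μ
      = 2 * ∫⁻ x, f x * g x ∂μ := by
    have : ∀ x, ∫⁻ y, (f x * g x + f y * g y) ∂μ
        = f x * g x + ∫⁻ y, f y * g y ∂μ := by
      intro x
      rw [lintegral_add_left measurable_const, lintegral_const, measure_univ, mul_one]
    simp_rw [this]
    rw [lintegral_add_right _ measurable_const, lintegral_const, measure_univ, mul_one]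
    ring
  rw [hL, hR] at hmain
  exact (ENNReal.mul_le_mul_iff_right two_ne_zero ENNReal.ofNat_ne_top).mp hmain

lemma fw_harris (μ : Measure ℝ) [IsProbabilityMeasure μ] : ∀ {N : ℕ}
    {A B : Set (Fin N → ℝ)}, MeasurableSet A → MeasurableSet B →
    (∀ x y : Fin N → ℝ, x ≤ y → x ∈ A → y ∈ A) →
    (∀ x y : Fin N → ℝ, x ≤ y → x ∈ B → y ∈ B) →
    Measure.pi (fun _ : Fin N => μ) A * Measure.pi (fun _ : Fin N => μ) B
      ≤ Measure.pi (fun _ : Fin N => μ) (A ∩ B) := by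
  intro N
  induction N with
  | zero =>
    intro A B hA hB _ _
    have : ∀ (S : Set (Fin 0 → ℝ)), S = ∅ ∨ S = univ := by
      intro S
      rcases S.eq_empty_or_nonempty with h | ⟨x, hx⟩
      · exact Or.inl h
      · refine Or.inr (eq_univ_of_forall fun y => ?_)
        rwa [Subsingleton.elim y x]
    rcases this A with rfl | rfl <;> rcases this B with rfl | rfl <;>
      simp [measure_univ]
  | succ n ih =>
    intro A B hA hB hAu hBu
    set e := MeasurableEquiv.piFinSuccAbove (fun _ : Fin (n+1) => ℝ) 0 with he
    have hmp := measurePreserving_piFinSuccAbove (fun _ : Fin (n+1) => μ) 0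
    set ρ : Measure (Fin n → ℝ) := Measure.pi (fun _ : Fin n => μ) with hρ
    have hprob : IsProbabilityMeasure ρ := by infer_instance
    -- transfer sets
    have hmeq : ∀ (S : Set (Fin (n+1) → ℝ)), MeasurableSet S →
        Measure.pi (fun _ : Fin (n+1) => μ) S = (μ.prod ρ) (⇑e.symm ⁻¹' S) := by
      intro S hS
      have h1 : ⇑e ⁻¹' (⇑e.symm ⁻¹' S) = S := by
        ext x; simp
      have h2 := hmp.measure_preimage ((e.symm.measurable hS).nullMeasurableSet)
      rw [show ⇑(MeasurableEquiv.piFinSuccAbove (fun _ : Fin (n+1) => ℝ) 0) = ⇑e from rfl,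
        h1] at h2
      exact h2
    -- monotonicity of e.symm
    have hesymm : ∀ (p q : ℝ × (Fin n → ℝ)), p ≤ q → e.symm p ≤ e.symm q := by
      intro p q hpq j
      have h1 : p.1 ≤ q.1 := hpq.1
      have h2 : p.2 ≤ q.2 := hpq.2
      refine Fin.cases ?_ ?_ j <;>
        simp only [he, MeasurableEquiv.piFinSuccAbove_symm_apply, Fin.insertNthEquiv_apply]
      · simpa using h1
      · intro k; simpa using h2 k
    set A' := ⇑e.symm ⁻¹' A with hA'
    set B' := ⇑e.symm ⁻¹' B with hB'
    have hA'm : MeasurableSet A' := e.symm.measurable hA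
    have hB'm : MeasurableSet B' := e.symm.measurable hB
    have hABm : ⇑e.symm ⁻¹' (A ∩ B) = A' ∩ B' := rfl
    -- sections
    have hsecA : ∀ x : ℝ, MeasurableSet (Prod.mk x ⁻¹' A') :=
      fun x => measurable_prodMk_left hA'm
    have hsecB : ∀ x : ℝ, MeasurableSet (Prod.mk x ⁻¹' B') :=
      fun x => measurable_prodMk_left hB'm
    set f : ℝ → ℝ≥0∞ := fun x => ρ (Prod.mk x ⁻¹' A') with hf
    set g : ℝ → ℝ≥0∞ := fun x => ρ (Prod.mk x ⁻¹' B') with hg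
    have hfmeas : Measurable f := measurable_measure_prodMk_left hA'm
    have hgmeas : Measurable g := measurable_measure_prodMk_left hB'm
    have hupsec : ∀ (S : Set (Fin (n+1) → ℝ)),
        (∀ x y : Fin (n+1) → ℝ, x ≤ y → x ∈ S → y ∈ S) →
        ∀ (x : ℝ) (u v : Fin n → ℝ), u ≤ v →
          u ∈ Prod.mk x ⁻¹' (⇑e.symm ⁻¹' S) → v ∈ Prod.mk x ⁻¹' (⇑e.symm ⁻¹' S) := by
      intro S hS x u v huv hu
      exact hS _ _ (hesymm (x, u) (x, v) ⟨le_refl x, huv⟩) hu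
    have hfmono : Monotone f := by
      intro x y hxy
      refine measure_mono fun u hu => ?_
      exact hAu _ _ (hesymm (x, u) (y, u) ⟨hxy, le_refl u⟩) hu
    have hgmono : Monotone g := by
      intro x y hxy
      refine measure_mono fun u hu => ?_
      exact hBu _ _ (hesymm (x, u) (y, u) ⟨hxy, le_refl u⟩) hu
    have hsecprod : ∀ x : ℝ, f x * g x ≤ ρ (Prod.mk x ⁻¹' (A' ∩ B')) := by
      intro x
      have : Prod.mk x ⁻¹' (A' ∩ B') = (Prod.mk x ⁻¹' A') ∩ (Prod.mk x ⁻¹' B') := rfl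
      rw [this]
      exact ih (hsecA x) (hsecB x)
        (fun u v huv hu => hupsec A hAu x u v huv hu)
        (fun u v huv hu => hupsec B hBu x u v huv hu)
    calc Measure.pi (fun _ : Fin (n+1) => μ) A * Measure.pi (fun _ : Fin (n+1) => μ) B
        = (μ.prod ρ) A' * (μ.prod ρ) B' := by rw [hmeq A hA, hmeq B hB]
      _ = (∫⁻ x, f x ∂μ) * (∫⁻ x, g x ∂μ) := by
          rw [Measure.prod_apply hA'm, Measure.prod_apply hB'm]
      _ ≤ ∫⁻ x, f x * g x ∂μ := fw_chebyshev hfmeas hgmeas hfmono hgmono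
      _ ≤ ∫⁻ x, ρ (Prod.mk x ⁻¹' (A' ∩ B')) ∂μ := lintegral_mono hsecprod
      _ = (μ.prod ρ) (A' ∩ B') := (Measure.prod_apply (hA'm.inter hB'm)).symm
      _ = Measure.pi (fun _ : Fin (n+1) => μ) (A ∩ B) := by
          rw [hmeq (A ∩ B) (hA.inter hB), hABm]
lemma fw_harris_prod (μ : Measure ℝ) [IsProbabilityMeasure μ] {N : ℕ} {ι : Type*}
    (s : Finset ι) (U : ι → Set (Fin N → ℝ))
    (hm : ∀ j ∈ s, MeasurableSet (U j))
    (hu : ∀ j ∈ s, ∀ x y : Fin N → ℝ, x ≤ y → x ∈ U j → y ∈ U j) :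
    ∏ j ∈ s, Measure.pi (fun _ : Fin N => μ) (U j)
      ≤ Measure.pi (fun _ : Fin N => μ) (⋂ j ∈ s, U j) := by
  classical
  induction s using Finset.induction_on with
  | empty => simp
  | insert a t ha ih =>
    have hInt : MeasurableSet (⋂ j ∈ t, U j) :=
      MeasurableSet.biInter t.countable_toSet (fun j hj => hm j (Finset.mem_insert_of_mem hj))
    have hIntU : ∀ x y : Fin N → ℝ, x ≤ y → x ∈ ⋂ j ∈ t, U j → y ∈ ⋂ j ∈ t, U j := by
      intro x y hxy hx
      simp only [Set.mem_iInter] at hx ⊢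
      exact fun j hj => hu j (Finset.mem_insert_of_mem hj) x y hxy (hx j hj)
    rw [Finset.prod_insert ha, Finset.set_biInter_insert]
    calc Measure.pi (fun _ : Fin N => μ) (U a) * ∏ j ∈ t, Measure.pi (fun _ : Fin N => μ) (U j)
        ≤ Measure.pi (fun _ : Fin N => μ) (U a) * Measure.pi (fun _ : Fin N => μ) (⋂ j ∈ t, U j) := by
          exact mul_le_mul_right (ih (fun j hj => hm j (Finset.mem_insert_of_mem hj))
            (fun j hj => hu j (Finset.mem_insert_of_mem hj))) _
      _ ≤ Measure.pi (fun _ : Fin N => μ) (U a ∩ ⋂ j ∈ t, U j) :=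
          fw_harris μ (hm a (Finset.mem_insert_self a t)) hInt
            (hu a (Finset.mem_insert_self a t)) hIntU

lemma fw_map_pi {Ω : Type*} [MeasurableSpace Ω] (P : Measure Ω) [IsProbabilityMeasure P]
    (R : ℕ → Ω → ℝ) (hmeas : ∀ i, Measurable (R i))
    (hindep : iIndepFun R P) (N : ℕ) :
    P.map (fun ω (i : Fin N) => R i ω) = Measure.pi (fun i : Fin N => P.map (R i)) := by
  classical
  haveI : ∀ i : Fin N, IsProbabilityMeasure (P.map (R (i : ℕ))) :=
    fun i => Measure.isProbabilityMeasure_map (hmeas i).aemeasurable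
  refine (Measure.pi_eq fun s hs => ?_).symm
  rw [Measure.map_apply (measurable_pi_lambda (fun ω (i : Fin N) => R i ω) (fun i => hmeas i)) (MeasurableSet.univ_pi hs)]
  set t : ℕ → Set ℝ := fun k => if h : k < N then s ⟨k, h⟩ else Set.univ with ht
  have htmeas : ∀ k, k ∈ Finset.range N → MeasurableSet (t k) := by
    intro k _
    by_cases h : k < N <;> simp [ht, h, hs _]
  have hpre : (fun ω (i : Fin N) => R i ω) ⁻¹' (Set.univ.pi s)
      = ⋂ k ∈ Finset.range N, R k ⁻¹' t k := by
    ext ω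
    simp only [Set.mem_preimage, Set.mem_pi, Set.mem_univ, forall_true_left,
      Set.mem_iInter, Finset.mem_range]
    constructor
    · intro h k hk
      simpa [ht, hk] using h ⟨k, hk⟩
    · intro h i
      simpa [ht, i.isLt] using h i i.isLt
  rw [hpre, hindep.measure_inter_preimage_eq_mul (Finset.range N) htmeas,
    ← Fin.prod_univ_eq_prod_range (fun k => P (R k ⁻¹' t k)) N]
  refine Finset.prod_congr rfl fun i _ => ?_
  rw [Measure.map_apply (hmeas i) (hs i)]
  congr 1
  simp [ht, i.isLt]
lemma fw_measure_U (μ : Measure ℝ) [IsProbabilityMeasure μ] {N n : ℕ} (hnN : n ≤ N) :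
    Measure.pi (fun _ : Fin N => μ)
      {x : Fin N → ℝ | ∃ i : Fin N, (i : ℕ) < n ∧ ((n - (i : ℕ) : ℕ) : ℝ) ≤ x i}
      = 1 - ∏ k ∈ Finset.range n, μ (Iio ((k + 1 : ℕ) : ℝ)) := by
  classical
  set U : Set (Fin N → ℝ) :=
    {x : Fin N → ℝ | ∃ i : Fin N, (i : ℕ) < n ∧ ((n - (i : ℕ) : ℕ) : ℝ) ≤ x i} with hU
  set t : Fin N → Set ℝ :=
    fun i => if (i : ℕ) < n then Iio (((n - (i : ℕ) : ℕ)) : ℝ) else univ with htdef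
  have hUc : Uᶜ = univ.pi t := by
    ext x
    simp only [hU, mem_compl_iff, mem_setOf_eq, not_exists, not_and, not_le,
      Set.mem_pi, Set.mem_univ, forall_true_left, htdef]
    refine forall_congr' fun i => ?_
    by_cases h : (i : ℕ) < n <;> simp [h]
  have htm : ∀ i, MeasurableSet (t i) := by
    intro i
    by_cases h : (i : ℕ) < n <;> simp [htdef, h]
  have hUcm : MeasurableSet (Uᶜ) := by
    rw [hUc]; exact MeasurableSet.univ_pi htm
  have hcompl : Measure.pi (fun _ : Fin N => μ) U
      = 1 - Measure.pi (fun _ : Fin N => μ) (Uᶜ) := by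
    have := measure_compl (μ := Measure.pi (fun _ : Fin N => μ)) hUcm (measure_ne_top _ _)
    rwa [compl_compl, measure_univ] at this
  have hpi : Measure.pi (fun _ : Fin N => μ) (Uᶜ) = ∏ i : Fin N, μ (t i) := by
    rw [hUc, Measure.pi_pi]
  set g : ℕ → ℝ≥0∞ := fun k => if k < n then μ (Iio ((n - k : ℕ) : ℝ)) else 1 with hgdef
  have hg : ∀ i : Fin N, μ (t i) = g (i : ℕ) := by
    intro i
    by_cases h : (i : ℕ) < n <;> simp [htdef, hgdef, h]
  have hprod : ∏ i : Fin N, μ (t i) = ∏ k ∈ Finset.range n, μ (Iio ((n - k : ℕ) : ℝ)) := by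
    calc ∏ i : Fin N, μ (t i) = ∏ i : Fin N, g (i : ℕ) := Finset.prod_congr rfl fun i _ => hg i
      _ = ∏ k ∈ Finset.range N, g k := Fin.prod_univ_eq_prod_range g N
      _ = ∏ k ∈ Finset.range n, g k := by
          refine (Finset.prod_subset (Finset.range_subset_range.2 hnN) fun k _ hk => ?_).symm
          simp only [Finset.mem_range, not_lt] at hk
          simp [hgdef, show ¬ k < n by omega]
      _ = ∏ k ∈ Finset.range n, μ (Iio ((n - k : ℕ) : ℝ)) := by
          refine Finset.prod_congr rfl fun k hk => ?_
          simp only [Finset.mem_range] at hk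
          simp [hgdef, hk]
  have hreflect : ∏ k ∈ Finset.range n, μ (Iio ((n - k : ℕ) : ℝ))
      = ∏ k ∈ Finset.range n, μ (Iio ((k + 1 : ℕ) : ℝ)) := by
    rw [← Finset.prod_range_reflect (fun j => μ (Iio ((j + 1 : ℕ) : ℝ))) n]
    refine Finset.prod_congr rfl fun j hj => ?_
    simp only [Finset.mem_range] at hj
    have : n - 1 - j + 1 = n - j := by omega
    simp only [this]
  rw [hcompl, hpi, hprod, hreflect]

lemma fw_weier (s : Finset ℕ) (q : ℕ → ℝ) (h0 : ∀ n, 0 ≤ q n) (h1 : ∀ n, q n ≤ 1) :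
    1 - ∑ n ∈ s, q n ≤ ∏ n ∈ s, (1 - q n) := by
  classical
  induction s using Finset.induction_on with
  | empty => simp
  | insert a t ha ih =>
    rw [Finset.prod_insert ha, Finset.sum_insert ha]
    have h2 : (0 : ℝ) ≤ ∑ n ∈ t, q n := Finset.sum_nonneg fun n _ => h0 n
    have h3 : (0:ℝ) ≤ 1 - q a := by linarith [h1 a]
    nlinarith [mul_le_mul_of_nonneg_left ih h3, h0 a]
lemma fw_analytic (f : ℕ → ℝ) (h0 : ∀ k, 0 ≤ f k) (h1 : ∀ k, f k ≤ 1)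
    (ha : f 1 < 1) (L' : ℝ) (hL' : 1 < L') (n₀ : ℕ) (hn₀ : 1 ≤ n₀)
    (hf : ∀ n, n₀ ≤ n → f n ≤ 1 - L' / n) :
    ∃ ε : ℝ, 0 < ε ∧
      ∀ N, ε ≤ ∏ n ∈ Finset.Ioc 0 N, (1 - ∏ k ∈ Finset.range n, f (k + 1)) := by
  classical
  set q : ℕ → ℝ := fun n => ∏ k ∈ Finset.range n, f (k + 1) with hq
  have hq0 : ∀ n, 0 ≤ q n := fun n => Finset.prod_nonneg fun k _ => h0 _
  have hq1 : ∀ n, q n ≤ 1 := fun n => Finset.prod_le_one (fun k _ => h0 _) (fun k _ => h1 _)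
  have hqstep : ∀ n, q (n + 1) ≤ q n := by
    intro n
    have : q (n + 1) = q n * f (n + 1) := Finset.prod_range_succ _ n
    rw [this]
    exact mul_le_of_le_one_right (hq0 n) (h1 _)
  have hqanti : Antitone q := antitone_nat_of_succ_le hqstep
  have hqa : ∀ n, 1 ≤ n → q n ≤ f 1 := by
    intro n hn
    have h2 : q n ≤ q 1 := hqanti hn
    simpa [hq] using h2
  -- decay estimate
  have hkey : ∀ n, n₀ ≤ n → q n * (n : ℝ) ^ L' ≤ q n₀ * (n₀ : ℝ) ^ L' := by
    intro n hn
    induction n, hn using Nat.le_induction with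
    | base => exact le_refl _
    | succ n hn ih =>
      have hx0 : (0 : ℝ) < (n : ℝ) := by
        have : 1 ≤ n := le_trans hn₀ hn
        exact_mod_cast this
      have hx10 : (0 : ℝ) < (n : ℝ) + 1 := by linarith
      have hcast : ((n + 1 : ℕ) : ℝ) = (n : ℝ) + 1 := by push_cast; ring
      have hfb : f (n + 1) ≤ 1 - L' / ((n : ℝ) + 1) := by
        have := hf (n + 1) (le_trans hn (Nat.le_succ n))
        rwa [hcast] at this
      have hbern : 1 - L' / ((n : ℝ) + 1) ≤ ((n : ℝ) / ((n : ℝ) + 1)) ^ L' := by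
        have hs : (-1 : ℝ) ≤ -(1 / ((n : ℝ) + 1)) := by
          rw [neg_le_neg_iff]
          rw [div_le_one hx10]
          linarith
        have hb := one_add_mul_self_le_rpow_one_add hs hL'.le
        have e1 : (1 : ℝ) + -(1 / ((n : ℝ) + 1)) = (n : ℝ) / ((n : ℝ) + 1) := by
          field_simp
          ring
        have e2 : (1 : ℝ) + L' * -(1 / ((n : ℝ) + 1)) = 1 - L' / ((n : ℝ) + 1) := by
          field_simp
          ring
        rw [e1, e2] at hb
        exact hb
      have hrpow : ((n : ℝ) / ((n : ℝ) + 1)) ^ L' * ((n : ℝ) + 1) ^ L' = (n : ℝ) ^ L' := by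
        rw [← Real.mul_rpow (by positivity) (by positivity)]
        rw [div_mul_cancel₀ _ (ne_of_gt hx10)]
      have hq' : q (n + 1) = q n * f (n + 1) := Finset.prod_range_succ _ n
      calc q (n + 1) * ((n + 1 : ℕ) : ℝ) ^ L'
          = q n * f (n + 1) * ((n : ℝ) + 1) ^ L' := by rw [hq', hcast]
        _ ≤ q n * (1 - L' / ((n : ℝ) + 1)) * ((n : ℝ) + 1) ^ L' := by
            apply mul_le_mul_of_nonneg_right _ (Real.rpow_nonneg (by positivity) _)
            exact mul_le_mul_of_nonneg_left hfb (hq0 n)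
        _ ≤ q n * (((n : ℝ) / ((n : ℝ) + 1)) ^ L') * ((n : ℝ) + 1) ^ L' := by
            apply mul_le_mul_of_nonneg_right _ (Real.rpow_nonneg (by positivity) _)
            exact mul_le_mul_of_nonneg_left hbern (hq0 n)
        _ = q n * (n : ℝ) ^ L' := by rw [mul_assoc, hrpow]
        _ ≤ q n₀ * (n₀ : ℝ) ^ L' := ih
  set C : ℝ := q n₀ * (n₀ : ℝ) ^ L' with hC
  have hqle : ∀ n, n₀ ≤ n → q n ≤ C * (n : ℝ) ^ (-L') := by
    intro n hn
    have hx0 : (0 : ℝ) < (n : ℝ) := by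
      have : 1 ≤ n := le_trans hn₀ hn
      exact_mod_cast this
    have hxp : (0 : ℝ) < (n : ℝ) ^ L' := Real.rpow_pos_of_pos hx0 _
    have h := hkey n hn
    have h2 : q n ≤ C / (n : ℝ) ^ L' := (le_div_iff₀ hxp).2 h
    rw [Real.rpow_neg hx0.le]
    rwa [div_eq_mul_inv] at h2
  have hC0 : 0 ≤ C := mul_nonneg (hq0 n₀) (Real.rpow_nonneg (by positivity) _)
  -- summability
  have hsum0 : Summable (fun n : ℕ => (n : ℝ) ^ (-L')) :=
    Real.summable_nat_rpow.2 (by linarith)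
  have hsum1 : Summable (fun n : ℕ => C * (n : ℝ) ^ (-L')) := hsum0.mul_left C
  have hsum2 : Summable (fun m : ℕ => C * ((m + n₀ : ℕ) : ℝ) ^ (-L')) :=
    (summable_nat_add_iff n₀).2 hsum1
  have hsumq' : Summable (fun m : ℕ => q (m + n₀)) :=
    Summable.of_nonneg_of_le (fun m => hq0 _)
      (fun m => hqle (m + n₀) (Nat.le_add_left _ _)) hsum2
  have hsumq : Summable q := (summable_nat_add_iff n₀).1 hsumq'
  -- choose tail cutoff
  have htail := tendsto_sum_nat_add q
  have hev : ∀ᶠ i in atTop, ∑' k, q (k + i) < 1 / 2 :=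
    htail.eventually (gt_mem_nhds (by norm_num))
  obtain ⟨M, hM⟩ := eventually_atTop.1 hev
  have htailsum : ∀ N, ∑ n ∈ Finset.Ioc M N, q n ≤ 1 / 2 := by
    intro N
    have e1 : ∑ n ∈ Finset.Ioc M N, q n = ∑ j ∈ Finset.range (N + 1 - (M + 1)), q (M + 1 + j) := by
      rw [← Finset.Ico_add_one_add_one_eq_Ioc, Finset.sum_Ico_eq_sum_range]
    have e2 : ∑ j ∈ Finset.range (N + 1 - (M + 1)), q (M + 1 + j)
        = ∑ j ∈ Finset.range (N + 1 - (M + 1)), q (j + (M + 1)) := by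
      refine Finset.sum_congr rfl fun j _ => ?_
      rw [Nat.add_comm]
    have hsless : Summable (fun j : ℕ => q (j + (M + 1))) :=
      (summable_nat_add_iff (M + 1)).2 hsumq
    have e3 : ∑ j ∈ Finset.range (N + 1 - (M + 1)), q (j + (M + 1))
        ≤ ∑' j : ℕ, q (j + (M + 1)) :=
      Summable.sum_le_tsum _ (fun j _ => hq0 _) hsless
    have e4 : ∑' j : ℕ, q (j + (M + 1)) < 1 / 2 := hM (M + 1) (Nat.le_succ M)
    rw [e1, e2]
    linarith
  -- assemble epsilon
  set b : ℝ := 1 - f 1 with hb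
  have hb0 : 0 < b := by simp only [hb]; linarith
  have hb1 : b ≤ 1 := by simp only [hb]; linarith [h0 1]
  have hfac : ∀ n, 1 ≤ n → b ≤ 1 - q n := by
    intro n hn
    have := hqa n hn
    simp only [hb]
    linarith
  have hfac0 : ∀ n, 1 ≤ n → (0:ℝ) ≤ 1 - q n := fun n hn => le_trans hb0.le (hfac n hn)
  have hlow : ∀ A B : ℕ, b ^ (B - A) ≤ ∏ n ∈ Finset.Ioc A B, (1 - q n) := by
    intro A B
    have hcard : (Finset.Ioc A B).card = B - A := Nat.card_Ioc A B
    calc b ^ (B - A) = ∏ _n ∈ Finset.Ioc A B, b := by rw [Finset.prod_const, hcard]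
      _ ≤ ∏ n ∈ Finset.Ioc A B, (1 - q n) := by
          refine Finset.prod_le_prod (fun n _ => hb0.le) (fun n hn => ?_)
          have h5 := (Finset.mem_Ioc.1 hn).1
          exact hfac n (by omega)
  refine ⟨b ^ M * (1 / 2), by positivity, fun N => ?_⟩
  rcases le_or_gt N M with hNM | hMN
  · have h2 : b ^ M ≤ b ^ N := pow_le_pow_of_le_one hb0.le hb1 hNM
    have h3 : b ^ N ≤ ∏ n ∈ Finset.Ioc 0 N, (1 - q n) := by
      simpa using hlow 0 N
    nlinarith [pow_nonneg hb0.le M]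
  · rw [← Finset.prod_Ioc_consecutive _ (Nat.zero_le M) hMN.le]
    have h2 : b ^ M ≤ ∏ n ∈ Finset.Ioc 0 M, (1 - q n) := by
      simpa using hlow 0 M
    have h3 : (1 : ℝ) / 2 ≤ ∏ n ∈ Finset.Ioc M N, (1 - q n) := by
      have := fw_weier (Finset.Ioc M N) q hq0 hq1
      have := htailsum N
      linarith
    have h4 : (0 : ℝ) ≤ ∏ n ∈ Finset.Ioc 0 M, (1 - q n) := le_trans (by positivity) h2
    exact mul_le_mul h2 h3 (by norm_num) h4
/-- **Homogeneous Firework Process.** If `n·P(R ≥ n) → L` with `L > 1`, then `P(V) > 0`. -/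
theorem firework_homogeneous_survival_of_limit_gt_one
    {Ω : Type*} [MeasurableSpace Ω] (P : Measure Ω) [IsProbabilityMeasure P]
    (R : ℕ → Ω → ℝ) (R₀ : Ω → ℝ)
    (hmeas : ∀ i, Measurable (R i)) (hmeas₀ : Measurable R₀)
    (hnonneg : ∀ i ω, 0 ≤ R i ω)
    (hindep : iIndepFun R P)
    (hid : ∀ i, IdentDistrib (R i) R₀ P P)
    (h0 : 0 < P {ω | R₀ ω < 1}) (h1 : P {ω | R₀ ω < 1} < 1)
    (V : Set Ω)
    (hV : V = ⋂ (n : ℕ) (_ : 1 ≤ n), ⋃ i ∈ Finset.range n,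
      {ω | ((n - i : ℕ) : ℝ) ≤ R i ω})
    (L : ℝ)
    (hL : Tendsto (fun n : ℕ => (n : ℝ) * (P {ω | (n : ℝ) ≤ R₀ ω}).toReal)
      atTop (nhds L))
    (hL1 : 1 < L) :
    0 < P V := by
  classical
  set μ : Measure ℝ := P.map R₀ with hμ
  haveI : IsProbabilityMeasure μ := Measure.isProbabilityMeasure_map hmeas₀.aemeasurable
  have hmapR : ∀ i, P.map (R i) = μ := fun i => (hid i).map_eq
  set Fe : ℕ → ℝ≥0∞ := fun k => μ (Iio ((k : ℕ) : ℝ)) with hFe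
  set p : ℕ → ℝ≥0∞ := fun n => ∏ k ∈ Finset.range n, Fe (k + 1) with hp
  set A : ℕ → Set Ω := fun n => ⋃ i ∈ Finset.range n, {ω | ((n - i : ℕ) : ℝ) ≤ R i ω} with hA
  set C : ℕ → Set Ω := fun N => ⋂ n ∈ Finset.Ioc 0 N, A n with hC
  have hVC : V = ⋂ N, C N := by
    rw [hV]
    ext ω
    simp only [Set.mem_iInter, hC, hA, Finset.mem_Ioc]
    constructor
    · rintro h N n ⟨hn1, _⟩
      exact h n hn1
    · intro h n hn
      exact h n n ⟨hn, le_refl n⟩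
  have hAm : ∀ n, MeasurableSet (A n) := by
    intro n
    refine Set.Finite.measurableSet_biUnion (Finset.finite_toSet _) fun i _ => ?_
    exact (hmeas i) measurableSet_Ici
  have hCm : ∀ N, MeasurableSet (C N) :=
    fun N => Set.Finite.measurableSet_biInter (Finset.finite_toSet _) fun n _ => hAm n
  have hCanti : Antitone C := by
    intro N M hNM ω hω
    simp only [hC, Set.mem_iInter] at hω ⊢
    intro n hn
    refine hω n ?_
    simp only [Finset.mem_Ioc] at hn ⊢
    exact ⟨hn.1, le_trans hn.2 hNM⟩
  -- main estimate: P (C N) ≥ ∏ (1 - p n)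
  have hPC : ∀ N : ℕ, ∏ n ∈ Finset.Ioc 0 N, (1 - p n) ≤ P (C N) := by
    intro N
    set ν : Measure (Fin N → ℝ) := Measure.pi (fun _ : Fin N => μ) with hν
    set U : ℕ → Set (Fin N → ℝ) :=
      fun n => {x | ∃ i : Fin N, (i : ℕ) < n ∧ ((n - (i : ℕ) : ℕ) : ℝ) ≤ x i} with hU
    have hUm : ∀ n, MeasurableSet (U n) := by
      intro n
      have he : U n = ⋃ i : Fin N,
          {x : Fin N → ℝ | (i : ℕ) < n ∧ ((n - (i : ℕ) : ℕ) : ℝ) ≤ x i} := by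
        ext x; simp [hU]
      rw [he]
      refine MeasurableSet.iUnion fun i => ?_
      by_cases h : (i : ℕ) < n
      · have he2 : {x : Fin N → ℝ | (i : ℕ) < n ∧ ((n - (i : ℕ) : ℕ) : ℝ) ≤ x i}
            = (fun x : Fin N → ℝ => x i) ⁻¹' Ici ((n - (i : ℕ) : ℕ) : ℝ) := by
          ext x; simp [h]
        rw [he2]
        exact (measurable_pi_apply i) measurableSet_Ici
      · have he2 : {x : Fin N → ℝ | (i : ℕ) < n ∧ ((n - (i : ℕ) : ℕ) : ℝ) ≤ x i} = ∅ := by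
          ext x; simp [h]
        rw [he2]
        exact MeasurableSet.empty
    have hUu : ∀ n, ∀ x y : Fin N → ℝ, x ≤ y → x ∈ U n → y ∈ U n := by
      rintro n x y hxy ⟨i, hi, hxi⟩
      exact ⟨i, hi, le_trans hxi (hxy i)⟩
    have hharris := fw_harris_prod μ (Finset.Ioc 0 N) U (fun j _ => hUm j) (fun j _ => hUu j)
    have hUmeas : ∀ n ∈ Finset.Ioc 0 N, ν (U n) = 1 - p n := by
      intro n hn
      have hnN : n ≤ N := (Finset.mem_Ioc.1 hn).2
      simpa [hν, hU, hp, hFe] using fw_measure_U μ (N := N) (n := n) hnN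
    have htuple : Measurable (fun ω (i : Fin N) => R i ω) :=
      measurable_pi_lambda (fun ω (i : Fin N) => R i ω) (fun i => hmeas i)
    have hmap : P.map (fun ω (i : Fin N) => R i ω) = ν := by
      rw [fw_map_pi P R hmeas hindep N]
      have : (fun i : Fin N => P.map (R (i : ℕ))) = fun _ : Fin N => μ :=
        funext fun i => hmapR i
      rw [hν, this]
    have hpre : C N = (fun ω (i : Fin N) => R i ω) ⁻¹' (⋂ n ∈ Finset.Ioc 0 N, U n) := by
      ext ω
      simp only [hC, hA, hU, Set.mem_iInter, Set.mem_preimage, Set.mem_setOf_eq,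
        Set.mem_iUnion, Finset.mem_range, exists_prop]
      refine forall_congr' fun n => forall_congr' fun hn => ?_
      have hnN : n ≤ N := (Finset.mem_Ioc.1 hn).2
      constructor
      · rintro ⟨i, hi, hri⟩
        exact ⟨⟨i, lt_of_lt_of_le hi hnN⟩, hi, hri⟩
      · rintro ⟨i, hi, hri⟩
        exact ⟨(i : ℕ), hi, hri⟩
    have hPCeq : P (C N) = ν (⋂ n ∈ Finset.Ioc 0 N, U n) := by
      rw [hpre, ← hmap, Measure.map_apply htuple]
      exact Set.Finite.measurableSet_biInter (Finset.finite_toSet _) fun n _ => hUm n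
    calc ∏ n ∈ Finset.Ioc 0 N, (1 - p n) = ∏ n ∈ Finset.Ioc 0 N, ν (U n) :=
          Finset.prod_congr rfl fun n hn => (hUmeas n hn).symm
      _ ≤ ν (⋂ n ∈ Finset.Ioc 0 N, U n) := hharris
      _ = P (C N) := hPCeq.symm
  -- analytic part
  set f : ℕ → ℝ := fun k => (Fe k).toReal with hf
  have hf0 : ∀ k, 0 ≤ f k := fun k => ENNReal.toReal_nonneg
  have hf1 : ∀ k, f k ≤ 1 := by
    intro k
    have h := prob_le_one (μ := μ) (s := Iio ((k : ℕ) : ℝ))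
    have := ENNReal.toReal_mono ENNReal.one_ne_top h
    simpa [hf, hFe] using this
  have hIio1 : μ (Iio ((1 : ℕ) : ℝ)) = P {ω | R₀ ω < 1} := by
    rw [hμ, Measure.map_apply hmeas₀ measurableSet_Iio]
    congr 1
    ext ω; simp
  have hfa : f 1 < 1 := by
    have hlt : μ (Iio ((1 : ℕ) : ℝ)) < 1 := by rw [hIio1]; exact h1
    have := (ENNReal.toReal_lt_toReal (measure_ne_top μ _) ENNReal.one_ne_top).2 hlt
    simpa [hf, hFe] using this
  set L' : ℝ := (1 + L) / 2 with hL'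
  have hL'1 : 1 < L' := by simp only [hL']; linarith
  have hL'L : L' < L := by simp only [hL']; linarith
  have hIci : ∀ n : ℕ, P {ω | (n : ℝ) ≤ R₀ ω} = μ (Ici (n : ℝ)) := by
    intro n
    rw [hμ, Measure.map_apply hmeas₀ measurableSet_Ici]
    rfl
  have hev : ∀ᶠ n : ℕ in atTop, L' < (n : ℝ) * (μ (Ici ((n : ℕ) : ℝ))).toReal := by
    have := hL.eventually (lt_mem_nhds hL'L)
    filter_upwards [this] with n hn
    rwa [hIci n] at hn
  obtain ⟨m, hm⟩ := eventually_atTop.1 hev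
  set n₀ : ℕ := max m 1 with hn₀def
  have hn₀1 : 1 ≤ n₀ := le_max_right m 1
  have hfdecay : ∀ n, n₀ ≤ n → f n ≤ 1 - L' / n := by
    intro n hn
    have hnm : m ≤ n := le_trans (le_max_left m 1) hn
    have hn1 : 1 ≤ n := le_trans hn₀1 hn
    have hnpos : (0 : ℝ) < n := by exact_mod_cast hn1
    have hG := hm n hnm
    have hcompl : μ (Iio ((n : ℕ) : ℝ)) = 1 - μ (Ici ((n : ℕ) : ℝ)) := by
      have h := measure_compl (μ := μ) (s := Ici ((n : ℕ) : ℝ)) measurableSet_Ici (measure_ne_top _ _)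
      rw [compl_Ici, measure_univ] at h
      exact h
    have htoReal : f n = 1 - (μ (Ici ((n : ℕ) : ℝ))).toReal := by
      rw [hf]
      simp only [hFe]
      rw [hcompl, ENNReal.toReal_sub_of_le prob_le_one ENNReal.one_ne_top, ENNReal.toReal_one]
    have hdiv : L' / (n : ℝ) ≤ (μ (Ici ((n : ℕ) : ℝ))).toReal := by
      rw [div_le_iff₀ hnpos]
      calc L' ≤ (n : ℝ) * (μ (Ici ((n : ℕ) : ℝ))).toReal := hG.le
        _ = (μ (Ici ((n : ℕ) : ℝ))).toReal * (n : ℝ) := mul_comm _ _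
    rw [htoReal]
    linarith
  obtain ⟨ε, hε0, hεle⟩ := fw_analytic f hf0 hf1 hfa L' hL'1 n₀ hn₀1 hfdecay
  -- transfer to ennreal
  have hofReal : ∀ N : ℕ, ENNReal.ofReal ε ≤ ∏ n ∈ Finset.Ioc 0 N, (1 - p n) := by
    intro N
    have hp1 : ∀ n, p n ≤ 1 := by
      intro n
      refine Finset.prod_le_one' fun k _ => ?_
      exact prob_le_one
    have hfactor : ∀ n, (1 - p n : ℝ≥0∞).toReal = 1 - ∏ k ∈ Finset.range n, f (k + 1) := by
      intro n
      rw [ENNReal.toReal_sub_of_le (hp1 n) ENNReal.one_ne_top, ENNReal.toReal_one]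
      congr 1
      rw [hp, ENNReal.toReal_prod]
    have hprodne : ∏ n ∈ Finset.Ioc 0 N, (1 - p n) ≠ ∞ := by
      refine ne_top_of_le_ne_top ENNReal.one_ne_top ?_
      refine Finset.prod_le_one' fun n _ => ?_
      exact tsub_le_self
    refine ENNReal.ofReal_le_of_le_toReal ?_
    rw [ENNReal.toReal_prod]
    calc ε ≤ ∏ n ∈ Finset.Ioc 0 N, (1 - ∏ k ∈ Finset.range n, f (k + 1)) := hεle N
      _ = ∏ n ∈ Finset.Ioc 0 N, (1 - p n).toReal :=
          (Finset.prod_congr rfl fun n _ => (hfactor n).symm)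
  -- conclude
  have htend : Tendsto (P ∘ C) atTop (nhds (P (⋂ N, C N))) :=
    tendsto_measure_iInter_atTop (fun N => (hCm N).nullMeasurableSet) hCanti ⟨0, measure_ne_top _ _⟩
  have hliminf : ENNReal.ofReal ε ≤ P (⋂ N, C N) :=
    ge_of_tendsto' htend fun N => le_trans (hofReal N) (hPC N)
  rw [hVC]
  exact lt_of_lt_of_le (ENNReal.ofReal_pos.2 hε0) hliminf
end

section
/- For the homogeneous Firework Process, suppose the sequence n·P(R ≥ n) converges to a limit L as n → ∞. If L < 1, then P(V) = 0. -/
open MeasureTheory ProbabilityTheory Filter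
open scoped ENNReal


lemma my_chung_erdos {Ω : Type*} [MeasurableSpace Ω] (P : Measure Ω) [IsProbabilityMeasure P]
    (E : ℕ → Set Ω) (hE : ∀ n, MeasurableSet (E n)) (t : Finset ℕ) :
    (∑ n ∈ t, P (E n)) ^ 2 ≤ (∑ n ∈ t, ∑ m ∈ t, P (E n ∩ E m)) * P (⋃ n ∈ t, E n) := by
  classical
  set Z : Ω → ℝ≥0∞ := fun ω => ∑ n ∈ t, (E n).indicator 1 ω with hZ
  have hZmeas : Measurable Z := by
    apply Finset.measurable_sum
    intro n _
    exact (measurable_one.indicator (hE n))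
  have hU : MeasurableSet (⋃ n ∈ t, E n) := MeasurableSet.biUnion t.countable_toSet (fun n _ => hE n)
  have hind : Measurable ((⋃ n ∈ t, E n).indicator (1 : Ω → ℝ≥0∞)) :=
    measurable_one.indicator hU
  have hZeq : (fun ω => Z ω) = fun ω => Z ω * (⋃ n ∈ t, E n).indicator 1 ω := by
    funext ω
    by_cases h : ω ∈ ⋃ n ∈ t, E n
    · simp [Set.indicator_of_mem h]
    · have : Z ω = 0 := by
        apply Finset.sum_eq_zero
        intro n hn
        have : ω ∉ E n := fun hmem => h (Set.mem_biUnion hn hmem)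
        simp [Set.indicator_of_notMem this]
      simp [this]
  have hint1 : ∫⁻ ω, Z ω ∂P = ∑ n ∈ t, P (E n) := by
    rw [hZ]
    rw [lintegral_finset_sum _ (fun n _ => measurable_one.indicator (hE n))]
    exact Finset.sum_congr rfl fun n _ => lintegral_indicator_one (hE n)
  have hint2 : ∫⁻ ω, Z ω ^ (2:ℝ) ∂P = ∑ n ∈ t, ∑ m ∈ t, P (E n ∩ E m) := by
    have hsq : ∀ ω, Z ω ^ (2:ℝ) = ∑ n ∈ t, ∑ m ∈ t, (E n ∩ E m).indicator 1 ω := by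
      intro ω
      rw [show (2:ℝ) = ((2:ℕ):ℝ) by norm_num, ENNReal.rpow_natCast, sq]
      rw [hZ, Finset.sum_mul_sum]
      refine Finset.sum_congr rfl fun n _ => Finset.sum_congr rfl fun m _ => ?_
      rw [Set.inter_indicator_one]
      rfl
    simp_rw [hsq]
    rw [lintegral_finset_sum _ (fun n _ => by
      exact Finset.measurable_sum _ (fun m _ => measurable_one.indicator ((hE n).inter (hE m))))]
    refine Finset.sum_congr rfl fun n _ => ?_
    rw [lintegral_finset_sum _ (fun m _ => measurable_one.indicator ((hE n).inter (hE m)))]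
    exact Finset.sum_congr rfl fun m _ => lintegral_indicator_one ((hE n).inter (hE m))
  have hind2 : ∫⁻ ω, ((⋃ n ∈ t, E n).indicator (1:Ω→ℝ≥0∞)) ω ^ (2:ℝ) ∂P = P (⋃ n ∈ t, E n) := by
    have : ∀ ω, ((⋃ n ∈ t, E n).indicator (1:Ω→ℝ≥0∞)) ω ^ (2:ℝ)
        = (⋃ n ∈ t, E n).indicator 1 ω := by
      intro ω
      by_cases h : ω ∈ ⋃ n ∈ t, E n
      · simp [Set.indicator_of_mem h, ENNReal.one_rpow]
      · simp [Set.indicator_of_notMem h, ENNReal.zero_rpow_of_pos]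
    simp_rw [this]
    exact lintegral_indicator_one hU
  -- Hölder
  have hconj : (2:ℝ).HolderConjugate 2 := Real.HolderConjugate.two_two
  have hholder := ENNReal.lintegral_mul_le_Lp_mul_Lq P hconj hZmeas.aemeasurable hind.aemeasurable
  have hlhs : ∫⁻ a, (Z * (⋃ n ∈ t, E n).indicator 1 : Ω → ℝ≥0∞) a ∂P = ∑ n ∈ t, P (E n) := by
    rw [← hint1]
    exact lintegral_congr fun a => (congrFun hZeq a).symm
  rw [hlhs, hint2, hind2] at hholder
  -- square both sides
  have h2 : ((∑ n ∈ t, ∑ m ∈ t, P (E n ∩ E m)) ^ (1/(2:ℝ)) * P (⋃ n ∈ t, E n) ^ (1/(2:ℝ))) ^ 2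
      = (∑ n ∈ t, ∑ m ∈ t, P (E n ∩ E m)) * P (⋃ n ∈ t, E n) := by
    rw [mul_pow, ← ENNReal.rpow_natCast (_ ^ (1/(2:ℝ))) 2, ← ENNReal.rpow_natCast (_ ^ (1/(2:ℝ))) 2,
      ← ENNReal.rpow_mul, ← ENNReal.rpow_mul]
    norm_num
  calc (∑ n ∈ t, P (E n)) ^ 2
      ≤ ((∑ n ∈ t, ∑ m ∈ t, P (E n ∩ E m)) ^ (1/(2:ℝ)) * P (⋃ n ∈ t, E n) ^ (1/(2:ℝ))) ^ 2 :=
        pow_le_pow_left' hholder 2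
    _ = _ := h2


noncomputable def fwQ {Ω : Type*} [MeasurableSpace Ω] (P : Measure Ω) (R₀ : Ω → ℝ) : ℕ → ℝ≥0∞ :=
  fun k => P {ω | R₀ ω < (k : ℝ)}

noncomputable def fwU {Ω : Type*} [MeasurableSpace Ω] (P : Measure Ω) (R₀ : Ω → ℝ) : ℕ → ℝ≥0∞ :=
  fun n => ∏ k ∈ Finset.range n, fwQ P R₀ (k + 1)

def fwE {Ω : Type*} (R : ℕ → Ω → ℝ) : ℕ → Set Ω :=
  fun n => ⋂ i ∈ Finset.range n, {ω | R i ω < ((n - i : ℕ) : ℝ)}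

lemma my_prod_lemma {Ω : Type*} [MeasurableSpace Ω] (P : Measure Ω) [IsProbabilityMeasure P]
    (R : ℕ → Ω → ℝ) (R₀ : Ω → ℝ)
    (hindep : iIndepFun R P)
    (hid : ∀ i, IdentDistrib (R i) R₀ P P)
    (s : Finset ℕ) (c : ℕ → ℝ) :
    P (⋂ i ∈ s, {ω | R i ω < c i}) = ∏ i ∈ s, P {ω | R₀ ω < c i} := by
  have h1 : P (⋂ i ∈ s, {ω | R i ω < c i}) = ∏ i ∈ s, P {ω | R i ω < c i} := by
    refine hindep.meas_biInter ?_
    intro i _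
    exact ⟨Set.Iio (c i), measurableSet_Iio, rfl⟩
  rw [h1]
  exact Finset.prod_congr rfl fun i _ => (hid i).measure_mem_eq (measurableSet_Iio (a := c i))

lemma my_reflect {Ω : Type*} [MeasurableSpace Ω] (P : Measure Ω) (R₀ : Ω → ℝ) (n : ℕ) :
    ∏ i ∈ Finset.range n, fwQ P R₀ (n - i) = fwU P R₀ n := by
  rw [fwU, ← Finset.prod_range_reflect (fun j => fwQ P R₀ (j + 1)) n]
  refine Finset.prod_congr rfl fun i hi => ?_
  rw [Finset.mem_range] at hi
  congr 1
  omega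

lemma my_reflect_Ico {Ω : Type*} [MeasurableSpace Ω] (P : Measure Ω) (R₀ : Ω → ℝ) {n m : ℕ}
    (h : n ≤ m) :
    ∏ i ∈ Finset.Ico n m, fwQ P R₀ (m - i) = fwU P R₀ (m - n) := by
  rw [Finset.prod_Ico_eq_prod_range]
  rw [← my_reflect P R₀ (m - n)]
  refine Finset.prod_congr rfl fun j hj => ?_
  rw [Finset.mem_range] at hj
  congr 1
  omega

lemma my_gap_meas {Ω : Type*} [MeasurableSpace Ω] (P : Measure Ω) [IsProbabilityMeasure P]
    (R : ℕ → Ω → ℝ) (R₀ : Ω → ℝ)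
    (hindep : iIndepFun R P)
    (hid : ∀ i, IdentDistrib (R i) R₀ P P) (n : ℕ) :
    P (fwE R n) = fwU P R₀ n := by
  rw [fwE, my_prod_lemma P R R₀ hindep hid (Finset.range n) (fun i => ((n - i : ℕ) : ℝ))]
  rw [← my_reflect P R₀ n]
  rfl

lemma my_gap_pair {Ω : Type*} [MeasurableSpace Ω] (P : Measure Ω) [IsProbabilityMeasure P]
    (R : ℕ → Ω → ℝ) (R₀ : Ω → ℝ)
    (hindep : iIndepFun R P)
    (hid : ∀ i, IdentDistrib (R i) R₀ P P) {n m : ℕ} (h : n < m) :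
    P (fwE R n ∩ fwE R m) ≤ fwU P R₀ n * fwU P R₀ (m - n) := by
  classical
  set c : ℕ → ℕ := fun i => if i < n then n - i else m - i with hc
  have hsub : fwE R n ∩ fwE R m ⊆ ⋂ i ∈ Finset.range m, {ω | R i ω < ((c i : ℕ) : ℝ)} := by
    rintro ω ⟨h1, h2⟩
    simp only [fwE, Set.mem_iInter, Finset.mem_range, Set.mem_setOf_eq] at h1 h2 ⊢
    intro i him
    by_cases hin : i < n
    · simp only [hc, if_pos hin]
      exact h1 i hin
    · simp only [hc, if_neg hin]
      exact h2 i him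
  refine le_trans (measure_mono hsub) ?_
  rw [my_prod_lemma P R R₀ hindep hid (Finset.range m) (fun i => ((c i : ℕ) : ℝ))]
  have hsplit : (Finset.range m) = Finset.Ico 0 m := by rw [Finset.range_eq_Ico]
  have : ∏ i ∈ Finset.range m, P {ω | R₀ ω < ((c i : ℕ) : ℝ)}
      = (∏ i ∈ Finset.Ico 0 n, fwQ P R₀ (c i)) * ∏ i ∈ Finset.Ico n m, fwQ P R₀ (c i) := by
    rw [hsplit, ← Finset.prod_Ico_consecutive _ (Nat.zero_le n) h.le]
    rfl
  rw [this]
  have e1 : ∏ i ∈ Finset.Ico 0 n, fwQ P R₀ (c i) = fwU P R₀ n := by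
    rw [← Finset.range_eq_Ico, ← my_reflect P R₀ n]
    refine Finset.prod_congr rfl fun i hi => ?_
    rw [Finset.mem_range] at hi
    rw [hc]
    simp [if_pos hi]
  have e2 : ∏ i ∈ Finset.Ico n m, fwQ P R₀ (c i) = fwU P R₀ (m - n) := by
    rw [← my_reflect_Ico P R₀ h.le]
    refine Finset.prod_congr rfl fun i hi => ?_
    rw [Finset.mem_Ico] at hi
    rw [hc]
    simp [if_neg (not_lt.mpr hi.1)]
  rw [e1, e2]

lemma my_tele (K : ℕ) (hK : 1 ≤ K) : ∀ n, K ≤ n →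
    ∏ k ∈ Finset.Ico K n, ((k : ℝ) / (k + 1)) = K / n := by
  intro n hn
  induction n with
  | zero => omega
  | succ n ih =>
    rcases Nat.lt_or_ge K (n + 1) with h | h
    · have hn' : K ≤ n := by omega
      rw [Finset.prod_Ico_succ_top hn', ih hn']
      have h0 : (n : ℝ) ≠ 0 := Nat.cast_ne_zero.mpr (by omega)
      have h1 : (n : ℝ) + 1 ≠ 0 := by positivity
      push_cast
      field_simp
    · have : K = n + 1 := by omega
      subst this
      rw [Finset.Ico_self, Finset.prod_empty]
      rw [div_self (by positivity)]

lemma my_divergent {Ω : Type*} [MeasurableSpace Ω] (P : Measure Ω) [IsProbabilityMeasure P]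
    (R₀ : Ω → ℝ) (hmeas₀ : Measurable R₀)
    (h0 : 0 < P {ω | R₀ ω < 1})
    (L : ℝ)
    (hL : Tendsto (fun n : ℕ => (n : ℝ) * (P {ω | (n : ℝ) ≤ R₀ ω}).toReal) atTop (nhds L))
    (hL1 : L < 1) :
    Tendsto (fun M => ∑ n ∈ Finset.range M, (fwU P R₀ n).toReal) atTop atTop := by
  set p : ℕ → ℝ := fun k => (P {ω | (k : ℝ) ≤ R₀ ω}).toReal with hp
  set qr : ℕ → ℝ := fun k => (fwQ P R₀ k).toReal with hqr
  set ur : ℕ → ℝ := fun n => (fwU P R₀ n).toReal with hur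
  have hqcompl : ∀ k : ℕ, {ω | R₀ ω < (k:ℝ)} = {ω | (k:ℝ) ≤ R₀ ω}ᶜ := by
    intro k; ext ω; simp [not_le]
  have hmeasIci : ∀ k : ℕ, MeasurableSet {ω | (k:ℝ) ≤ R₀ ω} :=
    fun k => hmeas₀ measurableSet_Ici
  have hq_eq : ∀ k : ℕ, qr k = 1 - p k := by
    intro k
    have : P {ω | R₀ ω < (k:ℝ)} = 1 - P {ω | (k:ℝ) ≤ R₀ ω} := by
      rw [hqcompl k, prob_compl_eq_one_sub (hmeasIci k)]
    rw [hqr]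
    simp only [fwQ, this]
    rw [ENNReal.toReal_sub_of_le prob_le_one ENNReal.one_ne_top]
    simp [hp]
  have hq_nonneg : ∀ k, 0 ≤ qr k := fun k => ENNReal.toReal_nonneg
  have hq1_pos : 0 < qr 1 := by
    rw [hqr]
    simp only [fwQ]
    rw [ENNReal.toReal_pos_iff]
    constructor
    · simpa using h0
    · exact lt_of_le_of_lt prob_le_one (by norm_num)
  have hq1_le : ∀ k : ℕ, 1 ≤ k → qr 1 ≤ qr k := by
    intro k hk
    apply ENNReal.toReal_mono (measure_ne_top _ _)
    apply measure_mono
    intro ω hω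
    simp only [Set.mem_setOf_eq] at hω ⊢
    calc R₀ ω < ((1:ℕ):ℝ) := hω
      _ ≤ (k:ℝ) := by exact_mod_cast hk
  have hur_eq : ∀ n, ur n = ∏ k ∈ Finset.range n, qr (k + 1) := by
    intro n
    rw [hur]
    simp only [fwU]
    rw [ENNReal.toReal_prod]
  -- choose c
  set c : ℝ := (L + 1) / 2 with hc
  have hL0 : 0 ≤ L := ge_of_tendsto' hL (fun n => by positivity) |> fun h => by
    exact h
  have hc0 : 0 < c := by rw [hc]; linarith
  have hc1 : c < 1 := by rw [hc]; linarith
  have hLc : L < c := by rw [hc]; linarith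
  -- eventually n * p n ≤ c
  have hev : ∀ᶠ n : ℕ in atTop, (n : ℝ) * p n < c := hL.eventually_lt_const hLc
  obtain ⟨K₀, hK₀⟩ := hev.exists_forall_of_atTop
  set K : ℕ := max K₀ 1 with hK
  have hK1 : 1 ≤ K := le_max_right _ _
  have hKbound : ∀ k : ℕ, K ≤ k → (k : ℝ) * p k < c := fun k hk =>
    hK₀ k (le_trans (le_max_left _ _) hk)
  -- key lower bound qr k ≥ ((k-1)/k)^c for k ≥ K... stated for k+1 with k ≥ K
  have hqlow : ∀ k : ℕ, K ≤ k → ((k : ℝ) / (k + 1)) ^ c ≤ qr (k + 1) := by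
    intro k hk
    have hk1 : (1:ℝ) ≤ (k:ℝ) + 1 := by
      have : (0:ℝ) ≤ (k:ℝ) := Nat.cast_nonneg k
      linarith
    have hkpos : (0:ℝ) < (k:ℝ) + 1 := by linarith
    have hpk : (k + 1 : ℝ) * p (k + 1) < c := by
      have := hKbound (k+1) (by omega)
      push_cast at this ⊢
      convert this using 2
    have hple : p (k + 1) ≤ c / ((k:ℝ) + 1) := by
      rw [le_div_iff₀ hkpos]
      rw [mul_comm]
      exact le_of_lt hpk
    have hbern : ((k : ℝ) / (k + 1)) ^ c ≤ 1 - c / ((k:ℝ)+1) := by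
      have hs : (-1 : ℝ) ≤ -(1 / ((k:ℝ)+1)) := by
        rw [neg_le_neg_iff]
        rw [div_le_one hkpos]
        linarith
      have := rpow_one_add_le_one_add_mul_self hs hc0.le hc1.le
      have heq : (1 : ℝ) + -(1 / ((k:ℝ)+1)) = (k:ℝ) / ((k:ℝ)+1) := by
        field_simp
        ring
      rw [heq] at this
      calc ((k : ℝ) / (k + 1)) ^ c ≤ 1 + c * -(1 / ((k:ℝ)+1)) := this
        _ = 1 - c / ((k:ℝ)+1) := by ring
    calc ((k : ℝ) / (k + 1)) ^ c ≤ 1 - c / ((k:ℝ)+1) := hbern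
      _ ≤ 1 - p (k+1) := by
          have : ((k:ℕ) + 1 : ℝ) = (k:ℝ) + 1 := by push_cast; ring
          linarith [hple]
      _ = qr (k + 1) := (hq_eq (k+1)).symm
  -- lower bound for ur n
  set A : ℝ := ∏ k ∈ Finset.range K, qr (k + 1) with hA
  have hApos : 0 < A := Finset.prod_pos fun k _ => lt_of_lt_of_le hq1_pos (hq1_le (k+1) (by omega))
  have hurlow : ∀ n : ℕ, K ≤ n → A * ((K:ℝ)/n) ^ c ≤ ur n := by
    intro n hn
    rw [hur_eq]
    rw [← Finset.prod_range_mul_prod_Ico _ hn]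
    rw [← hA]
    have h2 : ((K:ℝ)/n) ^ c ≤ ∏ k ∈ Finset.Ico K n, qr (k + 1) := by
      have := my_tele K hK1 n hn
      calc ((K:ℝ)/n) ^ c = (∏ k ∈ Finset.Ico K n, ((k : ℝ) / (k + 1))) ^ c := by rw [this]
        _ = ∏ k ∈ Finset.Ico K n, ((k : ℝ) / (k + 1)) ^ c := by
            rw [← Real.finset_prod_rpow _ _ (fun k _ => by positivity) c]
        _ ≤ ∏ k ∈ Finset.Ico K n, qr (k + 1) := by
            apply Finset.prod_le_prod
            · intro k _; positivity
            · intro k hk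
              exact hqlow k (Finset.mem_Ico.mp hk).1
    calc A * ((K:ℝ)/n) ^ c ≤ A * ∏ k ∈ Finset.Ico K n, qr (k + 1) := by
          apply mul_le_mul_of_nonneg_left h2 hApos.le
      _ ≤ _ := le_refl _
  -- not summable
  have hnotsum : ¬ Summable ur := by
    intro hsum
    have h1 : Summable (fun n => ur (n + K)) := (summable_nat_add_iff K).mpr hsum
    have h2 : Summable (fun n : ℕ => A * ((K:ℝ)/(n + K)) ^ c) := by
      apply h1.of_nonneg_of_le
      · intro n; positivity
      · intro n
        have := hurlow (n + K) (by omega)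
        convert this using 3
        push_cast
        ring
    have h3 : Summable (fun n : ℕ => ((K:ℝ)/(n + K)) ^ c) := by
      have := h2.div_const A
      refine this.congr fun n => Eq.symm ?_
      field_simp
    have h4 : Summable (fun n : ℕ => ((n + K : ℕ):ℝ) ^ (-c)) := by
      have hKpos : (0:ℝ) < K := by exact_mod_cast hK1
      have := h3.mul_left ((K:ℝ) ^ (-c))
      refine this.congr fun n => Eq.symm ?_
      have hnK : (0:ℝ) < (n:ℝ) + K := by positivity
      rw [Real.div_rpow (by positivity) (by positivity)]
      rw [Real.rpow_neg (by positivity), Real.rpow_neg hKpos.le]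
      push_cast
      field_simp
    have h5 : Summable (fun n : ℕ => (n:ℝ) ^ (-c)) := by
      rw [← summable_nat_add_iff K]
      convert h4 using 3
    rw [Real.summable_nat_rpow] at h5
    linarith
  -- conclude
  have hnn : ∀ n, 0 ≤ ur n := fun n => ENNReal.toReal_nonneg
  rw [← not_summable_iff_tendsto_nat_atTop_of_nonneg hnn]
  exact hnotsum

def fwE' {Ω : Type*} (R : ℕ → Ω → ℝ) (N : ℕ) : ℕ → Set Ω :=
  fun n => ⋂ i ∈ Finset.Ico N n, {ω | R i ω < ((n - i : ℕ) : ℝ)}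

lemma fwE_tail_eq {Ω : Type*} (R : ℕ → Ω → ℝ) (N : ℕ) :
    limsup (fwE R) atTop = limsup (fwE' R N) atTop := by
  ext ω
  simp only [mem_limsup_iff_frequently_mem]
  constructor
  · intro hf
    refine hf.mono ?_
    intro n hn
    simp only [fwE, fwE', Set.mem_iInter, Finset.mem_range, Finset.mem_Ico,
      Set.mem_setOf_eq] at hn ⊢
    intro i hi
    exact hn i hi.2
  · intro hf
    have hev : ∀ᶠ n in atTop, ∀ i < N, R i ω < ((n - i : ℕ) : ℝ) := by
      rw [eventually_atTop]
      refine ⟨N + (Finset.range N).sup (fun i => ⌈R i ω⌉₊) + 1, ?_⟩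
      intro n hn i hi
      have hsup : ⌈R i ω⌉₊ ≤ (Finset.range N).sup (fun i => ⌈R i ω⌉₊) :=
        Finset.le_sup (f := fun i => ⌈R i ω⌉₊) (Finset.mem_range.mpr hi)
      have hni : ⌈R i ω⌉₊ + 1 ≤ n - i := by omega
      calc R i ω ≤ (⌈R i ω⌉₊ : ℝ) := Nat.le_ceil _
        _ < ((⌈R i ω⌉₊ + 1 : ℕ) : ℝ) := by exact_mod_cast Nat.lt_succ_self _
        _ ≤ ((n - i : ℕ) : ℝ) := by exact_mod_cast hni
    refine (hf.and_eventually hev).mono ?_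
    rintro n ⟨h1, h2⟩
    simp only [fwE, fwE', Set.mem_iInter, Finset.mem_range, Finset.mem_Ico,
      Set.mem_setOf_eq] at h1 ⊢
    intro i hi
    by_cases hiN : i < N
    · exact h2 i hiN
    · exact h1 i ⟨not_lt.mp hiN, hi⟩

lemma my_zero_one {Ω : Type*} [MeasurableSpace Ω] (P : Measure Ω) [IsProbabilityMeasure P]
    (R : ℕ → Ω → ℝ) (hmeas : ∀ i, Measurable (R i))
    (hindep : iIndepFun R P) :
    P (limsup (fwE R) atTop) = 0 ∨ P (limsup (fwE R) atTop) = 1 := by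
  set s : ℕ → MeasurableSpace Ω := fun i => MeasurableSpace.comap (R i) inferInstance with hs
  have h_le : ∀ n, s n ≤ _ := fun n => (hmeas n).comap_le
  have h_indep : iIndep s P := hindep.iIndep
  refine measure_zero_or_one_of_measurableSet_limsup_atTop h_le h_indep ?_
  rw [limsup_eq_iInf_iSup_of_nat, MeasurableSpace.measurableSet_iInf]
  intro N
  rw [fwE_tail_eq R N]
  have hbasic : ∀ i, N ≤ i → ∀ c : ℝ, MeasurableSet[⨆ n, ⨆ (_ : n ≥ N), s n] {ω | R i ω < c} := by
    intro i hi c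
    have h1 : MeasurableSet[s i] {ω | R i ω < c} := ⟨Set.Iio c, measurableSet_Iio, rfl⟩
    have h2 : s i ≤ ⨆ n, ⨆ (_ : n ≥ N), s n := le_iSup₂ (f := fun n (_ : n ≥ N) => s n) i hi
    exact h2 _ h1
  have hE' : ∀ n, MeasurableSet[⨆ n, ⨆ (_ : n ≥ N), s n] (fwE' R N n) := by
    intro n
    refine MeasurableSet.biInter (Finset.Ico N n).countable_toSet ?_
    intro i hi
    exact hbasic i (Finset.mem_Ico.mp (Finset.mem_coe.mp hi)).1 _
  rw [limsup_eq_iInf_iSup_of_nat]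
  refine MeasurableSet.iInter fun M => ?_
  have : ⨆ i, ⨆ (_ : i ≥ M), fwE' R N i = ⋃ i, ⋃ (_ : i ≥ M), fwE' R N i := rfl
  rw [this]
  exact MeasurableSet.iUnion fun i => MeasurableSet.iUnion fun _ => hE' i

lemma my_Q_bound {Ω : Type*} [MeasurableSpace Ω] (P : Measure Ω) [IsProbabilityMeasure P]
    (R : ℕ → Ω → ℝ) (R₀ : Ω → ℝ)
    (hindep : iIndepFun R P)
    (hid : ∀ i, IdentDistrib (R i) R₀ P P) (N M : ℕ) :
    ∑ n ∈ Finset.Ico N M, ∑ m ∈ Finset.Ico N M, P (fwE R n ∩ fwE R m)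
      ≤ (∑ n ∈ Finset.Ico N M, fwU P R₀ n) * (1 + 2 * ∑ k ∈ Finset.range M, fwU P R₀ k) := by
  classical
  set u := fwU P R₀ with hu
  set t := Finset.Ico N M with ht
  set W := ∑ k ∈ Finset.range M, u k with hW
  have hWb : ∀ n, n ∈ t → ∑ m ∈ t.filter (n < ·), u (m - n) ≤ W := by
    intro n _
    have hinj : ∀ x ∈ t.filter (n < ·), ∀ y ∈ t.filter (n < ·), x - n = y - n → x = y := by
      intro x hx y hy hxy
      rw [Finset.mem_filter] at hx hy
      omega
    rw [← Finset.sum_image (g := fun m => m - n) (f := u) hinj]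
    apply Finset.sum_le_sum_of_subset
    intro k hk
    rw [Finset.mem_image] at hk
    obtain ⟨m, hm, rfl⟩ := hk
    rw [Finset.mem_filter, ht, Finset.mem_Ico] at hm
    rw [Finset.mem_range]
    omega
  have key1 : ∀ n ∈ t, ∑ m ∈ t.filter (n < ·), P (fwE R n ∩ fwE R m) ≤ u n * W := by
    intro n hn
    calc ∑ m ∈ t.filter (n < ·), P (fwE R n ∩ fwE R m)
        ≤ ∑ m ∈ t.filter (n < ·), u n * u (m - n) := by
          apply Finset.sum_le_sum
          intro m hm
          exact my_gap_pair P R R₀ hindep hid (Finset.mem_filter.mp hm).2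
      _ = u n * ∑ m ∈ t.filter (n < ·), u (m - n) := by rw [Finset.mul_sum]
      _ ≤ u n * W := mul_le_mul_right (hWb n hn) _
  have key2 : ∑ n ∈ t, ∑ m ∈ t.filter (· < n), P (fwE R n ∩ fwE R m)
      ≤ (∑ n ∈ t, u n) * W := by
    have swap : ∑ n ∈ t, ∑ m ∈ t.filter (· < n), P (fwE R n ∩ fwE R m)
        = ∑ m ∈ t, ∑ n ∈ t.filter (m < ·), P (fwE R n ∩ fwE R m) := by
      rw [show (∑ n ∈ t, ∑ m ∈ t.filter (· < n), P (fwE R n ∩ fwE R m))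
          = ∑ n ∈ t, ∑ m ∈ t, if m < n then P (fwE R n ∩ fwE R m) else 0 by
        refine Finset.sum_congr rfl fun n _ => ?_
        rw [Finset.sum_filter]]
      rw [Finset.sum_comm]
      refine Finset.sum_congr rfl fun m _ => ?_
      rw [Finset.sum_filter]
    rw [swap]
    calc ∑ m ∈ t, ∑ n ∈ t.filter (m < ·), P (fwE R n ∩ fwE R m)
        = ∑ m ∈ t, ∑ n ∈ t.filter (m < ·), P (fwE R m ∩ fwE R n) := by
          refine Finset.sum_congr rfl fun m _ => Finset.sum_congr rfl fun n _ => ?_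
          rw [Set.inter_comm]
      _ ≤ ∑ m ∈ t, u m * W := Finset.sum_le_sum (fun m hm => key1 m hm)
      _ = (∑ m ∈ t, u m) * W := by rw [Finset.sum_mul]
  -- split the double sum
  have hsplit : ∀ n ∈ t, ∑ m ∈ t, P (fwE R n ∩ fwE R m)
      = (∑ m ∈ t.filter (n < ·), P (fwE R n ∩ fwE R m)) + u n
        + ∑ m ∈ t.filter (· < n), P (fwE R n ∩ fwE R m) := by
    intro n hn
    rw [← Finset.sum_filter_add_sum_filter_not t (n < ·) (fun m => P (fwE R n ∩ fwE R m))]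
    have : t.filter (fun m => ¬ n < m) = insert n (t.filter (· < n)) := by
      ext m
      simp only [Finset.mem_filter, Finset.mem_insert, not_lt]
      constructor
      · rintro ⟨hm, hle⟩
        rcases eq_or_lt_of_le hle with h | h
        · left; omega
        · right; exact ⟨hm, h⟩
      · rintro (rfl | ⟨hm, hlt⟩)
        · exact ⟨hn, le_refl _⟩
        · exact ⟨hm, hlt.le⟩
    rw [this, Finset.sum_insert (by simp), Set.inter_self, my_gap_meas P R R₀ hindep hid n,
      ← add_assoc]
  calc ∑ n ∈ t, ∑ m ∈ t, P (fwE R n ∩ fwE R m)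
      = ∑ n ∈ t, ((∑ m ∈ t.filter (n < ·), P (fwE R n ∩ fwE R m)) + u n
          + ∑ m ∈ t.filter (· < n), P (fwE R n ∩ fwE R m)) :=
        Finset.sum_congr rfl hsplit
    _ = (∑ n ∈ t, ∑ m ∈ t.filter (n < ·), P (fwE R n ∩ fwE R m)) + (∑ n ∈ t, u n)
          + ∑ n ∈ t, ∑ m ∈ t.filter (· < n), P (fwE R n ∩ fwE R m) := by
        rw [Finset.sum_add_distrib, Finset.sum_add_distrib]
    _ ≤ (∑ n ∈ t, u n) * W + (∑ n ∈ t, u n) + (∑ n ∈ t, u n) * W := by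
        refine add_le_add (add_le_add ?_ le_rfl) key2
        calc ∑ n ∈ t, ∑ m ∈ t.filter (n < ·), P (fwE R n ∩ fwE R m)
              ≤ ∑ n ∈ t, u n * W := Finset.sum_le_sum key1
            _ = (∑ n ∈ t, u n) * W := by rw [Finset.sum_mul]
    _ = (∑ n ∈ t, u n) * (1 + 2 * W) := by ring

/-- **Homogeneous Firework Process.** If `n·P(R ≥ n) → L` with `L < 1`, then `P(V) = 0`. -/
theorem firework_homogeneous_death_of_limit_lt_one
    {Ω : Type*} [MeasurableSpace Ω] (P : Measure Ω) [IsProbabilityMeasure P]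
    (R : ℕ → Ω → ℝ) (R₀ : Ω → ℝ)
    (hmeas : ∀ i, Measurable (R i)) (hmeas₀ : Measurable R₀)
    (hnonneg : ∀ i ω, 0 ≤ R i ω)
    (hindep : iIndepFun R P)
    (hid : ∀ i, IdentDistrib (R i) R₀ P P)
    (h0 : 0 < P {ω | R₀ ω < 1}) (h1 : P {ω | R₀ ω < 1} < 1)
    (V : Set Ω)
    (hV : V = ⋂ (n : ℕ) (_ : 1 ≤ n), ⋃ i ∈ Finset.range n,
      {ω | ((n - i : ℕ) : ℝ) ≤ R i ω})
    (L : ℝ)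
    (hL : Tendsto (fun n : ℕ => (n : ℝ) * (P {ω | (n : ℝ) ≤ R₀ ω}).toReal)
      atTop (nhds L))
    (hL1 : L < 1) :
    P V = 0 := by
  classical
  have hEmeas : ∀ n, MeasurableSet (fwE R n) := by
    intro n
    exact MeasurableSet.iInter fun i => MeasurableSet.iInter fun _ =>
      measurableSet_lt (hmeas i) measurable_const
  have hu_meas : ∀ n, P (fwE R n) = fwU P R₀ n := my_gap_meas P R R₀ hindep hid
  have hdiv := my_divergent P R₀ hmeas₀ h0 L hL hL1
  set T : ℕ → ℝ := fun M => ∑ n ∈ Finset.range M, (fwU P R₀ n).toReal with hT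
  have hTnonneg : ∀ N, 0 ≤ T N := fun N => Finset.sum_nonneg fun n _ => ENNReal.toReal_nonneg
  have hule : ∀ n, fwU P R₀ n ≤ 1 := fun n =>
    Finset.prod_le_one (fun _ _ => zero_le) (fun k _ => prob_le_one)
  -- the one-third bound
  have hthird : ∀ N : ℕ, ENNReal.ofReal (1/3) ≤ P (⋃ n, ⋃ (_ : n ≥ N), fwE R n) := by
    intro N
    obtain ⟨M, hM⟩ := (hdiv.eventually_ge_atTop (1 + 3 * T N)).exists
    have hNM : N ≤ M := by
      by_contra hcon
      push_neg at hcon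
      have hle : T M ≤ T N := Finset.sum_le_sum_of_subset_of_nonneg
        (Finset.range_subset_range.mpr hcon.le) (fun i _ _ => ENNReal.toReal_nonneg)
      have := hTnonneg N
      linarith
    set t := Finset.Ico N M with htdef
    set S := ∑ n ∈ t, fwU P R₀ n with hSdef
    set W := ∑ k ∈ Finset.range M, fwU P R₀ k with hWdef
    have hCE := my_chung_erdos P (fwE R) hEmeas t
    have hS_eq : ∑ n ∈ t, P (fwE R n) = S := Finset.sum_congr rfl (fun n _ => hu_meas n)
    have hQ := my_Q_bound P R R₀ hindep hid N M
    have hmain : S^2 ≤ S * (1 + 2*W) * P (⋃ n ∈ t, fwE R n) := by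
      calc S^2 = (∑ n ∈ t, P (fwE R n))^2 := by rw [hS_eq]
        _ ≤ (∑ n ∈ t, ∑ m ∈ t, P (fwE R n ∩ fwE R m)) * P (⋃ n ∈ t, fwE R n) := hCE
        _ ≤ S * (1 + 2*W) * P (⋃ n ∈ t, fwE R n) := mul_le_mul_left hQ _
    have hSfin : S ≠ ∞ := by
      refine (ENNReal.sum_lt_top.mpr fun n _ => ?_).ne
      exact lt_of_le_of_lt (hule n) (by norm_num)
    have hWfin : W ≠ ∞ := by
      refine (ENNReal.sum_lt_top.mpr fun n _ => ?_).ne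
      exact lt_of_le_of_lt (hule n) (by norm_num)
    set Sr := S.toReal with hSrdef
    set Wr := W.toReal with hWrdef
    have hSr : Sr = T M - T N := by
      rw [hSrdef, hSdef, ENNReal.toReal_sum (fun n _ => (lt_of_le_of_lt (hule n) (by norm_num)).ne)]
      rw [htdef, hT]
      exact Finset.sum_Ico_eq_sub _ hNM
    have hWr : Wr = T M := by
      rw [hWrdef, hWdef, ENNReal.toReal_sum (fun n _ => (lt_of_le_of_lt (hule n) (by norm_num)).ne)]
    have hWr0 : 0 ≤ Wr := ENNReal.toReal_nonneg
    have hcond : 1 + 2 * Wr ≤ 3 * Sr := by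
      rw [hSr, hWr]
      linarith
    have hSrpos : 0 < Sr := by linarith
    have hPUfin : P (⋃ n ∈ t, fwE R n) ≠ ∞ := measure_ne_top _ _
    have hPUr0 : 0 ≤ (P (⋃ n ∈ t, fwE R n)).toReal := ENNReal.toReal_nonneg
    have hreal : Sr^2 ≤ Sr * (1+2*Wr) * (P (⋃ n ∈ t, fwE R n)).toReal := by
      have hfin : S * (1 + 2*W) * P (⋃ n ∈ t, fwE R n) ≠ ∞ := by
        apply ENNReal.mul_ne_top
        apply ENNReal.mul_ne_top hSfin
        · exact ENNReal.add_ne_top.mpr ⟨ENNReal.one_ne_top, ENNReal.mul_ne_top (by norm_num) hWfin⟩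
        · exact hPUfin
      have := ENNReal.toReal_mono hfin hmain
      rw [ENNReal.toReal_pow] at this
      rw [ENNReal.toReal_mul, ENNReal.toReal_mul,
        ENNReal.toReal_add ENNReal.one_ne_top (ENNReal.mul_ne_top (by norm_num) hWfin),
        ENNReal.toReal_mul] at this
      simpa using this
    have hPU : 1/3 ≤ (P (⋃ n ∈ t, fwE R n)).toReal := by
      set PUr := (P (⋃ n ∈ t, fwE R n)).toReal with hPUrdef
      have h5 : Sr * (1 + 2*Wr) * PUr ≤ Sr * (3 * Sr) * PUr :=
        mul_le_mul_of_nonneg_right (mul_le_mul_of_nonneg_left hcond hSrpos.le) hPUr0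
      have h6 : Sr^2 ≤ Sr^2 * (3 * PUr) := by nlinarith [hreal, h5]
      have hS2 : 0 < Sr^2 := pow_pos hSrpos 2
      nlinarith [h6, hS2]
    calc ENNReal.ofReal (1/3) ≤ P (⋃ n ∈ t, fwE R n) := ENNReal.ofReal_le_of_le_toReal hPU
      _ ≤ P (⋃ n, ⋃ (_ : n ≥ N), fwE R n) := by
          apply measure_mono
          intro ω hω
          simp only [Set.mem_iUnion] at hω ⊢
          obtain ⟨n, hn, hmem⟩ := hω
          exact ⟨n, (Finset.mem_Ico.mp hn).1, hmem⟩
  -- limsup has positive probability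
  have hls_eq : limsup (fwE R) atTop = ⋂ N, ⋃ n, ⋃ (_ : n ≥ N), fwE R n := by
    rw [limsup_eq_iInf_iSup_of_nat]
    simp only [Set.iSup_eq_iUnion, Set.iInf_eq_iInter]
  have hUmeas : ∀ N, MeasurableSet (⋃ n, ⋃ (_ : n ≥ N), fwE R n) := fun N =>
    MeasurableSet.iUnion fun n => MeasurableSet.iUnion fun _ => hEmeas n
  have hls_meas : MeasurableSet (limsup (fwE R) atTop) := by
    rw [hls_eq]
    exact MeasurableSet.iInter fun N => hUmeas N
  have hanti : Antitone (fun N => ⋃ n, ⋃ (_ : n ≥ N), fwE R n) := by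
    intro N N' hNN'
    apply Set.iUnion₂_subset
    intro n hn
    intro ω hω
    simp only [Set.mem_iUnion]
    exact ⟨n, le_trans hNN' hn, hω⟩
  have htends := tendsto_measure_iInter_atTop (μ := P)
    (fun N => (hUmeas N).nullMeasurableSet) hanti ⟨0, measure_ne_top _ _⟩
  have hlim_ge : ENNReal.ofReal (1/3) ≤ P (limsup (fwE R) atTop) := by
    rw [hls_eq]
    exact ge_of_tendsto htends (Filter.Eventually.of_forall hthird)
  have hpos : P (limsup (fwE R) atTop) ≠ 0 := by
    intro hzero
    rw [hzero] at hlim_ge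
    simp only [nonpos_iff_eq_zero, ENNReal.ofReal_eq_zero] at hlim_ge
    norm_num at hlim_ge
  have hone : P (limsup (fwE R) atTop) = 1 :=
    (my_zero_one P R hmeas hindep).resolve_left hpos
  -- V is disjoint from the limsup
  have hVdisj : V ⊆ (limsup (fwE R) atTop)ᶜ := by
    intro ω hωV hωls
    rw [Filter.mem_limsup_iff_frequently_mem] at hωls
    obtain ⟨n, hωE, hn1⟩ := (hωls.and_eventually (eventually_ge_atTop 1)).exists
    rw [hV] at hωV
    simp only [Set.mem_iInter, Set.mem_iUnion] at hωV
    obtain ⟨i, hi, hle⟩ := hωV n hn1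
    simp only [fwE, Set.mem_iInter, Set.mem_setOf_eq] at hωE
    exact absurd (lt_of_le_of_lt hle (hωE i hi)) (lt_irrefl _)
  have hfin : P V ≤ 0 :=
    calc P V ≤ P ((limsup (fwE R) atTop)ᶜ) := measure_mono hVdisj
      _ = 1 - P (limsup (fwE R) atTop) := prob_compl_eq_one_sub hls_meas
      _ = 0 := by rw [hone]; simp
  exact le_antisymm hfin (zero_le)
end

section
/- For the homogeneous Firework Process with ℕ-valued radii of influence, if R has finite expectation (equivalently, ∑_{n=1}^{∞} P(R ≥ n) < ∞), then P(V) = 0. -/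
open MeasureTheory ProbabilityTheory Filter
open scoped ENNReal

lemma fw_one_sub_sum_le_prod (s : Finset ℕ) (f : ℕ → ℝ≥0∞) :
    1 - ∑ i ∈ s, f i ≤ ∏ i ∈ s, (1 - f i) := by
  classical
  induction s using Finset.cons_induction with
  | empty => simp
  | cons a s ha ih =>
    rw [Finset.prod_cons, Finset.sum_cons]
    have hx : (1 - f a : ℝ≥0∞) ≤ 1 := tsub_le_self
    have key : (1 - f a) - ∑ i ∈ s, f i ≤ (1 - f a) * (1 - ∑ i ∈ s, f i) := by
      rw [tsub_le_iff_right]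
      calc (1 - f a : ℝ≥0∞) = (1 - f a) * 1 := (mul_one _).symm
        _ ≤ (1 - f a) * ((1 - ∑ i ∈ s, f i) + ∑ i ∈ s, f i) :=
            mul_le_mul_right le_tsub_add _
        _ = (1 - f a) * (1 - ∑ i ∈ s, f i) + (1 - f a) * ∑ i ∈ s, f i := mul_add _ _ _
        _ ≤ (1 - f a) * (1 - ∑ i ∈ s, f i) + ∑ i ∈ s, f i :=
            add_le_add le_rfl (mul_le_of_le_one_left zero_le hx)
    calc (1 : ℝ≥0∞) - (f a + ∑ i ∈ s, f i) = (1 - f a) - ∑ i ∈ s, f i := by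
          rw [tsub_add_eq_tsub_tsub]
      _ ≤ (1 - f a) * (1 - ∑ i ∈ s, f i) := key
      _ ≤ (1 - f a) * ∏ i ∈ s, (1 - f i) := mul_le_mul_right ih _

/-- **Homogeneous Firework Process, ℕ-valued radii.** If `R` has finite expectation,
i.e. `∑_{n=1}^∞ P(R ≥ n) < ∞`, then `P(V) = 0`. -/
theorem firework_homogeneous_death_of_finite_expectation
    {Ω : Type*} [MeasurableSpace Ω] (P : Measure Ω) [IsProbabilityMeasure P]
    (R : ℕ → Ω → ℕ) (R₀ : Ω → ℕ)
    (hmeas : ∀ i, Measurable (R i)) (hmeas₀ : Measurable R₀)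
    (hindep : iIndepFun R P)
    (hid : ∀ i, IdentDistrib (R i) R₀ P P)
    (h0 : 0 < P {ω | R₀ ω < 1}) (h1 : P {ω | R₀ ω < 1} < 1)
    (V : Set Ω)
    (hV : V = ⋂ (n : ℕ) (_ : 1 ≤ n), ⋃ i ∈ Finset.range n,
      {ω | n - i ≤ R i ω})
    (hE : (∑' n : ℕ, P {ω | n + 1 ≤ R₀ ω}) ≠ ⊤) :
    P V = 0 := by
  classical
  set p : ℕ → ℝ≥0∞ := fun k => P {ω | k ≤ R₀ ω} with hpdef
  set q : ℕ → ℝ≥0∞ := fun k => P {ω | R₀ ω < k} with hqdef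
  have hE' : (∑' n : ℕ, p (n + 1)) ≠ ⊤ := hE
  have hqp : ∀ k, q k = 1 - p k := by
    intro k
    have hc : {ω | R₀ ω < k} = {ω | k ≤ R₀ ω}ᶜ := by
      ext ω; simp [not_le]
    show P {ω | R₀ ω < k} = 1 - P {ω | k ≤ R₀ ω}
    rw [hc]
    exact prob_compl_eq_one_sub
      (show MeasurableSet {ω | k ≤ R₀ ω} from hmeas₀ MeasurableSet.of_discrete)
  have hqmono : ∀ k l, k ≤ l → q k ≤ q l := by
    intro k l hkl
    exact measure_mono fun ω hω => lt_of_lt_of_le hω hkl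
  have hq1pos : 0 < q 1 := h0
  have hq1le1 : q 1 ≤ 1 := prob_le_one
  have hpR : ∀ (i k : ℕ), P {ω | k ≤ R i ω} = p k := fun i k =>
    (hid i).measure_mem_eq (MeasurableSet.of_discrete : MeasurableSet {x : ℕ | k ≤ x})
  have htail : Tendsto (fun i => ∑' k, p (k + i + 1)) atTop (nhds 0) :=
    ENNReal.tendsto_sum_nat_add (fun n => p (n + 1)) hE'
  -- Step A : uniform positive lower bound for partial products of q
  obtain ⟨K, hK⟩ : ∃ K, ∀ m ≥ K, (∑' k, p (k + m + 1)) ≤ 1 / 2 := by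
    have h2 := htail.eventually_lt_const (show (0 : ℝ≥0∞) < 1 / 2 by norm_num)
    obtain ⟨K, hK⟩ := Filter.eventually_atTop.mp h2
    exact ⟨K, fun m hm => (hK m hm).le⟩
  set c : ℝ≥0∞ := q 1 ^ K * (1 / 2) with hcdef
  have hc0 : c ≠ 0 := mul_ne_zero (pow_ne_zero _ hq1pos.ne') (by norm_num)
  have hqprodK : ∀ m, q 1 ^ m ≤ ∏ k ∈ Finset.range m, q (k + 1) := by
    intro m
    calc q 1 ^ m = ∏ _k ∈ Finset.range m, q 1 := by
          rw [Finset.prod_const, Finset.card_range]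
      _ ≤ ∏ k ∈ Finset.range m, q (k + 1) :=
          Finset.prod_le_prod' fun k _ => hqmono 1 (k + 1) (by omega)
  have hcprod : ∀ m, c ≤ ∏ k ∈ Finset.range m, q (k + 1) := by
    intro m
    rcases le_or_gt m K with hmK | hKm
    · calc c ≤ q 1 ^ K * 1 := mul_le_mul_right (by norm_num) _
        _ = q 1 ^ K := mul_one _
        _ ≤ q 1 ^ m := pow_le_pow_of_le_one zero_le hq1le1 hmK
        _ ≤ _ := hqprodK m
    · have hsplit : (∏ k ∈ Finset.range K, q (k + 1)) * ∏ k ∈ Finset.Ico K m, q (k + 1)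
          = ∏ k ∈ Finset.range m, q (k + 1) :=
        Finset.prod_range_mul_prod_Ico _ hKm.le
      have h1' : q 1 ^ K ≤ ∏ k ∈ Finset.range K, q (k + 1) := hqprodK K
      have h2' : (1 : ℝ≥0∞) / 2 ≤ ∏ k ∈ Finset.Ico K m, q (k + 1) := by
        have hsum : ∑ k ∈ Finset.Ico K m, p (k + 1) ≤ 1 / 2 := by
          rw [Finset.sum_Ico_eq_sum_range]
          calc ∑ k ∈ Finset.range (m - K), p (K + k + 1)
              = ∑ k ∈ Finset.range (m - K), p (k + K + 1) :=
                Finset.sum_congr rfl fun k _ => by rw [show K + k + 1 = k + K + 1 by omega]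
            _ ≤ ∑' k, p (k + K + 1) := ENNReal.sum_le_tsum _
            _ ≤ 1 / 2 := hK K le_rfl
        calc (1 : ℝ≥0∞) / 2 = 1 - 1 / 2 := (ENNReal.sub_half ENNReal.one_ne_top).symm
          _ ≤ 1 - ∑ k ∈ Finset.Ico K m, p (k + 1) := tsub_le_tsub_left hsum 1
          _ ≤ ∏ k ∈ Finset.Ico K m, (1 - p (k + 1)) := fw_one_sub_sum_le_prod _ _
          _ = ∏ k ∈ Finset.Ico K m, q (k + 1) :=
              Finset.prod_congr rfl fun k _ => (hqp (k + 1)).symm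
      calc c ≤ (∏ k ∈ Finset.range K, q (k + 1)) * ∏ k ∈ Finset.Ico K m, q (k + 1) :=
            mul_le_mul' h1' h2'
        _ = _ := hsplit
  -- reduce to `P V ≤ δ` for all positive `δ`
  suffices hδ : ∀ δ : ℝ≥0∞, 0 < δ → P V ≤ δ by
    by_contra hne
    have h2 := hδ (P V / 2) (ENNReal.half_pos hne)
    exact absurd h2 (not_le.mpr (ENNReal.half_lt_self hne (measure_ne_top P V)))
  intro δ hδ0
  set ε : ℝ≥0∞ := δ / 2 with hεdef
  have hε0 : 0 < ε := ENNReal.half_pos hδ0.ne'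
  -- choose block gaps
  have hgap : ∀ j : ℕ, ∃ g : ℕ, 1 ≤ g ∧ (∑' k, p (k + g + 1)) ≤ ε * (1 / 2) ^ (j + 1) := by
    intro j
    have hpos : (0 : ℝ≥0∞) < ε * (1 / 2) ^ (j + 1) := by
      refine ENNReal.mul_pos hε0.ne' (pow_ne_zero _ ?_)
      norm_num
    obtain ⟨M, hM⟩ := Filter.eventually_atTop.mp (htail.eventually_lt_const hpos)
    exact ⟨max M 1, le_max_right _ _, (hM _ (le_max_left _ _)).le⟩
  choose g hg1 hgtail using hgap
  set n : ℕ → ℕ := fun j => ∑ k ∈ Finset.range j, g k with hndef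
  have hnsucc : ∀ j, n (j + 1) = n j + g j := fun j => Finset.sum_range_succ _ _
  have hnmono : Monotone n := fun a b hab =>
    Finset.sum_le_sum_of_subset (Finset.range_subset_range.mpr hab)
  have hn1 : ∀ j, 1 ≤ n (j + 1) := fun j => by
    have := hg1 j; rw [hnsucc]; omega
  -- events
  set W : ℕ → Set Ω := fun j =>
    ⋃ i ∈ Finset.Ico (n j) (n (j + 1)), {ω | n (j + 1) - i ≤ R i ω} with hWdef
  set F : ℕ → Set Ω := fun j =>
    ⋃ i ∈ Finset.range (n j), {ω | n (j + 1) - i ≤ R i ω} with hFdef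
  have hmA : ∀ (i k : ℕ), MeasurableSet {ω | k ≤ R i ω} := fun i k =>
    hmeas i (MeasurableSet.of_discrete : MeasurableSet {x : ℕ | k ≤ x})
  have hmW : ∀ j, MeasurableSet (W j) := fun j =>
    Finset.measurableSet_biUnion _ fun i _ => hmA i _
  -- the inclusion
  have hVsub : ∀ J : ℕ, V ⊆ (⋃ j ∈ Finset.range J, F j) ∪ ⋂ j ∈ Finset.range J, W j := by
    intro J ω hω
    rw [hV] at hω
    by_cases hF : ∃ j ∈ Finset.range J, ω ∈ F j
    · obtain ⟨j, hj, hωF⟩ := hF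
      exact Or.inl (Set.mem_iUnion₂.mpr ⟨j, hj, hωF⟩)
    · push_neg at hF
      refine Or.inr (Set.mem_iInter₂.mpr fun j hj => ?_)
      have h1 : ω ∈ ⋃ i ∈ Finset.range (n (j + 1)), {ω | n (j + 1) - i ≤ R i ω} := by
        have h2 := Set.mem_iInter.mp hω (n (j + 1))
        exact Set.mem_iInter.mp h2 (hn1 j)
      obtain ⟨i, hi, hri⟩ := Set.mem_iUnion₂.mp h1
      have hiW : n j ≤ i := by
        by_contra hlt
        exact hF j hj (Set.mem_iUnion₂.mpr ⟨i, Finset.mem_range.mpr (not_le.mp hlt), hri⟩)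
      exact Set.mem_iUnion₂.mpr ⟨i, Finset.mem_Ico.mpr ⟨hiW, Finset.mem_range.mp hi⟩, hri⟩
  -- probability of the complement of a block event
  have hWcompl : ∀ j, c ≤ P ((W j)ᶜ) := by
    intro j
    have hcompl : (W j)ᶜ
        = ⋂ i ∈ Finset.Ico (n j) (n (j + 1)), R i ⁻¹' {x : ℕ | x < n (j + 1) - i} := by
      ext ω
      simp only [hWdef, Set.mem_compl_iff, Set.mem_iUnion, Set.mem_iInter, Set.mem_preimage,
        Set.mem_setOf_eq, not_exists, not_le, Finset.mem_Ico]
    rw [hcompl, hindep.measure_inter_preimage_eq_mul (Finset.Ico (n j) (n (j + 1)))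
      (fun i _ => MeasurableSet.of_discrete)]
    have hfact : ∀ i : ℕ, P (R i ⁻¹' {x : ℕ | x < n (j + 1) - i}) = q (n (j + 1) - i) :=
      fun i => (hid i).measure_mem_eq MeasurableSet.of_discrete
    calc c ≤ ∏ k ∈ Finset.range (g j), q (k + 1) := hcprod _
      _ = ∏ k ∈ Finset.range (g j), q (g j - k) := by
          rw [← Finset.prod_range_reflect (fun k => q (k + 1)) (g j)]
          refine Finset.prod_congr rfl fun k hk => ?_
          have hk' := Finset.mem_range.mp hk
          congr 1
          omega
      _ = ∏ i ∈ Finset.Ico (n j) (n (j + 1)), q (n (j + 1) - i) := by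
          rw [Finset.prod_Ico_eq_prod_range]
          have hgj : n (j + 1) - n j = g j := by rw [hnsucc]; omega
          rw [hgj]
          refine Finset.prod_congr rfl fun k hk => ?_
          have hk' := Finset.mem_range.mp hk
          congr 1
          rw [hnsucc]
          omega
      _ = _ := Finset.prod_congr rfl fun i _ => (hfact i).symm
  have hWle : ∀ j, P (W j) ≤ 1 - c := by
    intro j
    have h1' : P ((W j)ᶜᶜ) = 1 - P ((W j)ᶜ) := prob_compl_eq_one_sub (hmW j).compl
    rw [compl_compl] at h1'
    rw [h1']
    exact tsub_le_tsub_left (hWcompl j) 1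
  -- probability of long jumps from earlier blocks
  have hFle : ∀ j, P (F j) ≤ ε * (1 / 2) ^ (j + 1) := by
    intro j
    calc P (F j) ≤ ∑ i ∈ Finset.range (n j), P {ω | n (j + 1) - i ≤ R i ω} :=
          measure_biUnion_finset_le _ _
      _ = ∑ i ∈ Finset.range (n j), p (n (j + 1) - i) :=
          Finset.sum_congr rfl fun i _ => hpR i _
      _ = ∑ i ∈ Finset.range (n j), p (g j + i + 1) := by
          rw [← Finset.sum_range_reflect (fun i => p (g j + i + 1)) (n j)]
          refine Finset.sum_congr rfl fun i hi => ?_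
          have hi' := Finset.mem_range.mp hi
          congr 1
          rw [hnsucc]
          omega
      _ ≤ ∑' i, p (i + g j + 1) := by
          calc ∑ i ∈ Finset.range (n j), p (g j + i + 1)
              = ∑ i ∈ Finset.range (n j), p (i + g j + 1) :=
                Finset.sum_congr rfl fun i _ => by rw [show g j + i + 1 = i + g j + 1 by omega]
            _ ≤ _ := ENNReal.sum_le_tsum _
      _ ≤ ε * (1 / 2) ^ (j + 1) := hgtail j
  -- intersection of block events, via independence
  have hWinter : ∀ J : ℕ, P (⋂ j ∈ Finset.range J, W j) ≤ (1 - c) ^ J := by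
    intro J
    induction J with
    | zero => simp
    | succ J ih =>
      have hsplit : (⋂ j ∈ Finset.range (J + 1), W j)
          = (⋂ j ∈ Finset.range J, W j) ∩ W J := by
        rw [Finset.range_add_one, Finset.set_biInter_insert]
        exact Set.inter_comm _ _
      have hdisj : Disjoint {i : ℕ | i < n J} {i : ℕ | n J ≤ i} := by
        rw [Set.disjoint_left]
        intro i hi hi'
        simp only [Set.mem_setOf_eq] at hi hi'
        omega
      have hIndep : Indep
          (⨆ i ∈ {i : ℕ | i < n J}, MeasurableSpace.comap (R i) inferInstance)
          (⨆ i ∈ {i : ℕ | n J ≤ i}, MeasurableSpace.comap (R i) inferInstance) P :=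
        indep_iSup_of_disjoint (fun i => (hmeas i).comap_le) hindep.iIndep hdisj
      have hmemA : ∀ (i k : ℕ),
          MeasurableSet[MeasurableSpace.comap (R i) inferInstance] {ω | k ≤ R i ω} :=
        fun i k => ⟨{x : ℕ | k ≤ x}, MeasurableSet.of_discrete, rfl⟩
      have hmWS : ∀ (S : Set ℕ) (j : ℕ), (∀ i, n j ≤ i → i < n (j + 1) → i ∈ S) →
          MeasurableSet[⨆ i ∈ S, MeasurableSpace.comap (R i) inferInstance] (W j) := by
        intro S j hS
        refine Finset.measurableSet_biUnion _ fun i hi => ?_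
        obtain ⟨h1', h2'⟩ := Finset.mem_Ico.mp hi
        have hle : MeasurableSpace.comap (R i) inferInstance
            ≤ ⨆ i ∈ S, MeasurableSpace.comap (R i) inferInstance :=
          le_biSup (fun i => MeasurableSpace.comap (R i) inferInstance) (hS i h1' h2')
        exact hle _ (hmemA i _)
      have hA : MeasurableSet[⨆ i ∈ {i : ℕ | i < n J},
          MeasurableSpace.comap (R i) inferInstance] (⋂ j ∈ Finset.range J, W j) := by
        refine Finset.measurableSet_biInter _ fun j hj => ?_
        refine hmWS _ j fun i _ hi2 => ?_
        have hj' := Finset.mem_range.mp hj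
        exact lt_of_lt_of_le hi2 (hnmono (by omega))
      have hB : MeasurableSet[⨆ i ∈ {i : ℕ | n J ≤ i},
          MeasurableSpace.comap (R i) inferInstance] (W J) :=
        hmWS _ J fun i hi1 _ => hi1
      have hmul := (Indep_iff _ _ _).mp hIndep _ _ hA hB
      rw [hsplit, hmul, pow_succ]
      exact mul_le_mul' ih (hWle J)
  -- choose the number of blocks
  obtain ⟨J, hJ⟩ : ∃ J : ℕ, (1 - c) ^ J ≤ ε := by
    have hlt1 : (1 : ℝ≥0∞) - c < 1 := ENNReal.sub_lt_self ENNReal.one_ne_top one_ne_zero hc0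
    have hlim := ENNReal.tendsto_pow_atTop_nhds_zero_of_lt_one hlt1
    obtain ⟨J, hJ⟩ := Filter.eventually_atTop.mp (hlim.eventually_lt_const hε0)
    exact ⟨J, (hJ J le_rfl).le⟩
  -- geometric series bound
  have hgeo : ∑ j ∈ Finset.range J, ε * (1 / 2 : ℝ≥0∞) ^ (j + 1) ≤ ε := by
    rw [← Finset.mul_sum]
    calc ε * ∑ j ∈ Finset.range J, ((1 : ℝ≥0∞) / 2) ^ (j + 1)
        ≤ ε * ∑' j : ℕ, ((1 : ℝ≥0∞) / 2) ^ (j + 1) :=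
          mul_le_mul_right (ENNReal.sum_le_tsum _) _
      _ = ε * 1 := by
          congr 1
          calc ∑' j : ℕ, ((1 : ℝ≥0∞) / 2) ^ (j + 1)
              = ∑' j : ℕ, (1 / 2) * ((1 : ℝ≥0∞) / 2) ^ j := by
                refine tsum_congr fun j => ?_
                rw [pow_succ, mul_comm]
            _ = (1 / 2) * ∑' j : ℕ, ((1 : ℝ≥0∞) / 2) ^ j := ENNReal.tsum_mul_left
            _ = (1 / 2) * ((1 : ℝ≥0∞) - 1 / 2)⁻¹ := by rw [ENNReal.tsum_geometric]
            _ = 1 := by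
                rw [ENNReal.sub_half ENNReal.one_ne_top]
                exact ENNReal.mul_inv_cancel (by norm_num) (by norm_num)
      _ = ε := mul_one ε
  -- conclusion
  calc P V ≤ P ((⋃ j ∈ Finset.range J, F j) ∪ ⋂ j ∈ Finset.range J, W j) :=
        measure_mono (hVsub J)
    _ ≤ P (⋃ j ∈ Finset.range J, F j) + P (⋂ j ∈ Finset.range J, W j) :=
        measure_union_le _ _
    _ ≤ (∑ j ∈ Finset.range J, ε * (1 / 2) ^ (j + 1)) + (1 - c) ^ J :=
        add_le_add ((measure_biUnion_finset_le _ _).trans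
          (Finset.sum_le_sum fun j _ => hFle j)) (hWinter J)
    _ ≤ ε + ε := add_le_add hgeo hJ
    _ = δ := ENNReal.add_halves δ
end

section
/- Consider the homogeneous Firework Process in which R has the power-law distribution P(R = k) = Z_α·(k+1)^{−α} for all k ∈ ℕ, where α > 1 and Z_α = ( ∑_{j=0}^{∞} (j+1)^{−α} )^{−1}. If 1 < α < 2, then P(V) > 0. -/
open MeasureTheory ProbabilityTheory Filter
open scoped ENNReal

/-- **Homogeneous Firework Process with power-law radii.**
If `P(R = k) = Z_α (k+1)^{-α}` with `1 < α < 2`, then `P(V) > 0`. -/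
theorem firework_homogeneous_powerlaw_survival
    {Ω : Type*} [MeasurableSpace Ω] (P : Measure Ω) [IsProbabilityMeasure P]
    (R : ℕ → Ω → ℕ) (R₀ : Ω → ℕ)
    (hmeas : ∀ i, Measurable (R i)) (hmeas₀ : Measurable R₀)
    (hindep : iIndepFun R P)
    (hid : ∀ i, IdentDistrib (R i) R₀ P P)
    (h0 : 0 < P {ω | R₀ ω < 1}) (h1 : P {ω | R₀ ω < 1} < 1)
    (V : Set Ω)
    (hV : V = ⋂ (n : ℕ) (_ : 1 ≤ n), ⋃ i ∈ Finset.range n,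
      {ω | n - i ≤ R i ω})
    (α : ℝ) (hα : 1 < α) (hα2 : α < 2)
    (Z : ℝ) (hZ : Z = (∑' j : ℕ, ((j : ℝ) + 1) ^ (-α))⁻¹)
    (hpow : ∀ k : ℕ, (P {ω | R₀ ω = k}).toReal = Z * ((k : ℝ) + 1) ^ (-α)) :
    0 < P V := by
  classical
  have two_pos' : (0:ℝ) < 2 := by norm_num
  set l2 : ℝ := Real.log 2 with hl2
  have hl2pos : 0 < l2 := Real.log_pos (by norm_num)
  have h2exp : ∀ n : ℕ, (2:ℝ)^n = Real.exp ((n:ℝ) * l2) := by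
    intro n
    rw [Real.exp_nat_mul, Real.exp_log two_pos']
  have hrpow : ∀ n : ℕ, ((2:ℝ)^n) ^ (-α) = Real.exp (-(α * ((n:ℝ) * l2))) := by
    intro n
    rw [Real.rpow_def_of_pos (pow_pos two_pos' n), Real.log_pow]
    congr 1
    ring
  -- Z is positive
  have hZpos : 0 < Z := by
    have h00 : {ω | R₀ ω < 1} = {ω | R₀ ω = 0} := by
      ext ω; simp [Nat.lt_one_iff]
    have hp0 := hpow 0
    rw [show ((0:ℕ):ℝ) + 1 = 1 by norm_num, Real.one_rpow, mul_one] at hp0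
    rw [← hp0]
    rw [h00] at h0
    exact ENNReal.toReal_pos h0.ne' (measure_ne_top P _)
  -- tail lower bound
  have hTail : ∀ m : ℕ, 1 ≤ m →
      Z * m * ((2*m : ℕ) : ℝ) ^ (-α) ≤ (P {ω | m ≤ R₀ ω}).toReal := by
    intro m hm
    have hdisj : (↑(Finset.Ico m (2*m)) : Set ℕ).PairwiseDisjoint
        (fun j => {ω | R₀ ω = j}) := by
      intro a _ b _ hab
      refine Set.disjoint_left.2 fun ω ha hb => hab ?_
      rw [← ha, ← hb]
    have hsub : (⋃ j ∈ Finset.Ico m (2*m), {ω | R₀ ω = j}) ⊆ {ω | m ≤ R₀ ω} := by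
      intro ω hω
      simp only [Set.mem_iUnion, Finset.mem_Ico, Set.mem_setOf_eq] at hω
      obtain ⟨j, ⟨hj1, _⟩, hj3⟩ := hω
      simpa [hj3] using hj1
    have hsum : ∑ j ∈ Finset.Ico m (2*m), P {ω | R₀ ω = j} ≤ P {ω | m ≤ R₀ ω} := by
      rw [← measure_biUnion_finset hdisj (fun b _ => hmeas₀ (.of_discrete (s := {x | x = b})))]
      exact measure_mono hsub
    have h1' : ((∑ j ∈ Finset.Ico m (2*m), P {ω | R₀ ω = j}).toReal)
        ≤ (P {ω | m ≤ R₀ ω}).toReal :=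
      ENNReal.toReal_mono (measure_ne_top P _) hsum
    rw [ENNReal.toReal_sum (fun j _ => measure_ne_top P _)] at h1'
    refine le_trans ?_ h1'
    have hterm : ∀ j ∈ Finset.Ico m (2*m),
        Z * ((2*m : ℕ) : ℝ) ^ (-α) ≤ (P {ω | R₀ ω = j}).toReal := by
      intro j hj
      rw [hpow j]
      have hj' : (j:ℕ) + 1 ≤ 2*m := by
        simp only [Finset.mem_Ico] at hj
        omega
      have hcast : ((j:ℝ) + 1) ≤ ((2*m : ℕ) : ℝ) := by
        push_cast; exact_mod_cast by exact_mod_cast hj'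
      have hbase : (0:ℝ) < (j:ℝ) + 1 := by positivity
      exact mul_le_mul_of_nonneg_left
        (Real.rpow_le_rpow_of_nonpos hbase hcast (by linarith)) hZpos.le
    calc Z * m * ((2*m : ℕ) : ℝ) ^ (-α)
        = (Finset.Ico m (2*m)).card • (Z * ((2*m : ℕ) : ℝ) ^ (-α)) := by
          rw [Nat.card_Ico]
          rw [show 2*m - m = m by omega]
          rw [nsmul_eq_mul]; ring
      _ = ∑ _j ∈ Finset.Ico m (2*m), Z * ((2*m : ℕ) : ℝ) ^ (-α) := by
          rw [Finset.sum_const]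
      _ ≤ ∑ j ∈ Finset.Ico m (2*m), (P {ω | R₀ ω = j}).toReal :=
          Finset.sum_le_sum hterm
  -- single factor bound
  have hFac : ∀ (i m n : ℕ), m ≤ n →
      P {ω | R i ω < m} ≤ 1 - P {ω | n ≤ R₀ ω} := by
    intro i m n hmn
    have hpre : {ω | R i ω < m} = R i ⁻¹' {x | x < m} := rfl
    have h1' : P {ω | R i ω < m} = P {ω | R₀ ω < m} := by
      rw [hpre, (hid i).measure_mem_eq .of_discrete]; rfl
    rw [h1']
    have hd : Disjoint {ω | R₀ ω < m} {ω | n ≤ R₀ ω} := by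
      rw [Set.disjoint_left]
      intro ω hω1 hω2
      simp only [Set.mem_setOf_eq] at hω1 hω2
      omega
    have hle : P {ω | R₀ ω < m} + P {ω | n ≤ R₀ ω} ≤ 1 := by
      rw [← measure_union hd (hmeas₀ .of_discrete)]
      exact prob_le_one
    exact ENNReal.le_sub_of_add_le_right (measure_ne_top P _) hle
  -- the block events
  set E : ℕ → Set Ω :=
    fun k => ⋃ i ∈ Finset.Ico (2^k) (2^(k+1)), {ω | 2^(k+2) - i ≤ R i ω} with hE
  have hEmeas : ∀ k, MeasurableSet (E k) := by
    intro k
    exact Finset.measurableSet_biUnion _ (fun i _ => (hmeas i) .of_discrete)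
  have hEc : ∀ k, (E k)ᶜ =
      ⋂ i ∈ Finset.Ico (2^k) (2^(k+1)), {ω | R i ω < 2^(k+2) - i} := by
    intro k
    rw [hE]
    ext ω
    simp only [Set.compl_iUnion, Set.mem_iInter, Set.mem_compl_iff, Set.mem_setOf_eq,
      Finset.mem_Ico, not_le]
  have hEprod : ∀ k, P ((E k)ᶜ) =
      ∏ i ∈ Finset.Ico (2^k) (2^(k+1)), P {ω | R i ω < 2^(k+2) - i} := by
    intro k
    rw [hEc k]
    exact hindep.meas_biInter (fun i _ => ⟨{x | x < 2^(k+2) - i}, .of_discrete, rfl⟩)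
  have hEbound : ∀ k, P ((E k)ᶜ) ≤ (1 - P {ω | 2^(k+2) ≤ R₀ ω}) ^ (2^k : ℕ) := by
    intro k
    rw [hEprod k]
    have hcard : (Finset.Ico (2^k) (2^(k+1))).card = 2^k := by
      rw [Nat.card_Ico, pow_succ, Nat.mul_two, Nat.add_sub_cancel]
    calc ∏ i ∈ Finset.Ico (2^k) (2^(k+1)), P {ω | R i ω < 2^(k+2) - i}
        ≤ (1 - P {ω | 2^(k+2) ≤ R₀ ω}) ^ (Finset.Ico (2^k) (2^(k+1))).card :=
          Finset.prod_le_pow_card _ _ _ (fun i _ => hFac i _ _ (Nat.sub_le _ _))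
      _ = (1 - P {ω | 2^(k+2) ≤ R₀ ω}) ^ (2^k : ℕ) := by rw [hcard]
  -- real-valued tail at 2^(k+2)
  set t : ℕ → ℝ := fun k => (P {ω | 2^(k+2) ≤ R₀ ω}).toReal with ht
  have ht01 : ∀ k, 0 ≤ t k ∧ t k ≤ 1 := by
    intro k
    constructor
    · exact ENNReal.toReal_nonneg
    · exact ENNReal.toReal_mono ENNReal.one_ne_top prob_le_one
  have hreal : ∀ k : ℕ, (P ((E k)ᶜ)).toReal ≤ Real.exp (-((2:ℝ)^k * t k)) := by
    intro k
    have h1' : (P ((E k)ᶜ)).toReal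
        ≤ (((1 - P {ω | 2^(k+2) ≤ R₀ ω}) ^ (2^k : ℕ)).toReal) :=
      ENNReal.toReal_mono (ENNReal.pow_ne_top (ENNReal.sub_ne_top ENNReal.one_ne_top)) (hEbound k)
    rw [ENNReal.toReal_pow, ENNReal.toReal_sub_of_le prob_le_one ENNReal.one_ne_top,
      ENNReal.toReal_one] at h1'
    refine le_trans h1' ?_
    have h2' : (1 - t k) ^ (2^k : ℕ) ≤ (Real.exp (-(t k))) ^ (2^k : ℕ) := by
      refine pow_le_pow_left₀ (by linarith [(ht01 k).2]) ?_ _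
      have := Real.add_one_le_exp (-(t k))
      linarith
    refine le_trans h2' ?_
    rw [← Real.exp_nat_mul]
    rw [Real.exp_le_exp]
    push_cast
    ring_nf
    exact le_refl _
  -- lower bound for 2^k * t k in exp form
  have htk : ∀ k : ℕ, Z * Real.exp (l2 * ((2-α)*k + (2 - 3*α))) ≤ (2:ℝ)^k * t k := by
    intro k
    have hm : 1 ≤ 2^(k+2) := Nat.one_le_two_pow
    have htail := hTail (2^(k+2)) hm
    have hcast : ((2 * 2^(k+2) : ℕ) : ℝ) = (2:ℝ)^(k+3) := by
      push_cast
      ring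
    have hcast2 : ((2^(k+2) : ℕ) : ℝ) = (2:ℝ)^(k+2) := by push_cast; ring
    rw [hcast, hcast2] at htail
    have h1' : (2:ℝ)^k * (Z * (2:ℝ)^(k+2) * ((2:ℝ)^(k+3)) ^ (-α)) ≤ (2:ℝ)^k * t k := by
      exact mul_le_mul_of_nonneg_left htail (by positivity)
    refine le_trans (le_of_eq ?_) h1'
    rw [h2exp k, h2exp (k+2), hrpow (k+3)]
    rw [show Real.exp (↑k * l2) * (Z * Real.exp (↑(k+2) * l2) * Real.exp (-(α * (↑(k+3) * l2))))
        = Z * (Real.exp (↑k * l2) * Real.exp (↑(k+2) * l2) * Real.exp (-(α * (↑(k+3) * l2)))) by ring]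
    rw [← Real.exp_add, ← Real.exp_add]
    congr 1
    push_cast
    ring
  -- exp ≥ y^2/4 for y ≥ 0
  have hexp_sq : ∀ y : ℝ, 0 ≤ y → y^2/4 ≤ Real.exp y := by
    intro y hy
    have h1' : y/2 ≤ Real.exp (y/2) := by
      have := Real.add_one_le_exp (y/2)
      linarith
    have h2' : (y/2)^2 ≤ (Real.exp (y/2))^2 := by
      refine pow_le_pow_left₀ (by linarith) h1' 2
    have h3' : (Real.exp (y/2))^2 = Real.exp y := by
      rw [← Real.exp_nat_mul]
      congr 1
      push_cast
      ring
    calc y^2/4 = (y/2)^2 := by ring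
      _ ≤ (Real.exp (y/2))^2 := h2'
      _ = Real.exp y := h3'
  -- exp(2*l2) = 4 and the quarter-power identity
  have hq : ∀ k : ℕ, Real.exp (-(2*l2*(k:ℝ))) = (1/4:ℝ)^k := by
    intro k
    have h4 : Real.exp (2*l2) = 4 := by
      rw [show (2:ℝ)*l2 = ((2:ℕ):ℝ)*l2 by norm_num, Real.exp_nat_mul, Real.exp_log two_pos']
      norm_num
    have : Real.exp (-(2*l2*(k:ℝ))) = Real.exp ((k:ℝ) * (-(2*l2))) := by ring_nf
    rw [this, Real.exp_nat_mul, Real.exp_neg, h4]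
    norm_num
  -- choose K
  set D : ℝ := Z * Real.exp ((2-3*α)*l2) * ((2-α)*l2)^2/4 with hD
  have hDpos : 0 < D := by
    have h2a : (0:ℝ) < 2 - α := by linarith
    rw [hD]
    positivity
  have hvpos : (0:ℝ) < (3-α)*l2 := mul_pos (by linarith) hl2pos
  have hden : (0:ℝ) < Z * Real.exp ((1-2*α)*l2) * ((3-α)*l2) := by positivity
  obtain ⟨K, hK⟩ := exists_nat_gt (max (2*l2/D) (2/(Z * Real.exp ((1-2*α)*l2) * ((3-α)*l2))))
  have hK1 : 2*l2/D < (K:ℝ) := lt_of_le_of_lt (le_max_left _ _) hK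
  have hK2 : 2/(Z * Real.exp ((1-2*α)*l2) * ((3-α)*l2)) < (K:ℝ) := lt_of_le_of_lt (le_max_right _ _) hK
  -- C1 : for all k ≥ K, toReal of P (E k)ᶜ is at most (1/4)^k
  have hC1 : ∀ k : ℕ, K ≤ k → (P ((E k)ᶜ)).toReal ≤ (1/4:ℝ)^k := by
    intro k hk
    have hkR : 2*l2/D < (k:ℝ) := lt_of_lt_of_le hK1 (by exact_mod_cast hk)
    have hkpos : (0:ℝ) ≤ (k:ℝ) := Nat.cast_nonneg k
    have hmain : 2*l2*(k:ℝ) ≤ Z * Real.exp (l2 * ((2-α)*(k:ℝ) + (2 - 3*α))) := by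
      have he : Real.exp (l2 * ((2-α)*(k:ℝ) + (2-3*α)))
          = Real.exp ((2-3*α)*l2) * Real.exp (((2-α)*l2)*(k:ℝ)) := by
        rw [← Real.exp_add]
        congr 1
        ring
      rw [he]
      have hsk : (0:ℝ) ≤ ((2-α)*l2)*(k:ℝ) := by
        have : (0:ℝ) < 2 - α := by linarith
        positivity
      have h1' : (((2-α)*l2)*(k:ℝ))^2/4 ≤ Real.exp (((2-α)*l2)*(k:ℝ)) := hexp_sq _ hsk
      have h2' : Z * (Real.exp ((2-3*α)*l2) * ((((2-α)*l2)*(k:ℝ))^2/4))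
          ≤ Z * (Real.exp ((2-3*α)*l2) * Real.exp (((2-α)*l2)*(k:ℝ))) :=
        mul_le_mul_of_nonneg_left (mul_le_mul_of_nonneg_left h1' (Real.exp_pos _).le) hZpos.le
      refine le_trans ?_ (le_trans h2' (le_of_eq (by ring)))
      have hDk : Z * (Real.exp ((2-3*α)*l2) * ((((2-α)*l2)*(k:ℝ))^2/4)) = D * (k:ℝ)^2 := by
        rw [hD]; ring
      rw [hDk]
      have h3' : 2*l2 < (k:ℝ) * D := (div_lt_iff₀ hDpos).mp hkR
      nlinarith [hkpos, hDpos]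
    calc (P ((E k)ᶜ)).toReal ≤ Real.exp (-((2:ℝ)^k * t k)) := hreal k
      _ ≤ Real.exp (-(Z * Real.exp (l2 * ((2-α)*(k:ℝ) + (2 - 3*α))))) := by
          rw [Real.exp_le_exp]
          linarith [htk k]
      _ ≤ Real.exp (-(2*l2*(k:ℝ))) := by
          rw [Real.exp_le_exp]
          linarith [hmain]
      _ = (1/4:ℝ)^k := hq k
  -- C2 : strict lower bound at K
  have hC2 : 2*(1/4:ℝ)^K < Z * (2:ℝ)^(K+1) * ((2:ℝ)^(K+2)) ^ (-α) := by
    have hR : Z * (2:ℝ)^(K+1) * ((2:ℝ)^(K+2)) ^ (-α)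
        = Z * Real.exp ((1-2*α)*l2) * Real.exp (((3-α)*l2)*(K:ℝ) + (-(2*l2*(K:ℝ)))) := by
      rw [h2exp (K+1), hrpow (K+2), mul_assoc, ← Real.exp_add, mul_assoc, ← Real.exp_add]
      congr 1
      push_cast
      ring
    rw [hR, ← hq K]
    have hKv : 2 < Z * Real.exp ((1-2*α)*l2) * (((3-α)*l2)*(K:ℝ)) := by
      have h3' : 2 < (K:ℝ) * (Z * Real.exp ((1-2*α)*l2) * ((3-α)*l2)) := (div_lt_iff₀ hden).mp hK2
      calc (2:ℝ) < (K:ℝ) * (Z * Real.exp ((1-2*α)*l2) * ((3-α)*l2)) := h3'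
        _ = Z * Real.exp ((1-2*α)*l2) * (((3-α)*l2)*(K:ℝ)) := by ring
    have hKexp : ((3-α)*l2)*(K:ℝ) < Real.exp (((3-α)*l2)*(K:ℝ)) := by
      linarith [Real.add_one_le_exp (((3-α)*l2)*(K:ℝ))]
    have h4' : 2 < Z * Real.exp ((1-2*α)*l2) * Real.exp (((3-α)*l2)*(K:ℝ)) := by
      refine lt_trans hKv (mul_lt_mul_of_pos_left hKexp (by positivity))
    have h5' := mul_lt_mul_of_pos_right h4' (Real.exp_pos (-(2*l2*(K:ℝ))))
    calc 2 * Real.exp (-(2*l2*(K:ℝ)))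
        < Z * Real.exp ((1-2*α)*l2) * Real.exp (((3-α)*l2)*(K:ℝ)) * Real.exp (-(2*l2*(K:ℝ))) := h5'
      _ = Z * Real.exp ((1-2*α)*l2) * Real.exp (((3-α)*l2)*(K:ℝ) + (-(2*l2*(K:ℝ)))) := by
          rw [mul_assoc, ← Real.exp_add]
  -- tail sum bound
  have hEk4 : ∀ k, K ≤ k → P ((E k)ᶜ) ≤ ENNReal.ofReal ((1/4:ℝ)^k) := by
    intro k hk
    rw [← ENNReal.ofReal_toReal (measure_ne_top P ((E k)ᶜ))]
    exact ENNReal.ofReal_le_ofReal (hC1 k hk)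
  have hgeo : ∑' j:ℕ, P ((E (K+j))ᶜ) ≤ ENNReal.ofReal (2*(1/4:ℝ)^K) := by
    have h1' : ∑' j:ℕ, P ((E (K+j))ᶜ) ≤ ∑' j:ℕ, ENNReal.ofReal ((1/4:ℝ)^(K+j)) :=
      ENNReal.tsum_le_tsum (fun j => hEk4 _ (Nat.le_add_right _ _))
    refine le_trans h1' ?_
    have hsummable : Summable (fun j:ℕ => (1/4:ℝ)^(K+j)) := by
      simp_rw [pow_add]
      exact (summable_geometric_of_lt_one (by norm_num) (by norm_num)).mul_left _
    rw [← ENNReal.ofReal_tsum_of_nonneg (fun j => by positivity) hsummable]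
    refine ENNReal.ofReal_le_ofReal ?_
    calc ∑' j:ℕ, (1/4:ℝ)^(K+j) = (1/4:ℝ)^K * ∑' j:ℕ, (1/4:ℝ)^j := by
          simp_rw [pow_add]
          rw [tsum_mul_left]
      _ ≤ 2*(1/4:ℝ)^K := by
          rw [tsum_geometric_of_lt_one (by norm_num) (by norm_num)]
          have := pow_nonneg (by norm_num : (0:ℝ) ≤ 1/4) K
          nlinarith
  -- the head event
  have hA : ENNReal.ofReal (2*(1/4:ℝ)^K) < P {ω | 2^(K+1) ≤ R 0 ω} := by
    have hid0 : P {ω | 2^(K+1) ≤ R 0 ω} = P {ω | 2^(K+1) ≤ R₀ ω} := by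
      have hpre : {ω | 2^(K+1) ≤ R 0 ω} = R 0 ⁻¹' {x | 2^(K+1) ≤ x} := rfl
      rw [hpre, (hid 0).measure_mem_eq .of_discrete]
      rfl
    rw [hid0]
    have hlt : 2*(1/4:ℝ)^K < (P {ω | 2^(K+1) ≤ R₀ ω}).toReal := by
      refine lt_of_lt_of_le ?_ (hTail (2^(K+1)) Nat.one_le_two_pow)
      have hc1 : ((2*2^(K+1):ℕ):ℝ) = (2:ℝ)^(K+2) := by push_cast; ring
      have hc2 : ((2^(K+1):ℕ):ℝ) = (2:ℝ)^(K+1) := by push_cast; ring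
      rw [hc1, hc2]
      exact hC2
    calc ENNReal.ofReal (2*(1/4:ℝ)^K)
        < ENNReal.ofReal ((P {ω | 2^(K+1) ≤ R₀ ω}).toReal) :=
          (ENNReal.ofReal_lt_ofReal_iff_of_nonneg (by positivity)).2 hlt
      _ = P {ω | 2^(K+1) ≤ R₀ ω} := ENNReal.ofReal_toReal (measure_ne_top P _)
  -- the good event
  set G : Set Ω := {ω | 2^(K+1) ≤ R 0 ω} ∩ ⋂ j : ℕ, E (K + j) with hG
  have hAmeas : MeasurableSet {ω | 2^(K+1) ≤ R 0 ω} :=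
    (hmeas 0) (.of_discrete (s := {x | 2^(K+1) ≤ x}))
  have hGmeas : MeasurableSet G :=
    hAmeas.inter (MeasurableSet.iInter fun j => hEmeas _)
  have hGc_lt : P Gᶜ < 1 := by
    have hGc : Gᶜ = {ω | 2^(K+1) ≤ R 0 ω}ᶜ ∪ ⋃ j, (E (K+j))ᶜ := by
      rw [hG, Set.compl_inter, Set.compl_iInter]
    calc P Gᶜ ≤ P ({ω | 2^(K+1) ≤ R 0 ω}ᶜ) + P (⋃ j, (E (K+j))ᶜ) := by
          rw [hGc]
          exact measure_union_le _ _
      _ ≤ (1 - P {ω | 2^(K+1) ≤ R 0 ω}) + ∑' j, P ((E (K+j))ᶜ) := by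
          rw [prob_compl_eq_one_sub hAmeas]
          exact add_le_add_right (measure_iUnion_le _) _
      _ ≤ (1 - P {ω | 2^(K+1) ≤ R 0 ω}) + ENNReal.ofReal (2*(1/4:ℝ)^K) :=
          add_le_add_right hgeo _
      _ < (1 - P {ω | 2^(K+1) ≤ R 0 ω}) + P {ω | 2^(K+1) ≤ R 0 ω} :=
          ENNReal.add_lt_add_left (ENNReal.sub_ne_top ENNReal.one_ne_top) hA
      _ = 1 := tsub_add_cancel_of_le prob_le_one
  have hGpos : 0 < P G := by
    rw [pos_iff_ne_zero]
    intro h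
    rw [prob_compl_eq_one_sub hGmeas, h, tsub_zero] at hGc_lt
    exact lt_irrefl _ hGc_lt
  -- G ⊆ V
  refine lt_of_lt_of_le hGpos (measure_mono ?_)
  rw [hV]
  rintro ω ⟨hωA, hωE⟩
  have hωA' : 2^(K+1) ≤ R 0 ω := hωA
  refine Set.mem_iInter₂.2 fun n hn => ?_
  by_cases hcase : n ≤ 2^(K+1)
  · refine Set.mem_iUnion₂.2 ⟨0, Finset.mem_range.2 hn, ?_⟩
    have : n - 0 ≤ R 0 ω := by
      rw [Nat.sub_zero]
      exact le_trans hcase hωA'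
    exact this
  · push_neg at hcase
    have h2K : 2 ≤ 2^(K+1) := by
      have : 2^1 ≤ 2^(K+1) := Nat.pow_le_pow_right (by norm_num) (by omega)
      simpa using this
    have hne : n - 1 ≠ 0 := by omega
    have hjK : K + 1 ≤ Nat.log 2 (n-1) := by
      have hle : 2^(K+1) ≤ n - 1 := by omega
      exact (Nat.le_log_iff_pow_le one_lt_two hne).2 hle
    have hlow : 2^(Nat.log 2 (n-1)) ≤ n - 1 := Nat.pow_log_le_self 2 hne
    have hup : n - 1 < 2^(Nat.log 2 (n-1)+1) := Nat.lt_pow_succ_log_self one_lt_two (n-1)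
    set k := Nat.log 2 (n-1) - 1 with hk'
    have hkj : k + 1 = Nat.log 2 (n-1) := by omega
    have hkK : K ≤ k := by omega
    have hωEk : ω ∈ E k := by
      have := Set.mem_iInter.1 hωE (k - K)
      rwa [show K + (k - K) = k by omega] at this
    rw [hE] at hωEk
    simp only [Set.mem_iUnion, Finset.mem_Ico, Set.mem_setOf_eq] at hωEk
    obtain ⟨i, ⟨hi1, hi2⟩, hi3⟩ := hωEk
    refine Set.mem_iUnion₂.2 ⟨i, Finset.mem_range.2 ?_, ?_⟩
    · have hje : 2^(k+1) = 2^(Nat.log 2 (n-1)) := by rw [hkj]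
      omega
    · have hn2 : n ≤ 2^(k+2) := by
        have hje2 : 2^(k+2) = 2^(Nat.log 2 (n-1)+1) := by
          rw [show k+2 = Nat.log 2 (n-1)+1 by omega]
        omega
      exact le_trans (Nat.sub_le_sub_right hn2 i) hi3
end

section
/- Consider the homogeneous Firework Process in which R has the power-law distribution P(R = k) = Z_α·(k+1)^{−α} for all k ∈ ℕ, where α > 1 and Z_α = ( ∑_{j=0}^{∞} (j+1)^{−α} )^{−1}. If α ≥ 2, then P(V) = 0. -/
open MeasureTheory ProbabilityTheory Filter
open scoped ENNReal

lemma fw_real_bound {α x : ℝ} (hα2 : 2 ≤ α) (hx : 1 ≤ x) :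
    (x + 1) ^ (-α) ≤ 1 / x - 1 / (x + 1) := by
  have hx0 : (0:ℝ) < x := by linarith
  have hx1 : (1:ℝ) ≤ x + 1 := by linarith
  have h1 : (x + 1) ^ (-α) ≤ (x + 1) ^ (-2 : ℝ) :=
    Real.rpow_le_rpow_of_exponent_le hx1 (by linarith)
  have h2 : (x + 1) ^ (-2 : ℝ) = ((x + 1) ^ (2:ℕ))⁻¹ := by
    rw [show (-2:ℝ) = -(2:ℕ) by norm_num, Real.rpow_neg (by linarith), Real.rpow_natCast]
  have h3 : ((x + 1) ^ (2:ℕ))⁻¹ ≤ (x * (x + 1))⁻¹ := by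
    apply inv_anti₀ (by positivity)
    nlinarith
  have h4 : (x * (x + 1))⁻¹ = 1 / x - 1 / (x + 1) := by
    field_simp
    ring
  calc (x + 1) ^ (-α) ≤ (x + 1) ^ (-2:ℝ) := h1
    _ = ((x + 1) ^ (2:ℕ))⁻¹ := h2
    _ ≤ (x * (x + 1))⁻¹ := h3
    _ = 1 / x - 1 / (x + 1) := h4

lemma fw_partial (k : ℕ) (hk : 1 ≤ k) (s : Finset ℕ) :
    ∑ j ∈ s, ((1:ℝ) / ((k:ℝ) + j) - 1 / ((k:ℝ) + j + 1)) ≤ 1 / k := by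
  have hk0 : (0:ℝ) < k := by exact_mod_cast hk
  obtain ⟨n, hn⟩ := s.exists_nat_subset_range
  have hnon : ∀ j : ℕ, (0:ℝ) ≤ 1 / ((k:ℝ) + j) - 1 / ((k:ℝ) + j + 1) := by
    intro j
    have h1 : (0:ℝ) < (k:ℝ) + j := by positivity
    have := one_div_le_one_div_of_le h1 (by linarith : (k:ℝ) + j ≤ (k:ℝ) + j + 1)
    linarith
  calc ∑ j ∈ s, ((1:ℝ) / ((k:ℝ) + j) - 1 / ((k:ℝ) + j + 1))
      ≤ ∑ j ∈ Finset.range n, ((1:ℝ) / ((k:ℝ) + j) - 1 / ((k:ℝ) + j + 1)) :=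
        Finset.sum_le_sum_of_subset_of_nonneg hn (fun j _ _ => hnon j)
    _ = 1 / ((k:ℝ) + 0) - 1 / ((k:ℝ) + n) := by
        rw [show (∑ j ∈ Finset.range n, ((1:ℝ) / ((k:ℝ) + j) - 1 / ((k:ℝ) + j + 1)))
            = ∑ j ∈ Finset.range n, ((fun j : ℕ => (1:ℝ) / ((k:ℝ) + j)) j
              - (fun j : ℕ => (1:ℝ) / ((k:ℝ) + j)) (j+1)) from
          Finset.sum_congr rfl (fun j _ => by push_cast; ring_nf),
          Finset.sum_range_sub' (fun j => (1:ℝ) / ((k:ℝ) + j))]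
        norm_num
    _ ≤ 1 / k := by
        have : (0:ℝ) ≤ 1 / ((k:ℝ) + n) := by positivity
        simp only [add_zero]
        linarith

lemma fw_tsum_ofReal_le {a : ℕ → ℝ} {S : ℝ} (ha : ∀ j, 0 ≤ a j)
    (h : ∀ s : Finset ℕ, ∑ j ∈ s, a j ≤ S) :
    (∑' j, ENNReal.ofReal (a j)) ≤ ENNReal.ofReal S := by
  rw [ENNReal.tsum_eq_iSup_sum]
  refine iSup_le fun s => ?_
  rw [← ENNReal.ofReal_sum_of_nonneg (fun j _ => ha j)]
  exact ENNReal.ofReal_le_ofReal (h s)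

lemma fw_harmonic_top {Z : ℝ} (hZ : 0 < Z) :
    (∑' t : ℕ, ENNReal.ofReal (Z / ((t:ℝ) + 1))) = ⊤ := by
  by_contra h
  have h1 : Summable (fun t : ℕ => (Z / ((t:ℝ) + 1)).toNNReal) := by
    rw [← ENNReal.tsum_coe_ne_top_iff_summable]
    simpa [ENNReal.ofReal] using h
  have h2 : Summable (fun t : ℕ => Z / ((t:ℝ) + 1)) := by
    have := NNReal.summable_coe.2 h1
    refine this.congr fun t => ?_
    rw [Real.coe_toNNReal _ (by positivity)]
  have h3 : Summable (fun t : ℕ => 1 / ((t:ℝ) + 1)) := by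
    have := h2.mul_left Z⁻¹
    refine this.congr fun t => ?_
    field_simp
  have h4 : Summable (fun t : ℕ => 1 / ((t:ℝ))) := by
    rw [← summable_nat_add_iff 1]
    refine h3.congr fun t => ?_
    push_cast
    ring
  exact Real.not_summable_one_div_natCast h4

lemma fw_sum_swap {M : ℕ} (f : ℕ → ℕ → ℝ≥0∞) :
    ∑ t ∈ Finset.range M, ∑ n ∈ Finset.range (t + 1), f t n
      = ∑ n ∈ Finset.range M, ∑ t ∈ Finset.Ico n M, f t n := by
  refine Finset.sum_comm' ?_
  intro t n
  simp only [Finset.mem_range, Finset.mem_Ico]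
  omega

lemma fw_Z_facts {α : ℝ} (hα : 1 < α) :
    Summable (fun j : ℕ => ((j:ℝ) + 1) ^ (-α)) ∧
      1 ≤ ∑' j : ℕ, ((j:ℝ) + 1) ^ (-α) := by
  have hsum : Summable (fun j : ℕ => ((j:ℝ) + 1) ^ (-α)) := by
    have h := Real.summable_nat_rpow (p := -α) |>.2 (by linarith)
    have h2 := (summable_nat_add_iff 1).2 h
    refine h2.congr fun j => ?_
    push_cast
    ring_nf
  refine ⟨hsum, ?_⟩
  have h0 : ((0:ℕ):ℝ) + 1 = 1 := by norm_num
  calc (1:ℝ) = (((0:ℕ):ℝ) + 1) ^ (-α) := by rw [h0, Real.one_rpow]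
    _ ≤ ∑' j : ℕ, ((j:ℝ) + 1) ^ (-α) :=
        Summable.le_tsum hsum 0 (fun j _ => Real.rpow_nonneg (by positivity) _)

lemma fw_ms_biInter {Ω ι : Type*} (m : MeasurableSpace Ω) (s : Finset ι) {f : ι → Set Ω}
    (h : ∀ i ∈ s, MeasurableSet[m] (f i)) : MeasurableSet[m] (⋂ i ∈ s, f i) :=
  s.measurableSet_biInter h

lemma fw_ms_mono {Ω : Type*} {m M : MeasurableSpace Ω} (h : m ≤ M) {s : Set Ω}
    (hs : MeasurableSet[m] s) : MeasurableSet[M] s := h _ hs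

/-- **Homogeneous Firework Process with power-law radii.**
If `P(R = k) = Z_α (k+1)^{-α}` with `α ≥ 2`, then `P(V) = 0`. -/
theorem firework_homogeneous_powerlaw_death
    {Ω : Type*} [MeasurableSpace Ω] (P : Measure Ω) [IsProbabilityMeasure P]
    (R : ℕ → Ω → ℕ) (R₀ : Ω → ℕ)
    (hmeas : ∀ i, Measurable (R i)) (hmeas₀ : Measurable R₀)
    (hindep : iIndepFun R P)
    (hid : ∀ i, IdentDistrib (R i) R₀ P P)
    (h0 : 0 < P {ω | R₀ ω < 1}) (h1 : P {ω | R₀ ω < 1} < 1)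
    (V : Set Ω)
    (hV : V = ⋂ (n : ℕ) (_ : 1 ≤ n), ⋃ i ∈ Finset.range n,
      {ω | n - i ≤ R i ω})
    (α : ℝ) (hα : 1 < α) (hα2 : 2 ≤ α)
    (Z : ℝ) (hZ : Z = (∑' j : ℕ, ((j : ℝ) + 1) ^ (-α))⁻¹)
    (hpow : ∀ k : ℕ, (P {ω | R₀ ω = k}).toReal = Z * ((k : ℝ) + 1) ^ (-α)) :
    P V = 0 := by
  classical
  obtain ⟨hsum, hS1⟩ := fw_Z_facts hα
  have hZpos : 0 < Z := by
    rw [hZ]; exact inv_pos.2 (by linarith)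
  have hZ1 : Z ≤ 1 := by
    rw [hZ]; exact inv_le_one_of_one_le₀ hS1
  -- basic objects
  set q : ℕ → ℝ≥0∞ := fun c => P {ω | R₀ ω < c} with hq_def
  set p : ℕ → ℝ≥0∞ := fun m => ∏ k ∈ Finset.range m, q (k + 1) with hp_def
  set A : ℕ → ℕ → Set Ω := fun i c => {ω | R i ω < c} with hA_def
  set L : ℕ → Set Ω := fun n => ⋂ i ∈ Finset.range n, A i (n - i) with hL_def
  have hAmeas : ∀ i c, MeasurableSet (A i c) := fun i c => hmeas i measurableSet_Iio
  have hLmeas : ∀ n, MeasurableSet (L n) :=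
    fun n => Finset.measurableSet_biInter _ fun i _ => hAmeas i _
  have hAq : ∀ i c, P (A i c) = q c := fun i c =>
    (hid i).measure_mem_eq (s := Set.Iio c) measurableSet_Iio
  -- value of q 1
  have hq1 : q 1 = ENNReal.ofReal Z := by
    have hset : {ω | R₀ ω < 1} = {ω | R₀ ω = 0} := by
      ext ω; simp [Nat.lt_one_iff]
    have := hpow 0
    rw [hq_def]
    simp only [hset]
    rw [← ENNReal.ofReal_toReal (measure_ne_top P _), this]
    norm_num
  -- tail bound
  have htail : ∀ k : ℕ, 1 ≤ k → P {ω | k ≤ R₀ ω} ≤ ENNReal.ofReal (Z / (k : ℝ)) := by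
    intro k hk
    have hkR : (1:ℝ) ≤ (k:ℝ) := by exact_mod_cast hk
    have hset : {ω | k ≤ R₀ ω} = ⋃ j : ℕ, {ω | R₀ ω = k + j} := by
      ext ω
      simp only [Set.mem_setOf_eq, Set.mem_iUnion]
      constructor
      · intro h; exact ⟨R₀ ω - k, by omega⟩
      · rintro ⟨j, hj⟩; omega
    have hdisj : Pairwise (Function.onFun Disjoint fun j : ℕ => {ω | R₀ ω = k + j}) := by
      intro a b hab
      simp only [Function.onFun, Set.disjoint_left]
      intro ω ha hb
      simp only [Set.mem_setOf_eq] at ha hb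
      omega
    have hmeas' : ∀ j : ℕ, MeasurableSet {ω | R₀ ω = k + j} :=
      fun j => hmeas₀ (measurableSet_singleton _)
    rw [hset, measure_iUnion hdisj hmeas']
    have hterm : ∀ j : ℕ, P {ω | R₀ ω = k + j}
        = ENNReal.ofReal (Z * (((k + j : ℕ) : ℝ) + 1) ^ (-α)) := by
      intro j
      rw [← ENNReal.ofReal_toReal (measure_ne_top P _), hpow (k + j)]
    calc (∑' j : ℕ, P {ω | R₀ ω = k + j})
        ≤ ∑' j : ℕ, ENNReal.ofReal (Z * (1 / ((k:ℝ) + j) - 1 / ((k:ℝ) + j + 1))) := by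
          refine ENNReal.tsum_le_tsum fun j => ?_
          rw [hterm j]
          refine ENNReal.ofReal_le_ofReal ?_
          have hx : (1:ℝ) ≤ (k:ℝ) + j := by
            have : (0:ℝ) ≤ (j:ℝ) := by positivity
            linarith
          have hb := fw_real_bound hα2 hx
          have hcast : (((k + j : ℕ) : ℝ) + 1) = ((k:ℝ) + j) + 1 := by push_cast; ring
          rw [hcast]
          exact mul_le_mul_of_nonneg_left hb hZpos.le
      _ ≤ ENNReal.ofReal (Z * (1 / (k:ℝ))) := by
          refine fw_tsum_ofReal_le (fun j => ?_) (fun s => ?_)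
          · have h1 : (0:ℝ) < (k:ℝ) + j := by positivity
            have := one_div_le_one_div_of_le h1 (by linarith : (k:ℝ) + j ≤ (k:ℝ) + j + 1)
            nlinarith
          · rw [← Finset.mul_sum]
            exact mul_le_mul_of_nonneg_left (fw_partial k hk s) hZpos.le
      _ = ENNReal.ofReal (Z / (k : ℝ)) := by rw [mul_one_div]
  -- lower bound for q k
  have hqk : ∀ k : ℕ, 1 ≤ k → ENNReal.ofReal (1 - 1 / (k:ℝ)) ≤ q k := by
    intro k hk
    have hkR : (1:ℝ) ≤ (k:ℝ) := by exact_mod_cast hk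
    have hset : {ω | R₀ ω < k} = {ω | k ≤ R₀ ω}ᶜ := by
      ext ω; simp [not_le]
    have hmeasge : MeasurableSet {ω | k ≤ R₀ ω} := hmeas₀ measurableSet_Ici
    have hcompl : q k = 1 - P {ω | k ≤ R₀ ω} := by
      rw [hq_def]
      simp only [hset]
      rw [prob_compl_eq_one_sub hmeasge]
    rw [hcompl]
    have h2 : P {ω | k ≤ R₀ ω} ≤ ENNReal.ofReal (1 / (k:ℝ)) := by
      refine (htail k hk).trans (ENNReal.ofReal_le_ofReal ?_)
      have hk0 : (0:ℝ) < (k:ℝ) := by linarith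
      gcongr
    calc ENNReal.ofReal (1 - 1 / (k:ℝ))
        = 1 - ENNReal.ofReal (1 / (k:ℝ)) := by
          rw [ENNReal.ofReal_sub _ (by positivity), ENNReal.ofReal_one]
      _ ≤ 1 - P {ω | k ≤ R₀ ω} := tsub_le_tsub_left h2 1
  -- lower bound for p
  have hplow : ∀ m : ℕ, 1 ≤ m → ENNReal.ofReal (Z / (m:ℝ)) ≤ p m := by
    intro m hm
    induction m, hm using Nat.le_induction with
    | base =>
        rw [hp_def]
        simp only [Finset.prod_range_one, zero_add, Nat.cast_one, div_one, hq1, le_refl]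
    | succ m hm ih =>
        have hmR : (1:ℝ) ≤ (m:ℝ) := by exact_mod_cast hm
        have hstep : p (m+1) = p m * q (m+1) := by
          rw [hp_def]; exact Finset.prod_range_succ _ _
        have hqm : ENNReal.ofReal (1 - 1 / ((m:ℝ)+1)) ≤ q (m+1) := by
          have := hqk (m+1) (by omega)
          have hcast : ((m+1:ℕ):ℝ) = (m:ℝ) + 1 := by push_cast; ring
          rwa [hcast] at this
        have hmul : ENNReal.ofReal (Z / ((m:ℝ)+1))
            = ENNReal.ofReal (Z / (m:ℝ)) * ENNReal.ofReal (1 - 1 / ((m:ℝ)+1)) := by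
          rw [← ENNReal.ofReal_mul (by positivity)]
          congr 1
          field_simp
          ring
        have hcast : ((m+1:ℕ):ℝ) = (m:ℝ) + 1 := by push_cast; ring
        rw [hcast, hmul, hstep]
        exact mul_le_mul' ih hqm
  -- membership characterizations
  have hLmem : ∀ n ω, ω ∈ L n ↔ ∀ i < n, R i ω < n - i := by
    intro n ω
    rw [hL_def]
    simp only [Set.mem_iInter, Finset.mem_range, hA_def, Set.mem_setOf_eq]
  have hBmem : ∀ a N ω, ω ∈ (⋂ i ∈ Finset.Ico a N, A i (N - i)) ↔
      ∀ i, a ≤ i → i < N → R i ω < N - i := by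
    intro a N ω
    simp only [Set.mem_iInter, Finset.mem_Ico, hA_def, Set.mem_setOf_eq, and_imp]
  -- block measure via independence
  have hcomapA : ∀ i c, MeasurableSet[MeasurableSpace.comap (R i) inferInstance] (A i c) :=
    fun i c => ⟨Set.Iio c, measurableSet_Iio, rfl⟩
  have hBlock : ∀ a N, a ≤ N → P (⋂ i ∈ Finset.Ico a N, A i (N - i)) = p (N - a) := by
    intro a N haN
    rw [hindep.meas_biInter (fun i _ => hcomapA i (N - i))]
    rw [Finset.prod_congr rfl (fun i (_ : i ∈ Finset.Ico a N) => hAq i (N - i)),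
      Finset.prod_Ico_eq_prod_range]
    have h2 : ∀ j ∈ Finset.range (N - a),
        q (N - (a + j)) = (fun k => q (k + 1)) ((N - a) - 1 - j) := by
      intro j hj
      simp only [Finset.mem_range] at hj
      congr 1
      omega
    rw [Finset.prod_congr rfl h2, Finset.prod_range_reflect (fun k => q (k + 1)) (N - a)]
  have hLP : ∀ N, P (L N) = p N := by
    intro N
    have h := hBlock 0 N (Nat.zero_le N)
    rw [Nat.sub_zero, ← Finset.range_eq_Ico] at h
    exact h
  -- first-failure events
  set F : ℕ → Set Ω := fun n => L (n+1) \ ⋃ (k : ℕ) (_ : k < n), L (k+1) with hF_def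
  have hFmeas : ∀ n, MeasurableSet (F n) := by
    intro n
    exact (hLmeas (n+1)).diff
      (MeasurableSet.biUnion (Set.to_countable _) fun k _ => hLmeas (k+1))
  have hFsub : ∀ n, F n ⊆ L (n+1) := fun n => Set.diff_subset
  have hFdisj : Pairwise (Function.onFun Disjoint F) := by
    intro a b hab
    wlog h : a < b generalizing a b
    · exact (this hab.symm (by omega)).symm
    simp only [Function.onFun, Set.disjoint_left, hF_def]
    intro ω ha hb
    exact hb.2 (Set.mem_iUnion₂.2 ⟨a, h, ha.1⟩)
  have hcover : ∀ N, 1 ≤ N → L N ⊆ ⋃ n ∈ Finset.range N, F n := by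
    intro N hN ω hω
    have hωL : ω ∈ L ((N-1)+1) := by
      have : (N-1)+1 = N := by omega
      rwa [this]
    have hex : ∃ k, ω ∈ L (k+1) := ⟨N-1, hωL⟩
    have hspec : ω ∈ L (Nat.find hex + 1) := Nat.find_spec hex
    have hmin : ∀ k < Nat.find hex, ω ∉ L (k+1) := fun k hk => Nat.find_min hex hk
    have hn₀N : Nat.find hex < N := by
      have : Nat.find hex ≤ N - 1 := Nat.find_min' hex hωL
      omega
    refine Set.mem_iUnion₂.2 ⟨Nat.find hex, Finset.mem_range.2 hn₀N, ?_⟩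
    refine ⟨hspec, fun hmem => ?_⟩
    obtain ⟨k, hk, hkL⟩ := Set.mem_iUnion₂.1 hmem
    exact hmin k hk hkL
  have hFL : ∀ n N, n < N → F n ∩ L N = F n ∩ ⋂ i ∈ Finset.Ico (n+1) N, A i (N - i) := by
    intro n N hnN
    ext ω
    simp only [Set.mem_inter_iff, and_congr_right_iff]
    intro hωF
    have hωL : ω ∈ L (n+1) := hFsub n hωF
    rw [hLmem, hBmem]
    constructor
    · intro h i hi1 hi2
      exact h i hi2
    · intro h i hi
      by_cases hcase : i < n + 1
      · have h2 := (hLmem (n+1) ω).1 hωL i hcase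
        omega
      · exact h i (by omega) hi
  -- the key independence computation
  have hkey : ∀ n N, n < N →
      P (F n ∩ ⋂ i ∈ Finset.Ico (n+1) N, A i (N - i)) = P (F n) * p (N - (n+1)) := by
    intro n N hnN
    set m' : ℕ → MeasurableSpace Ω := fun i => MeasurableSpace.comap (R i) inferInstance with hm'
    have hIndep := indep_biSup_compl (fun i => (hmeas i).comap_le) hindep.iIndep {i | i < n+1}
    have hALsup : ∀ (S : Set ℕ) i c, i ∈ S → MeasurableSet[⨆ i ∈ S, m' i] (A i c) := by
      intro S i c hi
      exact fw_ms_mono (le_iSup₂ (f := fun i (_ : i ∈ S) => m' i) i hi)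
        ⟨Set.Iio c, measurableSet_Iio, rfl⟩
    have hLsup : ∀ k, k + 1 ≤ n + 1 → MeasurableSet[⨆ i ∈ {i | i < n+1}, m' i] (L (k+1)) := by
      intro k hk
      rw [hL_def]
      refine fw_ms_biInter _ _ (fun i hi => ?_)
      refine hALsup _ i _ ?_
      simp only [Finset.mem_range] at hi
      simp only [Set.mem_setOf_eq]
      omega
    have hFsup : MeasurableSet[⨆ i ∈ {i | i < n+1}, m' i] (F n) := by
      rw [hF_def]
      refine MeasurableSet.diff (hLsup n le_rfl) ?_
      exact MeasurableSet.biUnion (Set.to_countable _)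
        fun k hk => hLsup k (by have hkn : k < n := hk; omega)
    have hBsup : MeasurableSet[⨆ i ∈ {i | i < n+1}ᶜ, m' i]
        (⋂ i ∈ Finset.Ico (n+1) N, A i (N - i)) := by
      refine fw_ms_biInter _ _ (fun i hi => ?_)
      refine hALsup _ i _ ?_
      simp only [Finset.mem_Ico] at hi
      simp only [Set.mem_compl_iff, Set.mem_setOf_eq, not_lt]
      omega
    rw [(Indep_iff _ _ _).1 hIndep _ _ hFsup hBsup, hBlock (n+1) N hnN]
  -- renewal equation
  have hrec : ∀ t : ℕ, p (t+1) = ∑ n ∈ Finset.range (t+1), P (F n) * p (t - n) := by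
    intro t
    have hN1 : 1 ≤ t + 1 := by omega
    have hLsplit : L (t+1) = ⋃ n ∈ Finset.range (t+1), (F n ∩ L (t+1)) := by
      apply Set.Subset.antisymm
      · intro ω hω
        obtain ⟨n, hn, hF⟩ := Set.mem_iUnion₂.1 (hcover (t+1) hN1 hω)
        exact Set.mem_iUnion₂.2 ⟨n, hn, hF, hω⟩
      · intro ω hω
        obtain ⟨n, hn, hF⟩ := Set.mem_iUnion₂.1 hω
        exact hF.2
    have hdisj' : Set.PairwiseDisjoint ↑(Finset.range (t+1)) (fun n => F n ∩ L (t+1)) :=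
      fun a _ b _ hab => (hFdisj hab).mono Set.inter_subset_left Set.inter_subset_left
    calc p (t+1) = P (L (t+1)) := (hLP _).symm
      _ = P (⋃ n ∈ Finset.range (t+1), (F n ∩ L (t+1))) := by rw [← hLsplit]
      _ = ∑ n ∈ Finset.range (t+1), P (F n ∩ L (t+1)) :=
          measure_biUnion_finset hdisj' (fun n _ => (hFmeas n).inter (hLmeas _))
      _ = ∑ n ∈ Finset.range (t+1), P (F n) * p (t - n) := by
          refine Finset.sum_congr rfl fun n hn => ?_
          have hn' : n < t + 1 := Finset.mem_range.1 hn
          rw [hFL n (t+1) hn', hkey n (t+1) hn']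
          congr 2
          omega
  -- partial sums
  set σ : ℕ → ℝ≥0∞ := fun M => ∑ m ∈ Finset.range M, p m with hσ_def
  have hp_le_one : ∀ m, p m ≤ 1 := by
    intro m
    rw [hp_def]
    exact Finset.prod_le_one (fun k _ => zero_le) (fun k _ => prob_le_one)
  have hσfin : ∀ M, σ M ≠ ⊤ := by
    intro M
    have hle : σ M ≤ (M : ℝ≥0∞) := by
      rw [hσ_def]
      calc ∑ m ∈ Finset.range M, p m ≤ ∑ _m ∈ Finset.range M, 1 :=
            Finset.sum_le_sum fun m _ => hp_le_one m
        _ = M := by simp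
    exact fun h => (by simp : (M : ℝ≥0∞) ≠ ⊤) (top_le_iff.1 (h ▸ hle))
  -- death event
  set D : Set Ω := ⋃ m : ℕ, L (m+1) with hD_def
  have hDmeas : MeasurableSet D := MeasurableSet.iUnion fun m => hLmeas _
  have hVD : V = Dᶜ := by
    rw [hV, hD_def]
    ext ω
    constructor
    · intro hωV
      simp only [Set.mem_iInter] at hωV
      simp only [Set.mem_compl_iff, Set.mem_iUnion, not_exists]
      intro m hm
      obtain ⟨i, hi, hR⟩ := Set.mem_iUnion₂.1 (hωV (m+1) (by omega))
      have hlt := (hLmem (m+1) ω).1 hm i (Finset.mem_range.1 hi)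
      have hge : m + 1 - i ≤ R i ω := hR
      omega
    · intro hωD
      simp only [Set.mem_compl_iff, Set.mem_iUnion, not_exists] at hωD
      simp only [Set.mem_iInter]
      intro n hn
      by_contra hno
      refine hωD (n-1) ?_
      rw [hLmem]
      intro i hi
      have hn' : (n-1)+1 = n := by omega
      rw [hn'] at hi ⊢
      by_contra hge
      exact hno (Set.mem_iUnion₂.2 ⟨i, Finset.mem_range.2 hi, by
        simp only [Set.mem_setOf_eq]; omega⟩)
  -- main inequality
  have hmain : ∀ M : ℕ, ∑ t ∈ Finset.range M, p (t+1) ≤ P D * σ M := by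
    intro M
    calc ∑ t ∈ Finset.range M, p (t+1)
        = ∑ t ∈ Finset.range M, ∑ n ∈ Finset.range (t+1), P (F n) * p (t - n) :=
          Finset.sum_congr rfl fun t _ => hrec t
      _ = ∑ n ∈ Finset.range M, ∑ t ∈ Finset.Ico n M, P (F n) * p (t - n) :=
          fw_sum_swap (fun t n => P (F n) * p (t - n))
      _ = ∑ n ∈ Finset.range M, P (F n) * ∑ t ∈ Finset.Ico n M, p (t - n) :=
          Finset.sum_congr rfl fun n _ => (Finset.mul_sum _ _ _).symm
      _ ≤ ∑ n ∈ Finset.range M, P (F n) * σ M := by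
          refine Finset.sum_le_sum fun n hn => ?_
          refine mul_le_mul_right ?_ _
          have h1 : ∑ t ∈ Finset.Ico n M, p (t - n) = ∑ j ∈ Finset.range (M - n), p j := by
            rw [Finset.sum_Ico_eq_sum_range]
            exact Finset.sum_congr rfl fun j _ => by congr 1; omega
          rw [h1, hσ_def]
          exact Finset.sum_le_sum_of_subset (Finset.range_subset_range.2 (by omega))
      _ = (∑ n ∈ Finset.range M, P (F n)) * σ M := (Finset.sum_mul _ _ _).symm
      _ ≤ P D * σ M := by
          refine mul_le_mul_left ?_ _
          rw [← measure_biUnion_finset (fun a _ b _ hab => hFdisj hab) (fun n _ => hFmeas n)]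
          refine measure_mono ?_
          intro ω hω
          obtain ⟨n, hn, hF⟩ := Set.mem_iUnion₂.1 hω
          exact Set.mem_iUnion.2 ⟨n, hFsub n hF⟩
  have hσsucc : ∀ M, σ (M+1) = 1 + ∑ t ∈ Finset.range M, p (t+1) := by
    intro M
    show (∑ m ∈ Finset.range (M+1), p m) = _
    rw [Finset.sum_range_succ' (fun m => p m) M]
    have hp0 : p 0 = 1 := by rw [hp_def]; simp
    rw [hp0, add_comm]
  have hσmono : ∀ M, σ M ≤ σ (M+1) := by
    intro M
    rw [hσ_def]
    exact Finset.sum_le_sum_of_subset (Finset.range_subset_range.2 (by omega))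
  -- conclude
  by_contra hPV
  have hPVD : P V + P D = 1 := by
    rw [hVD, add_comm, measure_add_measure_compl hDmeas]
    exact measure_univ
  have hεσ : ∀ M, P V * σ M ≤ 1 := by
    intro M
    have h1 : σ (M+1) ≤ 1 + P D * σ (M+1) := by
      calc σ (M+1) = 1 + ∑ t ∈ Finset.range M, p (t+1) := hσsucc M
        _ ≤ 1 + P D * σ M := add_le_add_right (hmain M) 1
        _ ≤ 1 + P D * σ (M+1) := add_le_add_right (mul_le_mul_right (hσmono M) _) 1
    have h2 : P V * σ (M+1) + P D * σ (M+1) = σ (M+1) := by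
      rw [← add_mul, hPVD, one_mul]
    have h3 : P V * σ (M+1) + P D * σ (M+1) ≤ 1 + P D * σ (M+1) := by
      rw [h2]
      exact h1
    have h4 : P D * σ (M+1) ≠ ⊤ := ENNReal.mul_ne_top (measure_ne_top P D) (hσfin (M+1))
    have h5 : P V * σ (M+1) ≤ 1 := (ENNReal.add_le_add_iff_right h4).1 h3
    exact (mul_le_mul_right (hσmono M) (P V)).trans h5
  have hplow' : ∀ m : ℕ, ENNReal.ofReal (Z / ((m:ℝ) + 1)) ≤ p m := by
    intro m
    rcases Nat.eq_zero_or_pos m with hm | hm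
    · subst hm
      have hp0 : p 0 = 1 := by rw [hp_def]; simp
      rw [hp0]
      calc ENNReal.ofReal (Z / (((0:ℕ):ℝ) + 1)) ≤ ENNReal.ofReal 1 := by
            refine ENNReal.ofReal_le_ofReal ?_
            norm_num
            linarith
        _ = 1 := ENNReal.ofReal_one
    · refine le_trans ?_ (hplow m hm)
      refine ENNReal.ofReal_le_ofReal ?_
      have hm0 : (0:ℝ) < (m:ℝ) := by exact_mod_cast hm
      have hZ0 : (0:ℝ) ≤ Z := hZpos.le
      gcongr
      linarith
  have hdiv : (⊤ : ℝ≥0∞) ≤ ⨆ M, σ M := by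
    have h6 : ∀ M, ∑ t ∈ Finset.range M, ENNReal.ofReal (Z / ((t:ℝ) + 1)) ≤ σ M := by
      intro M
      rw [hσ_def]
      exact Finset.sum_le_sum fun t _ => hplow' t
    calc (⊤:ℝ≥0∞) = ∑' t : ℕ, ENNReal.ofReal (Z / ((t:ℝ) + 1)) := (fw_harmonic_top hZpos).symm
      _ = ⨆ M, ∑ t ∈ Finset.range M, ENNReal.ofReal (Z / ((t:ℝ) + 1)) :=
          ENNReal.tsum_eq_iSup_nat
      _ ≤ ⨆ M, σ M := iSup_mono h6
  have hfin : P V * ⨆ M, σ M ≤ 1 := by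
    rw [ENNReal.mul_iSup]
    exact iSup_le hεσ
  rw [top_le_iff.1 hdiv, ENNReal.mul_top hPV] at hfin
  exact absurd hfin (by simp)
end
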